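/- arXiv:2310.15207 — 7 statements merged into one kernel-verified Lean document; each statement's English description precedes it below -/
import Mathlib

section
/- Let n be a positive odd integer, and let r and s be nonnegative integers with s ≤ n-1. Then the q-Pochhammer symbol satisfies (-q;q)_{rn+s} ≡ 2^r · (-q;q)_s modulo the n-th cyclotomic polynomial Φ_n(q), as a congruence of polynomials in Z[q]. -/
open Finset Polynomial

/-- For `n` odd, the product of `1 + μ` over all `n`-th roots of unity is `2`. -/
lemma aux_roots_prod {n : ℕ} (hn : 0 < n) (hodd : Odd n) {ζ : ℂ} (h : IsPrimitiveRoot ζ n) :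
    ∏ μ ∈ Polynomial.nthRootsFinset n (1 : ℂ), (1 + μ) = 2 := by
  have hX := Polynomial.X_pow_sub_one_eq_prod hn h
  have h2 : ∏ μ ∈ Polynomial.nthRootsFinset n (1 : ℂ), (-1 - μ) = -2 := by
    have := congrArg (Polynomial.eval (-1 : ℂ)) hX
    have h4 : ((-1 : ℂ)) ^ n - 1 = ∏ μ ∈ Polynomial.nthRootsFinset n (1 : ℂ), (-1 - μ) := by
      simpa [Polynomial.eval_prod] using this
    rw [← h4, hodd.neg_one_pow]; norm_num
  have h3 : ∏ μ ∈ Polynomial.nthRootsFinset n (1 : ℂ), (1 + μ)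
      = (-1 : ℂ) ^ (Polynomial.nthRootsFinset n (1 : ℂ)).card
        * ∏ μ ∈ Polynomial.nthRootsFinset n (1 : ℂ), (-1 - μ) := by
    rw [← Finset.prod_const, ← Finset.prod_mul_distrib]
    exact Finset.prod_congr rfl fun μ _ => by ring
  rw [h3, h2, h.card_nthRootsFinset, hodd.neg_one_pow]
  ring

/-- Shifted products over a full period equal the product over all `n`-th roots of unity. -/
lemma aux_shift {n : ℕ} (hn : 0 < n) {ζ : ℂ} (h : IsPrimitiveRoot ζ n) (c : ℕ) :
    ∏ j ∈ Finset.range n, (1 + ζ ^ (c + j)) = ∏ μ ∈ Polynomial.nthRootsFinset n (1 : ℂ), (1 + μ) := by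
  haveI : NeZero n := ⟨hn.ne'⟩
  have hmod : ∀ a : ℕ, ζ ^ a = ζ ^ (a % n) := by
    intro a
    conv_lhs => rw [← Nat.mod_add_div a n]
    rw [pow_add, pow_mul, h.pow_eq_one, one_pow, mul_one]
  refine Finset.prod_nbij (fun j => ζ ^ (c + j)) ?_ ?_ ?_ ?_
  · intro j _
    rw [Polynomial.mem_nthRootsFinset hn, ← pow_mul, mul_comm, pow_mul, h.pow_eq_one, one_pow]
  · intro i hi j hj hij
    simp only [Finset.coe_range, Set.mem_Iio] at hi hj
    simp only at hij
    rw [hmod (c + i), hmod (c + j)] at hij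
    have hij0 : c + i ≡ c + j [MOD n] :=
      h.pow_inj (Nat.mod_lt _ hn) (Nat.mod_lt _ hn) hij
    have hij' : i ≡ j [MOD n] := Nat.ModEq.add_left_cancel' c hij0
    have hij'' : i % n = j % n := hij'
    rwa [Nat.mod_eq_of_lt hi, Nat.mod_eq_of_lt hj] at hij''
  · intro μ hμ
    simp only [Finset.mem_coe] at hμ
    have hμ1 : μ ^ n = 1 := (Polynomial.mem_nthRootsFinset hn (1 : ℂ)).1 hμ
    obtain ⟨i, hi, rfl⟩ := h.eq_pow_of_pow_eq_one hμ1
    refine ⟨(i + (n - c % n)) % n, ?_, ?_⟩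
    · simp [Nat.mod_lt _ hn]
    · show ζ ^ (c + (i + (n - c % n)) % n) = ζ ^ i
      have hcn : c % n < n := Nat.mod_lt _ hn
      have hmodeq : c + (i + (n - c % n)) % n ≡ i [MOD n] := by
        calc c + (i + (n - c % n)) % n
            ≡ c + (i + (n - c % n)) [MOD n] := (Nat.mod_modEq _ n).add_left c
          _ ≡ c % n + (i + (n - c % n)) [MOD n] := (Nat.mod_modEq c n).symm.add_right _
          _ = i + n := by omega
          _ ≡ i [MOD n] := Nat.add_mod_right i n
      rw [hmod (c + (i + (n - c % n)) % n), hmod i]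
      exact congrArg (ζ ^ ·) hmodeq
  · intro j _; rfl

lemma aux_complex {n : ℕ} (hn : 0 < n) (hodd : Odd n) {ζ : ℂ} (h : IsPrimitiveRoot ζ n)
    (r s : ℕ) :
    ∏ i ∈ Finset.range (r * n + s), (1 + ζ ^ (i + 1))
      = 2 ^ r * ∏ i ∈ Finset.range s, (1 + ζ ^ (i + 1)) := by
  induction r with
  | zero => simp
  | succ r ih =>
    have hre : (r + 1) * n + s = (r * n + s) + n := by ring
    rw [hre, Finset.prod_range_add, ih]
    have hb : ∏ j ∈ Finset.range n, (1 + ζ ^ (r * n + s + j + 1)) = 2 := by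
      have he : ∀ j, r * n + s + j + 1 = (r * n + s + 1) + j := by omega
      calc ∏ j ∈ Finset.range n, (1 + ζ ^ (r * n + s + j + 1))
          = ∏ j ∈ Finset.range n, (1 + ζ ^ ((r * n + s + 1) + j)) :=
            Finset.prod_congr rfl fun j _ => by rw [he j]
        _ = ∏ μ ∈ Polynomial.nthRootsFinset n (1 : ℂ), (1 + μ) := aux_shift hn h _
        _ = 2 := aux_roots_prod hn hodd h
    rw [hb]
    ring

/-- For `n` a positive odd integer and `r, s` with `s ≤ n-1`,
`(-q;q)_{rn+s} ≡ 2^r (-q;q)_s (mod Φ_n(q))` in `ℤ[q]`. -/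
theorem stmt0 (n : ℕ) (hn : 0 < n) (hodd : Odd n) (r s : ℕ) (hs : s ≤ n - 1) :
    (Polynomial.cyclotomic n ℤ) ∣
      (∏ i ∈ Finset.range (r * n + s), (1 + (Polynomial.X : Polynomial ℤ) ^ (i + 1))) -
        2 ^ r * ∏ i ∈ Finset.range s, (1 + (Polynomial.X : Polynomial ℤ) ^ (i + 1)) := by
  have hζ : IsPrimitiveRoot (Complex.exp (2 * Real.pi * Complex.I / n)) n :=
    Complex.isPrimitiveRoot_exp n hn.ne'
  set ζ := Complex.exp (2 * Real.pi * Complex.I / n)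
  rw [Polynomial.cyclotomic_eq_minpoly hζ hn]
  apply minpoly.isIntegrallyClosed_dvd (hζ.isIntegral hn)
  have := aux_complex hn hodd hζ r s
  simp only [map_sub, map_mul, map_pow, map_prod, map_add, map_one, Polynomial.aeval_X,
    map_ofNat]
  rw [sub_eq_zero]
  simpa using this
end

section
/- (q-Lucas theorem) Let n be a positive integer, and let a, b, r, s be nonnegative integers with b ≤ n-1 and s ≤ n-1. Then the Gaussian binomial coefficient satisfies C(an+b, rn+s)_q ≡ C(a,r) · C(b,s)_q modulo Φ_n(q), where C(a,r) is the ordinary binomial coefficient. -/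
open Finset Polynomial

noncomputable def poch (a Q : RatFunc ℚ) (k : ℕ) : RatFunc ℚ :=
  ∏ i ∈ Finset.range k, (1 - a * Q ^ i)

noncomputable def qbinom (M N : ℕ) : RatFunc ℚ :=
  if N ≤ M then
    poch RatFunc.X RatFunc.X M / (poch RatFunc.X RatFunc.X N * poch RatFunc.X RatFunc.X (M - N))
  else 0

/-- polynomial version of `(q;q)_M`. -/
noncomputable def Pp (M : ℕ) : ℚ[X] := ∏ j ∈ Finset.range M, (1 - X ^ (j + 1))

lemma poch_eq (k : ℕ) :
    poch RatFunc.X RatFunc.X k = algebraMap ℚ[X] (RatFunc ℚ) (Pp k) := by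
  unfold poch Pp
  rw [map_prod]
  refine Finset.prod_congr rfl fun j _ => ?_
  simp [RatFunc.algebraMap_X, pow_succ']

lemma Pp_ne_zero (k : ℕ) : Pp k ≠ 0 := by
  intro h
  have := congrArg (Polynomial.eval 0) h
  simp [Pp, Polynomial.eval_prod] at this

lemma poch_ne_zero (k : ℕ) : poch RatFunc.X RatFunc.X k ≠ 0 := by
  rw [poch_eq]
  simpa using (RatFunc.algebraMap_ne_zero (Pp_ne_zero k))

noncomputable def qpoly : ℕ → ℕ → ℚ[X]
  | _, 0 => 1
  | 0, _ + 1 => 0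
  | M + 1, N + 1 => qpoly M N + X ^ (N + 1) * qpoly M (N + 1)

@[simp] lemma qpoly_zero (M : ℕ) : qpoly M 0 = 1 := by cases M <;> rfl
@[simp] lemma qpoly_zero_succ (N : ℕ) : qpoly 0 (N + 1) = 0 := rfl
lemma qpoly_succ (M N : ℕ) :
    qpoly (M + 1) (N + 1) = qpoly M N + X ^ (N + 1) * qpoly M (N + 1) := rfl

lemma Pp_add (m k : ℕ) :
    Pp (m + k) = Pp m * ∏ j ∈ Finset.range k, (1 - X ^ (m + j + 1)) := by
  unfold Pp
  rw [Finset.prod_range_add]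

lemma Pp_succ (m : ℕ) : Pp (m + 1) = Pp m * (1 - X ^ (m + 1)) := by
  unfold Pp; rw [Finset.prod_range_succ]

lemma poch_succ (k : ℕ) :
    poch RatFunc.X RatFunc.X (k + 1)
      = poch RatFunc.X RatFunc.X k * (1 - RatFunc.X ^ (k + 1)) := by
  unfold poch
  rw [Finset.prod_range_succ, pow_succ']

lemma one_sub_X_pow_ne_zero (k : ℕ) : (1 - RatFunc.X ^ (k + 1) : RatFunc ℚ) ≠ 0 := by
  have h : (1 - RatFunc.X ^ (k + 1) : RatFunc ℚ)
      = algebraMap ℚ[X] (RatFunc ℚ) (1 - X ^ (k + 1)) := by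
    rw [map_sub, map_one, map_pow, RatFunc.algebraMap_X]
  rw [h]
  apply RatFunc.algebraMap_ne_zero
  intro hz
  have := congrArg (Polynomial.eval 0) hz
  simp at this

lemma qbinom_eq_zero {M N : ℕ} (h : M < N) : qbinom M N = 0 := if_neg (by omega)

lemma qbinom_pascal (M N : ℕ) :
    qbinom (M + 1) (N + 1) = qbinom M N + RatFunc.X ^ (N + 1) * qbinom M (N + 1) := by
  rcases lt_trichotomy N M with h | rfl | h
  · obtain ⟨t, rfl⟩ : ∃ t, M = N + 1 + t := ⟨M - (N + 1), by omega⟩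
    unfold qbinom
    rw [if_pos (by omega), if_pos (by omega), if_pos (by omega)]
    rw [show N + 1 + t + 1 - (N + 1) = t + 1 by omega,
        show N + 1 + t - N = t + 1 by omega,
        show N + 1 + t - (N + 1) = t by omega]
    rw [show N + 1 + t + 1 = (N + 1 + t) + 1 from rfl, poch_succ (N + 1 + t),
        poch_succ N, poch_succ t]
    field_simp [poch_ne_zero, one_sub_X_pow_ne_zero]
    ring
  · rw [qbinom_eq_zero (by omega : N < N + 1)]
    unfold qbinom
    rw [if_pos le_rfl, if_pos le_rfl, Nat.sub_self, Nat.sub_self]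
    have h1 : poch RatFunc.X RatFunc.X 0 = 1 := Finset.prod_range_zero _
    rw [h1]
    rw [mul_one, mul_one, div_self (poch_ne_zero _), div_self (poch_ne_zero _)]
    ring
  · rw [qbinom_eq_zero (by omega : M + 1 < N + 1), qbinom_eq_zero (by omega : M < N),
        qbinom_eq_zero (by omega : M < N + 1)]
    ring

theorem qbinom_algebraMap : ∀ M N : ℕ, qbinom M N = algebraMap ℚ[X] (RatFunc ℚ) (qpoly M N)
  | M, 0 => by
    unfold qbinom
    rw [if_pos (Nat.zero_le M)]
    have h0 : poch RatFunc.X RatFunc.X 0 = 1 := Finset.prod_range_zero _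
    rw [Nat.sub_zero, h0, one_mul, div_self (poch_ne_zero M), qpoly_zero, map_one]
  | 0, N + 1 => by
    rw [qbinom_eq_zero (by omega), qpoly_zero_succ, map_zero]
  | M + 1, N + 1 => by
    rw [qbinom_pascal, qbinom_algebraMap M N, qbinom_algebraMap M (N + 1), qpoly_succ,
        map_add, map_mul, map_pow, RatFunc.algebraMap_X]

lemma qpoly_mul {M N : ℕ} (h : N ≤ M) :
    qpoly M N * (Pp N * Pp (M - N)) = Pp M := by
  apply RatFunc.algebraMap_injective ℚ
  rw [map_mul, map_mul, ← poch_eq, ← poch_eq, ← poch_eq, ← qbinom_algebraMap]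
  unfold qbinom
  rw [if_pos h, div_mul_cancel₀ _ (mul_ne_zero (poch_ne_zero N) (poch_ne_zero (M - N)))]

lemma qpoly_eq_zero {M N : ℕ} (h : M < N) : qpoly M N = 0 := by
  apply RatFunc.algebraMap_injective ℚ
  rw [← qbinom_algebraMap, qbinom_eq_zero h, map_zero]

noncomputable def Ev (ζ : ℂ) (v : ℕ) : ℂ := ∏ j ∈ Finset.range v, (1 - ζ ^ (j + 1))

lemma aeval_Pp (ζ : ℂ) (v : ℕ) : aeval ζ (Pp v) = Ev ζ v := by
  unfold Pp Ev
  rw [map_prod]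
  simp

lemma Ev_ne_zero {m : ℕ} {ζ : ℂ} (hζ : IsPrimitiveRoot ζ (m + 1)) {v : ℕ} (hv : v ≤ m) :
    Ev ζ v ≠ 0 := by
  unfold Ev
  rw [Finset.prod_ne_zero_iff]
  intro j hj
  rw [Finset.mem_range] at hj
  have : ζ ^ (j + 1) ≠ 1 := hζ.pow_ne_one_of_pos_of_lt (by omega) (by omega)
  exact sub_ne_zero_of_ne (Ne.symm this)

lemma zeta_pow_reduce {m : ℕ} {ζ : ℂ} (hζ : IsPrimitiveRoot ζ (m + 1)) (u j : ℕ) :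
    ζ ^ (u * (m + 1) + j) = ζ ^ j := by
  rw [pow_add, pow_mul', hζ.pow_eq_one, one_pow, one_mul]

lemma key0 {m : ℕ} {ζ : ℂ} (hζ : IsPrimitiveRoot ζ (m + 1)) (u : ℕ) :
    ∃ w : ℚ[X], Pp (u * (m + 1)) = (1 - X ^ (m + 1)) ^ u * w ∧
      aeval ζ w = (u.factorial : ℂ) * (Ev ζ m) ^ u := by
  induction u with
  | zero => exact ⟨1, by simp [Pp]⟩
  | succ u ih =>
    obtain ⟨w, hw, haw⟩ := ih
    refine ⟨w * (∏ j ∈ Finset.range m, (1 - X ^ (u * (m + 1) + j + 1))) *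
      ∑ i ∈ Finset.range (u + 1), (X ^ (m + 1)) ^ i, ?_, ?_⟩
    · have hgeo : (1 - X ^ ((u + 1) * (m + 1)) : ℚ[X])
          = (1 - X ^ (m + 1)) * ∑ i ∈ Finset.range (u + 1), (X ^ (m + 1)) ^ i := by
        have h := geom_sum_mul (X ^ (m + 1) : ℚ[X]) (u + 1)
        rw [show (u + 1) * (m + 1) = (m + 1) * (u + 1) by ring, pow_mul]
        linear_combination h
      calc Pp ((u + 1) * (m + 1)) = Pp (u * (m + 1) + (m + 1)) := by ring_nf
        _ = Pp (u * (m + 1)) * ∏ j ∈ Finset.range (m + 1), (1 - X ^ (u * (m + 1) + j + 1)) :=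
            Pp_add _ _
        _ = Pp (u * (m + 1)) * ((∏ j ∈ Finset.range m, (1 - X ^ (u * (m + 1) + j + 1))) *
            (1 - X ^ ((u + 1) * (m + 1)))) := by
            rw [Finset.prod_range_succ, show u * (m + 1) + m + 1 = (u + 1) * (m + 1) by ring]
        _ = _ := by rw [hw, hgeo]; ring
    · rw [map_mul, map_mul, haw, map_prod, map_sum]
      have h1 : ∀ j ∈ Finset.range m, aeval ζ (1 - X ^ (u * (m + 1) + j + 1) : ℚ[X])
          = 1 - ζ ^ (j + 1) := by
        intro j _
        rw [map_sub, map_one, map_pow, aeval_X,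
          show u * (m + 1) + j + 1 = u * (m + 1) + (j + 1) by ring, zeta_pow_reduce hζ]
      rw [Finset.prod_congr rfl h1]
      have h2 : ∀ i ∈ Finset.range (u + 1), aeval ζ ((X ^ (m + 1) : ℚ[X]) ^ i)
          = 1 := by
        intro i _
        rw [map_pow, map_pow, aeval_X, hζ.pow_eq_one, one_pow]
      rw [Finset.sum_congr rfl h2, Finset.sum_const, Finset.card_range]
      show (u.factorial : ℂ) * (Ev ζ m) ^ u * Ev ζ m * ((u + 1) • (1:ℂ))
        = ((u + 1).factorial : ℂ) * Ev ζ m ^ (u + 1)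
      rw [nsmul_eq_mul, Nat.factorial_succ]
      push_cast
      ring

lemma key {m : ℕ} {ζ : ℂ} (hζ : IsPrimitiveRoot ζ (m + 1)) (u : ℕ) {v : ℕ} (hv : v ≤ m) :
    ∃ w : ℚ[X], Pp (u * (m + 1) + v) = (1 - X ^ (m + 1)) ^ u * w ∧
      aeval ζ w = (u.factorial : ℂ) * (Ev ζ m) ^ u * Ev ζ v := by
  obtain ⟨w, hw, haw⟩ := key0 hζ u
  refine ⟨w * ∏ j ∈ Finset.range v, (1 - X ^ (u * (m + 1) + j + 1)), ?_, ?_⟩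
  · rw [Pp_add, hw]; ring
  · rw [map_mul, haw, map_prod]
    have h1 : ∀ j ∈ Finset.range v, aeval ζ (1 - X ^ (u * (m + 1) + j + 1) : ℚ[X])
        = 1 - ζ ^ (j + 1) := by
      intro j _
      rw [map_sub, map_one, map_pow, aeval_X,
        show u * (m + 1) + j + 1 = u * (m + 1) + (j + 1) by ring, zeta_pow_reduce hζ]
    rw [Finset.prod_congr rfl h1]
    rfl


/-- q-Lucas theorem: for `b, s ≤ n-1`,
`C(an+b, rn+s)_q ≡ C(a,r)·C(b,s)_q (mod Φ_n(q))`. -/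
theorem stmt3 (n : ℕ) (hn : 0 < n) (a b r s : ℕ) (hb : b ≤ n - 1) (hs : s ≤ n - 1) :
    (Polynomial.cyclotomic n ℚ) ∣
      (qbinom (a * n + b) (r * n + s) - (a.choose r : RatFunc ℚ) * qbinom b s).num := by
  obtain ⟨m, rfl⟩ : ∃ m, n = m + 1 := ⟨n - 1, by omega⟩
  rw [Nat.add_sub_cancel] at hb hs
  set ζ : ℂ := Complex.exp (2 * Real.pi * Complex.I / (m + 1)) with hζdef
  have hζ : IsPrimitiveRoot ζ (m + 1) := by
    have := Complex.isPrimitiveRoot_exp (m + 1) (by omega)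
    simpa [hζdef] using this
  have hrepr : qbinom (a * (m + 1) + b) (r * (m + 1) + s) - (a.choose r : RatFunc ℚ) * qbinom b s
      = algebraMap ℚ[X] (RatFunc ℚ)
        (qpoly (a * (m + 1) + b) (r * (m + 1) + s) - (a.choose r : ℚ[X]) * qpoly b s) := by
    rw [map_sub, map_mul, ← qbinom_algebraMap, ← qbinom_algebraMap, map_natCast]
  rw [hrepr, RatFunc.num_algebraMap, cyclotomic_eq_minpoly_rat hζ (by omega)]
  apply minpoly.dvd
  rw [map_sub, map_mul, map_natCast]
  have hc : (1 - X ^ (m + 1) : ℚ[X]) ≠ 0 := by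
    intro h
    have := congrArg (Polynomial.eval 0) h
    simp at this
  have hz1 : (1 : ℂ) - ζ ^ (m + 1) = 0 := by rw [hζ.pow_eq_one]; ring
  rcases le_or_gt r a with hra | hra
  · rcases le_or_gt s b with hsb | hsb
    · -- main case r ≤ a, s ≤ b
      obtain ⟨u1, rfl⟩ : ∃ u1, a = r + u1 := ⟨a - r, by omega⟩
      obtain ⟨v1, rfl⟩ : ∃ v1, b = s + v1 := ⟨b - s, by omega⟩
      have hNle : r * (m + 1) + s ≤ (r + u1) * (m + 1) + (s + v1) :=
        Nat.le.intro (show r * (m + 1) + s + (u1 * (m + 1) + v1) = _ by ring)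
      have hMN : (r + u1) * (m + 1) + (s + v1) - (r * (m + 1) + s) = u1 * (m + 1) + v1 :=
        Nat.sub_eq_of_eq_add (by ring)
      have id1 := qpoly_mul hNle
      rw [hMN] at id1
      obtain ⟨w1, hw1, ha1⟩ := key hζ r hs
      obtain ⟨w2, hw2, ha2⟩ := key hζ u1 (show v1 ≤ m by omega)
      obtain ⟨w3, hw3, ha3⟩ := key hζ (r + u1) hb
      rw [hw1, hw2, hw3] at id1
      have id2 : qpoly ((r + u1) * (m + 1) + (s + v1)) (r * (m + 1) + s) * (w1 * w2) = w3 := by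
        apply mul_right_cancel₀ (pow_ne_zero (r + u1) hc)
        linear_combination id1
      have A1 := congrArg (aeval ζ) id2
      rw [map_mul, map_mul, ha1, ha2, ha3] at A1
      have idb := qpoly_mul (show s ≤ s + v1 from Nat.le_add_right s v1)
      rw [Nat.add_sub_cancel_left] at idb
      have B1 := congrArg (aeval ζ) idb
      rw [map_mul, map_mul, aeval_Pp, aeval_Pp, aeval_Pp] at B1
      rw [sub_eq_zero]
      have hch : ((r + u1).choose r : ℂ) * r.factorial * u1.factorial = (r + u1).factorial := by
        have h := Nat.choose_mul_factorial_mul_factorial (Nat.le_add_right r u1)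
        rw [Nat.add_sub_cancel_left] at h
        exact_mod_cast h
      have hD := Ev_ne_zero hζ (le_refl m)
      have hEs := Ev_ne_zero hζ hs
      have hEv1 := Ev_ne_zero hζ (show v1 ≤ m by omega)
      have hf1 : (r.factorial : ℂ) ≠ 0 := Nat.cast_ne_zero.mpr r.factorial_ne_zero
      have hf2 : (u1.factorial : ℂ) ≠ 0 := Nat.cast_ne_zero.mpr u1.factorial_ne_zero
      have hF : ((r.factorial : ℂ) * Ev ζ m ^ r * Ev ζ s *
          ((u1.factorial : ℂ) * Ev ζ m ^ u1 * Ev ζ v1)) ≠ 0 :=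
        mul_ne_zero (mul_ne_zero (mul_ne_zero hf1 (pow_ne_zero _ hD)) hEs)
          (mul_ne_zero (mul_ne_zero hf2 (pow_ne_zero _ hD)) hEv1)
      apply mul_right_cancel₀ hF
      linear_combination A1 -
        (((r + u1).choose r : ℂ) * r.factorial * u1.factorial * Ev ζ m ^ (r + u1)) * B1 -
        (Ev ζ m ^ (r + u1) * Ev ζ (s + v1)) * hch
    · rcases eq_or_lt_of_le hra with rfl | hra'
      · -- r = a, s > b : both qpolys vanish
        have h1 : qpoly (r * (m + 1) + b) (r * (m + 1) + s) = 0 :=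
          qpoly_eq_zero (by omega)
        rw [h1, qpoly_eq_zero hsb]
        simp
      · -- r < a, s > b
        obtain ⟨u2, rfl⟩ : ∃ u2, a = r + 1 + u2 := ⟨a - r - 1, by omega⟩
        obtain ⟨v2, hv2⟩ : ∃ v2, s + v2 = (m + 1) + b := ⟨(m + 1) + b - s, by omega⟩
        have hv2m : v2 ≤ m := by omega
        have hNle : r * (m + 1) + s ≤ (r + 1 + u2) * (m + 1) + b := by
          refine Nat.le.intro (k := u2 * (m + 1) + v2) ?_
          calc r * (m + 1) + s + (u2 * (m + 1) + v2)
              = (s + v2) + (r * (m + 1) + u2 * (m + 1)) := by ring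
            _ = ((m + 1) + b) + (r * (m + 1) + u2 * (m + 1)) := by rw [hv2]
            _ = (r + 1 + u2) * (m + 1) + b := by ring
        have hMN : (r + 1 + u2) * (m + 1) + b - (r * (m + 1) + s) = u2 * (m + 1) + v2 := by
          apply Nat.sub_eq_of_eq_add
          calc (r + 1 + u2) * (m + 1) + b
              = ((m + 1) + b) + (r * (m + 1) + u2 * (m + 1)) := by ring
            _ = (s + v2) + (r * (m + 1) + u2 * (m + 1)) := by rw [hv2]
            _ = u2 * (m + 1) + v2 + (r * (m + 1) + s) := by ring
        have id1 := qpoly_mul hNle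
        rw [hMN] at id1
        obtain ⟨w1, hw1, ha1⟩ := key hζ r hs
        obtain ⟨w2, hw2, ha2⟩ := key hζ u2 hv2m
        obtain ⟨w3, hw3, ha3⟩ := key hζ (r + 1 + u2) hb
        rw [hw1, hw2, hw3] at id1
        have id2 : qpoly ((r + 1 + u2) * (m + 1) + b) (r * (m + 1) + s) * (w1 * w2)
            = (1 - X ^ (m + 1)) * w3 := by
          apply mul_right_cancel₀ (pow_ne_zero (r + u2) hc)
          linear_combination id1
        have A1 := congrArg (aeval ζ) id2
        rw [map_mul, map_mul, map_mul, ha1, ha2, map_sub, map_one, map_pow, aeval_X, hz1,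
          zero_mul] at A1
        have hD := Ev_ne_zero hζ (le_refl m)
        have hEs := Ev_ne_zero hζ hs
        have hEv2 := Ev_ne_zero hζ hv2m
        have hf1 : (r.factorial : ℂ) ≠ 0 := Nat.cast_ne_zero.mpr r.factorial_ne_zero
        have hf2 : (u2.factorial : ℂ) ≠ 0 := Nat.cast_ne_zero.mpr u2.factorial_ne_zero
        have hne : ((r.factorial : ℂ) * Ev ζ m ^ r * Ev ζ s *
            ((u2.factorial : ℂ) * Ev ζ m ^ u2 * Ev ζ v2)) ≠ 0 :=
          mul_ne_zero (mul_ne_zero (mul_ne_zero hf1 (pow_ne_zero _ hD)) hEs)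
            (mul_ne_zero (mul_ne_zero hf2 (pow_ne_zero _ hD)) hEv2)
        have hAq : aeval ζ (qpoly ((r + 1 + u2) * (m + 1) + b) (r * (m + 1) + s)) = 0 := by
          rcases mul_eq_zero.mp A1 with h | h
          · exact h
          · exact absurd h hne
        rw [hAq, qpoly_eq_zero hsb]
        simp
  · -- r > a
    have hlt : a * (m + 1) + b < r * (m + 1) + s := by
      calc a * (m + 1) + b < a * (m + 1) + (m + 1) := by omega
        _ = (a + 1) * (m + 1) := by ring
        _ ≤ r * (m + 1) := Nat.mul_le_mul_right _ (by omega)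
        _ ≤ r * (m + 1) + s := Nat.le_add_right _ _
    rw [qpoly_eq_zero hlt, Nat.choose_eq_zero_of_lt hra]
    simp
end

section
/- Let p ≡ 1 (mod 4) be a prime and r a positive integer. Then p · (3/4)_{(p^r-1)/2} · (5/4)_{(p^{r-1}-1)/2} / ((5/4)_{(p^r-1)/2} · (3/4)_{(p^{r-1}-1)/2}) ≡ -Γ_p(1/4)^4 (mod p^{2r}), as a congruence of p-adic integers. -/
open Finset

/-- The rising factorial `(a)_k = a(a+1)⋯(a+k-1)` in `ℚ_p`. -/
noncomputable def asc {p : ℕ} [Fact p.Prime] (a : ℚ_[p]) (k : ℕ) : ℚ_[p] :=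
  ∏ i ∈ Finset.range k, (a + i)

namespace Stmt4Aux
attribute [local instance] Classical.propDecidable

variable {p : ℕ} [Fact p.Prime]

lemma norm_nat_lt_one_iff {k : ℕ} : ‖(k : ℤ_[p])‖ < 1 ↔ p ∣ k := by
  have := PadicInt.norm_int_lt_one_iff_dvd (p := p) (k : ℤ)
  rw [Int.cast_natCast] at this
  rw [this, Int.natCast_dvd_natCast]

lemma isUnit_nat_iff {k : ℕ} : IsUnit ((k : ℤ_[p])) ↔ ¬ p ∣ k := by
  rw [PadicInt.isUnit_iff, ← norm_nat_lt_one_iff]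
  constructor
  · intro h h'
    rw [h] at h'; exact lt_irrefl _ h'
  · intro h
    rcases lt_or_eq_of_le (PadicInt.norm_le_one (k : ℤ_[p])) with h' | h'
    · exact absurd h' h
    · exact h'

lemma norm_sub_le_max (a b : ℤ_[p]) : ‖a - b‖ ≤ max ‖a‖ ‖b‖ := by
  rw [sub_eq_add_neg]
  simpa using PadicInt.nonarchimedean a (-b)

lemma dense_closed {S : Set ℤ_[p]} (hc : IsClosed S)
    (h : ∀ n : ℕ, ((n : ℤ_[p]) ∈ S)) : ∀ x, x ∈ S := by
  have hd := PadicInt.denseRange_natCast (p := p)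
  have h2 : closure (Set.range ((↑) : ℕ → ℤ_[p])) ⊆ closure S :=
    closure_mono (by rintro _ ⟨n, rfl⟩; exact h n)
  rw [hd.closure_range, hc.closure_eq] at h2
  exact fun x => h2 (Set.mem_univ x)

lemma dense_closed_ge (K : ℕ) {S : Set ℤ_[p]} (hc : IsClosed S)
    (h : ∀ n : ℕ, K ≤ n → ((n : ℤ_[p]) ∈ S)) : ∀ x, x ∈ S := by
  intro x
  rw [← hc.closure_eq]
  rw [Metric.mem_closure_iff]
  intro ε hε
  have hp1 : (1 : ℝ) < p := by
    exact_mod_cast (Fact.out : p.Prime).one_lt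
  obtain ⟨L, hL⟩ : ∃ L : ℕ, ((p : ℝ))⁻¹ ^ L < ε := by
    refine exists_pow_lt_of_lt_one hε ?_
    rw [inv_lt_one_iff₀]; right; exact hp1
  obtain ⟨n, hn⟩ := Metric.denseRange_iff.mp (PadicInt.denseRange_natCast (p := p)) x
    (min ε (((p:ℝ))⁻¹ ^ L)) (lt_min hε (by positivity))
  refine ⟨((n + p ^ L * K : ℕ) : ℤ_[p]), h _ (by
    have : 0 < p ^ L := pow_pos (Fact.out : p.Prime).pos L
    calc K = 1 * K := (one_mul K).symm
    _ ≤ p ^ L * K := Nat.mul_le_mul_right K this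
    _ ≤ n + p ^ L * K := Nat.le_add_left _ _), ?_⟩
  have hcast : ((n + p ^ L * K : ℕ) : ℤ_[p]) = (n : ℤ_[p]) + (p:ℤ_[p])^L * K := by push_cast; ring
  rw [dist_eq_norm, hcast]
  have h1 : x - ((n : ℤ_[p]) + (p:ℤ_[p])^L * K) = (x - n) - (p:ℤ_[p])^L * K := by ring
  rw [h1]
  refine lt_of_le_of_lt (norm_sub_le_max _ _) (max_lt ?_ ?_)
  · rw [dist_eq_norm] at hn
    exact lt_of_lt_of_le hn (min_le_left _ _)
  · calc ‖(p:ℤ_[p])^L * (K:ℤ_[p])‖ ≤ ‖(p:ℤ_[p])^L‖ * 1 := by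
          rw [norm_mul]
          exact mul_le_mul_of_nonneg_left (PadicInt.norm_le_one _) (norm_nonneg _)
    _ = ((p:ℝ))⁻¹ ^ L := by
          rw [mul_one, PadicInt.norm_p_pow, zpow_neg, ← zpow_natCast, inv_zpow]
    _ < ε := hL

section Bad
variable (q : ℤ_[p]) (hq : 4 * q = 1)
include hq


lemma four_unit : IsUnit (4 : ℤ_[p]) := IsUnit.of_mul_eq_one q hq

lemma four_ne_zero' : (4 : ℤ_[p]) ≠ 0 := fun h => one_ne_zero (by rw [← hq, h, zero_mul])

lemma term3 (i : ℕ) : (4:ℤ_[p]) * ((1 - q) + (i:ℤ_[p])) = ((4*i+3 : ℕ) : ℤ_[p]) := by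
  push_cast; linear_combination (-1 : ℤ_[p]) * hq

lemma term5 (i : ℕ) : (4:ℤ_[p]) * ((1 + q) + (i:ℤ_[p])) = ((4*i+5 : ℕ) : ℤ_[p]) := by
  push_cast; linear_combination hq

lemma termq (j : ℕ) : (4:ℤ_[p]) * (q + (j:ℤ_[p])) = ((4*j+1 : ℕ) : ℤ_[p]) := by
  push_cast; linear_combination hq

lemma unit3_iff (i : ℕ) : IsUnit ((1 - q) + (i:ℤ_[p])) ↔ ¬ p ∣ (4*i+3) := by
  rw [← isUnit_nat_iff (p := p), ← term3 q hq, IsUnit.mul_iff]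
  have := four_unit q hq
  tauto

lemma unit5_iff (i : ℕ) : IsUnit ((1 + q) + (i:ℤ_[p])) ↔ ¬ p ∣ (4*i+5) := by
  rw [← isUnit_nat_iff (p := p), ← term5 q hq, IsUnit.mul_iff]
  have := four_unit q hq
  tauto

lemma bad3 (t P1 M N : ℕ) (hp4 : p = 4*t+1) (ht1 : 1 ≤ t)
    (hM : 2*M + 1 = p * P1) (hN : 2*N + 1 = P1) :
    ∏ i ∈ (range M).filter (fun i : ℕ => ¬ IsUnit ((1 - q) + (i:ℤ_[p]))), ((1 - q) + (i:ℤ_[p]))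
      = ∏ j ∈ range N, ((p:ℤ_[p]) * ((1 - q) + (j:ℤ_[p]))) := by
  have hp0 : 0 < p := by omega
  refine (Finset.prod_nbij' (i := fun j => (4*j+3)*t + j)
    (j := fun i => ((4*i+3)/p - 3)/4) ?_ ?_ ?_ ?_ ?_).symm
  -- hi : ∀ j ∈ range N, image ∈ filter
  · intro j hj
    rw [mem_range] at hj
    have hi4 : 4*((4*j+3)*t + j) + 3 = p*(4*j+3) := by rw [hp4]; ring
    simp only [mem_filter, mem_range]
    constructor
    · have h1 : p*(4*j+3) ≤ p*(4*N-1) := Nat.mul_le_mul_left p (by omega)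
      obtain ⟨X, hX1, hX2⟩ : ∃ X, p*(4*j+3) ≤ X ∧ X + 3*p = 2*(p*P1) := by
        refine ⟨p*(4*N-1), h1, ?_⟩
        have h2 : (4*N-1) + 3 = 2*P1 := by omega
        calc p*(4*N-1) + 3*p = p*((4*N-1)+3) := by ring
        _ = p*(2*P1) := by rw [h2]
        _ = 2*(p*P1) := by ring
      omega
    · rw [unit3_iff q hq]
      intro hnd
      rw [hi4] at hnd
      exact hnd ⟨4*j+3, rfl⟩
  -- hj : ∀ i ∈ filter, inverse ∈ range N
  · intro i hi
    simp only [mem_filter, mem_range] at hi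
    obtain ⟨hiM, hbad⟩ := hi
    have hdvd : p ∣ 4*i+3 := by
      by_contra hnd
      exact hbad ((unit3_iff q hq i).mpr hnd)
    obtain ⟨u, hu⟩ := hdvd
    have hu4 : u % 4 = 3 := by
      have hexp : p * u = u + 4*(t*u) := by rw [hp4]; ring
      obtain ⟨Y, hY⟩ : ∃ Y, 4*i+3 = u + 4*Y := ⟨t*u, by rw [hu, hexp]⟩
      omega
    have hultP : u < 2*P1 := by
      by_contra hge
      push_neg at hge
      have h1 : p * (2*P1) ≤ p * u := Nat.mul_le_mul_left p hge
      rw [← hu] at h1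
      obtain ⟨X, hX1, hX2⟩ : ∃ X, X ≤ 4*i+3 ∧ X = 2*(p*P1) := ⟨p*(2*P1), h1, by ring⟩
      omega
    have hdiv : (4*i+3)/p = u := by rw [hu, Nat.mul_div_cancel_left _ hp0]
    simp only [mem_range, hdiv]
    omega
  -- left_inv : on range N side
  · intro j hj
    have hi4 : 4*((4*j+3)*t + j) + 3 = p*(4*j+3) := by rw [hp4]; ring
    have hdiv : (4*((4*j+3)*t + j)+3)/p = 4*j+3 := by rw [hi4, Nat.mul_div_cancel_left _ hp0]
    simp only [hdiv]
    omega
  -- right_inv : on filter side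
  · intro i hi
    simp only [mem_filter, mem_range] at hi
    obtain ⟨hiM, hbad⟩ := hi
    have hdvd : p ∣ 4*i+3 := by
      by_contra hnd
      exact hbad ((unit3_iff q hq i).mpr hnd)
    obtain ⟨u, hu⟩ := hdvd
    have hu4 : u % 4 = 3 := by
      have hexp : p * u = u + 4*(t*u) := by rw [hp4]; ring
      obtain ⟨Y, hY⟩ : ∃ Y, 4*i+3 = u + 4*Y := ⟨t*u, by rw [hu, hexp]⟩
      omega
    have hdiv : (4*i+3)/p = u := by rw [hu, Nat.mul_div_cancel_left _ hp0]
    simp only [hdiv]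
    have hj3 : 4*((u-3)/4)+3 = u := by omega
    have hkey : 4*((4*((u-3)/4)+3)*t + ((u-3)/4)) + 3 = p*(4*((u-3)/4)+3) := by rw [hp4]; ring
    rw [hj3] at hkey
    rw [← hu] at hkey
    rw [hj3]
    omega
  -- term equality : ∀ j ∈ range N, g j = f (i j)
  · intro j hj
    have hi4 : 4*((4*j+3)*t + j) + 3 = p*(4*j+3) := by rw [hp4]; ring
    apply mul_left_cancel₀ (four_ne_zero' q hq)
    rw [term3 q hq]
    calc (4:ℤ_[p]) * ((p:ℤ_[p]) * ((1-q) + (j:ℤ_[p])))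
        = (p:ℤ_[p]) * ((4:ℤ_[p]) * ((1-q) + (j:ℤ_[p]))) := by ring
    _ = (p:ℤ_[p]) * ((4*j+3 : ℕ) : ℤ_[p]) := by rw [term3 q hq]
    _ = ((p*(4*j+3) : ℕ) : ℤ_[p]) := by push_cast; ring
    _ = ((4*((4*j+3)*t + j) + 3 : ℕ) : ℤ_[p]) := by rw [hi4]

lemma bad5 (t P1 M N : ℕ) (hp4 : p = 4*t+1) (ht1 : 1 ≤ t)
    (hM : 2*M + 1 = p * P1) (hN : 2*N + 1 = P1) :
    ∏ i ∈ (range M).filter (fun i : ℕ => ¬ IsUnit ((1 + q) + (i:ℤ_[p]))), ((1 + q) + (i:ℤ_[p]))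
      = ∏ j ∈ range (N+1), ((p:ℤ_[p]) * (q + (j:ℤ_[p]))) := by
  have hp0 : 0 < p := by omega
  refine (Finset.prod_nbij' (i := fun j => (4*j+1)*t + j - 1)
    (j := fun i => ((4*i+5)/p - 1)/4) ?_ ?_ ?_ ?_ ?_).symm
  -- hi : ∀ j ∈ range (N+1), image ∈ filter
  · intro j hj
    rw [mem_range] at hj
    have hi4 : 4*((4*j+1)*t + j - 1) + 5 = p*(4*j+1) := by
      obtain ⟨X, hX⟩ : ∃ X, p*(4*j+1) = 4*((4*j+1)*t + j) + 1 := ⟨0, by rw [hp4]; ring⟩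
      have hB : 1 ≤ (4*j+1)*t := le_trans ht1 (Nat.le_mul_of_pos_left t (by omega))
      omega
    simp only [mem_filter, mem_range]
    constructor
    · have h1 : p*(4*j+1) ≤ p*(4*N+1) := Nat.mul_le_mul_left p (by omega)
      obtain ⟨X, hX1, hX2⟩ : ∃ X, p*(4*j+1) ≤ X ∧ X + p = 2*(p*P1) := by
        refine ⟨p*(4*N+1), h1, ?_⟩
        have h2 : (4*N+1) + 1 = 2*P1 := by omega
        calc p*(4*N+1) + p = p*((4*N+1)+1) := by ring
        _ = p*(2*P1) := by rw [h2]
        _ = 2*(p*P1) := by ring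
      omega
    · rw [unit5_iff q hq]
      intro hnd
      rw [hi4] at hnd
      exact hnd ⟨4*j+1, rfl⟩
  -- hj : ∀ i ∈ filter, inverse ∈ range (N+1)
  · intro i hi
    simp only [mem_filter, mem_range] at hi
    obtain ⟨hiM, hbad⟩ := hi
    have hdvd : p ∣ 4*i+5 := by
      by_contra hnd
      exact hbad ((unit5_iff q hq i).mpr hnd)
    obtain ⟨u, hu⟩ := hdvd
    have hu4 : u % 4 = 1 := by
      have hexp : p * u = u + 4*(t*u) := by rw [hp4]; ring
      obtain ⟨Y, hY⟩ : ∃ Y, 4*i+5 = u + 4*Y := ⟨t*u, by rw [hu, hexp]⟩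
      omega
    have hultP : u < 2*P1 := by
      by_contra hge
      push_neg at hge
      have h1 : p * (2*P1) ≤ p * u := Nat.mul_le_mul_left p hge
      rw [← hu] at h1
      obtain ⟨X, hX1, hX2⟩ : ∃ X, X ≤ 4*i+5 ∧ X = 2*(p*P1) := ⟨p*(2*P1), h1, by ring⟩
      omega
    have hdiv : (4*i+5)/p = u := by rw [hu, Nat.mul_div_cancel_left _ hp0]
    simp only [mem_range, hdiv]
    omega
  -- left_inv : on range (N+1) side
  · intro j hj
    have hi4 : 4*((4*j+1)*t + j - 1) + 5 = p*(4*j+1) := by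
      obtain ⟨X, hX⟩ : ∃ X, p*(4*j+1) = 4*((4*j+1)*t + j) + 1 := ⟨0, by rw [hp4]; ring⟩
      have hB : 1 ≤ (4*j+1)*t := le_trans ht1 (Nat.le_mul_of_pos_left t (by omega))
      omega
    have hdiv : (4*((4*j+1)*t + j - 1)+5)/p = 4*j+1 := by rw [hi4, Nat.mul_div_cancel_left _ hp0]
    simp only [hdiv]
    omega
  -- right_inv : on filter side
  · intro i hi
    simp only [mem_filter, mem_range] at hi
    obtain ⟨hiM, hbad⟩ := hi
    have hdvd : p ∣ 4*i+5 := by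
      by_contra hnd
      exact hbad ((unit5_iff q hq i).mpr hnd)
    obtain ⟨u, hu⟩ := hdvd
    have hu4 : u % 4 = 1 := by
      have hexp : p * u = u + 4*(t*u) := by rw [hp4]; ring
      obtain ⟨Y, hY⟩ : ∃ Y, 4*i+5 = u + 4*Y := ⟨t*u, by rw [hu, hexp]⟩
      omega
    have hdiv : (4*i+5)/p = u := by rw [hu, Nat.mul_div_cancel_left _ hp0]
    simp only [hdiv]
    have hj1 : 4*((u-1)/4)+1 = u := by omega
    have hkey : p*(4*((u-1)/4)+1) = 4*((4*((u-1)/4)+1)*t + ((u-1)/4)) + 1 := by rw [hp4]; ring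
    rw [hj1] at hkey
    rw [← hu] at hkey
    rw [hj1]
    have hB : 1 ≤ u*t := le_trans ht1 (Nat.le_mul_of_pos_left t (by omega))
    omega
  -- term equality : ∀ j ∈ range (N+1), g j = f (i j)
  · intro j hj
    have hi4 : 4*((4*j+1)*t + j - 1) + 5 = p*(4*j+1) := by
      obtain ⟨X, hX⟩ : ∃ X, p*(4*j+1) = 4*((4*j+1)*t + j) + 1 := ⟨0, by rw [hp4]; ring⟩
      have hB : 1 ≤ (4*j+1)*t := le_trans ht1 (Nat.le_mul_of_pos_left t (by omega))
      omega
    apply mul_left_cancel₀ (four_ne_zero' q hq)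
    rw [term5 q hq]
    calc (4:ℤ_[p]) * ((p:ℤ_[p]) * (q + (j:ℤ_[p])))
        = (p:ℤ_[p]) * ((4:ℤ_[p]) * (q + (j:ℤ_[p]))) := by ring
    _ = (p:ℤ_[p]) * ((4*j+1 : ℕ) : ℤ_[p]) := by rw [termq q hq]
    _ = ((p*(4*j+1) : ℕ) : ℤ_[p]) := by push_cast; ring
    _ = ((4*((4*j+1)*t + j - 1) + 5 : ℕ) : ℤ_[p]) := by rw [hi4]

end Bad


variable {G : ℤ_[p] → ℤ_[p]} (hGc : Continuous G)
  (hGv : ∀ n : ℕ, G n = (-1)^n * ∏ k ∈ (range n).filter (fun k => ¬ p ∣ k), (k : ℤ_[p]))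

include hGv

lemma G_nat_succ (n : ℕ) :
    G ↑(n+1) = -(if p ∣ n then 1 else (n:ℤ_[p])) * G ↑n := by
  rw [hGv, hGv, range_add_one, filter_insert]
  by_cases h : p ∣ n
  · rw [if_neg (not_not_intro h), if_pos h, pow_succ]
    ring
  · rw [if_pos h, prod_insert (by simp), if_neg h, pow_succ]
    ring

include hGc

lemma G_step_unit : ∀ x : ℤ_[p], IsUnit x → G (x + 1) = -x * G x := by
  have key : ∀ x : ℤ_[p], x ∈ ({x : ℤ_[p] | ‖x‖ ≤ (p:ℝ)⁻¹} ∪ {x | G (x+1) + x * G x = 0}) := by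
    apply dense_closed
    · apply IsClosed.union
      · exact isClosed_le continuous_norm continuous_const
      · exact isClosed_eq (((hGc.comp (continuous_add_right 1))).add
          (continuous_id.mul hGc)) continuous_const
    · intro n
      by_cases h : p ∣ n
      · left
        obtain ⟨k, rfl⟩ := h
        show ‖((p * k : ℕ) : ℤ_[p])‖ ≤ (p:ℝ)⁻¹
        push_cast
        rw [norm_mul, PadicInt.norm_p]
        calc (p:ℝ)⁻¹ * ‖(k:ℤ_[p])‖ ≤ (p:ℝ)⁻¹ * 1 := by
              apply mul_le_mul_of_nonneg_left (PadicInt.norm_le_one _) (by positivity)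
        _ = (p:ℝ)⁻¹ := mul_one _
      · right
        show G (↑n + 1) + ↑n * G ↑n = 0
        rw [← Nat.cast_one, ← Nat.cast_add, G_nat_succ hGv, if_neg h]
        ring
  intro x hx
  rcases key x with h | h
  · exfalso
    rw [PadicInt.isUnit_iff] at hx
    simp only [Set.mem_setOf_eq, hx] at h
    have hp1 : (1:ℝ) < p := by exact_mod_cast (Fact.out : p.Prime).one_lt
    have : (p:ℝ)⁻¹ < 1 := by
      rw [inv_lt_one_iff₀]; right; exact hp1
    linarith
  · have : G (x+1) + x * G x = 0 := h
    linear_combination this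

lemma G_step_nonunit : ∀ x : ℤ_[p], ¬ IsUnit x → G (x + 1) = - G x := by
  have key : ∀ x : ℤ_[p], x ∈ ({x : ℤ_[p] | ‖x‖ = 1} ∪ {x | G (x+1) + G x = 0}) := by
    apply dense_closed
    · apply IsClosed.union
      · exact isClosed_eq continuous_norm continuous_const
      · exact isClosed_eq (((hGc.comp (continuous_add_right 1))).add hGc) continuous_const
    · intro n
      by_cases h : p ∣ n
      · right
        show G (↑n + 1) + G ↑n = 0
        rw [← Nat.cast_one, ← Nat.cast_add, G_nat_succ hGv, if_pos h]
        ring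
      · left
        exact PadicInt.isUnit_iff.mp (isUnit_nat_iff.mpr h)
  intro x hx
  rcases key x with h | h
  · exact absurd (PadicInt.isUnit_iff.mpr h) hx
  · have : G (x+1) + G x = 0 := h
    linear_combination this

lemma G_isUnit : ∀ x : ℤ_[p], ‖G x‖ = 1 := by
  apply dense_closed (S := {x : ℤ_[p] | ‖G x‖ = 1})
  · exact isClosed_eq (continuous_norm.comp hGc) continuous_const
  · intro n
    show ‖G ↑n‖ = 1
    rw [hGv]
    have hu : IsUnit (∏ k ∈ (range n).filter (fun k => ¬ p ∣ k), (k : ℤ_[p])) := by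
      apply Finset.prod_induction _ IsUnit (fun _ _ => IsUnit.mul) isUnit_one
      intro k hk
      rw [mem_filter] at hk
      exact isUnit_nat_iff.mpr hk.2
    rw [norm_mul, PadicInt.isUnit_iff.mp hu]
    simp



-- ====== piece 4: shift formula, Wilson block, Lipschitz mod p, reflection ======

omit hGc in
lemma G_shift (x : ℤ_[p]) (M : ℕ) (hGc : Continuous G) :
    G (x + (M:ℤ_[p])) = (-1)^M * G x * ∏ i ∈ range M, (if IsUnit (x + (i:ℤ_[p])) then x + (i:ℤ_[p]) else 1) := by
  induction M with
  | zero => simp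
  | succ M ih =>
    have hcast : x + ((M+1 : ℕ):ℤ_[p]) = (x + (M:ℤ_[p])) + 1 := by push_cast; ring
    rw [hcast, prod_range_succ]
    by_cases h : IsUnit (x + (M:ℤ_[p]))
    · rw [G_step_unit hGc hGv _ h, ih, if_pos h, pow_succ]
      ring
    · rw [G_step_nonunit hGc hGv _ h, ih, if_neg h, pow_succ]
      ring

omit hGc in
lemma asc_split (x : ℤ_[p]) (M : ℕ) (hGc : Continuous G) :
    (∏ i ∈ range M, (x + (i:ℤ_[p]))) * G x
      = (-1)^M * G (x + (M:ℤ_[p])) *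
        ∏ i ∈ (range M).filter (fun i : ℕ => ¬ IsUnit (x + (i:ℤ_[p]))), (x + (i:ℤ_[p])) := by
  have hsplit : ∏ i ∈ range M, (x + (i:ℤ_[p]))
      = (∏ i ∈ range M, (if IsUnit (x + (i:ℤ_[p])) then x + (i:ℤ_[p]) else 1)) *
        ∏ i ∈ range M, (if IsUnit (x + (i:ℤ_[p])) then 1 else x + (i:ℤ_[p])) := by
    rw [← prod_mul_distrib]
    apply prod_congr rfl
    intro i _
    by_cases h : IsUnit (x + (i:ℤ_[p])) <;> simp [h]
  have hfilt : ∏ i ∈ (range M).filter (fun i : ℕ => ¬ IsUnit (x + (i:ℤ_[p]))), (x + (i:ℤ_[p]))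
      = ∏ i ∈ range M, (if ¬ IsUnit (x + (i:ℤ_[p])) then x + (i:ℤ_[p]) else 1) := prod_filter _ _
  have hneg : ∀ i : ℕ, (if ¬ IsUnit (x + (i:ℤ_[p])) then x + (i:ℤ_[p]) else 1)
      = (if IsUnit (x + (i:ℤ_[p])) then 1 else x + (i:ℤ_[p])) := by
    intro i
    by_cases h : IsUnit (x + (i:ℤ_[p])) <;> simp [h]
  rw [G_shift hGv x M hGc, hsplit, hfilt]
  simp_rw [hneg]
  rcases Nat.even_or_odd M with h | h
  · rw [h.neg_one_pow]; ring
  · rw [h.neg_one_pow]; ring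

omit hGc hGv in
lemma Hprod_split (m n : ℕ) (h : m ≤ n) :
    ∏ k ∈ (range n).filter (fun k => ¬ p ∣ k), (k:ℤ_[p])
      = (∏ k ∈ (range m).filter (fun k => ¬ p ∣ k), (k:ℤ_[p])) *
        ∏ k ∈ (Ico m n).filter (fun k => ¬ p ∣ k), (k:ℤ_[p]) := by
  rw [range_eq_Ico, ← Finset.Ico_union_Ico_eq_Ico (Nat.zero_le m) h,
    filter_union, prod_union (disjoint_filter_filter (Finset.Ico_disjoint_Ico_consecutive 0 m n)), range_eq_Ico]

omit hGc hGv in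
lemma block_wilson (m : ℕ) :
    ∏ k ∈ (Ico m (m + p)).filter (fun k => ¬ p ∣ k), ((k : ZMod p)) = -1 := by
  have hp0 : 0 < p := (Fact.out : p.Prime).pos
  haveI : NeZero p := ⟨hp0.ne'⟩
  have : ∏ k ∈ (Ico m (m + p)).filter (fun k => ¬ p ∣ k), ((k : ZMod p))
      = ∏ j ∈ Ico 1 p, ((j : ZMod p)) := by
    refine Finset.prod_nbij' (i := fun k => ((k : ZMod p)).val)
      (j := fun j => m + (((j : ZMod p) - (m : ZMod p)).val)) ?_ ?_ ?_ ?_ ?_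
    · intro k hk
      simp only [mem_filter, mem_Ico] at hk
      obtain ⟨⟨h1, h2⟩, h3⟩ := hk
      rw [mem_Ico]
      constructor
      · rw [Nat.one_le_iff_ne_zero]
        intro h0
        rw [ZMod.val_eq_zero] at h0
        exact h3 ((ZMod.natCast_eq_zero_iff k p).mp h0)
      · exact ZMod.val_lt _
    · intro j hj
      rw [mem_Ico] at hj
      simp only [mem_filter, mem_Ico]
      refine ⟨⟨Nat.le_add_right _ _, by
        have := ZMod.val_lt ((j : ZMod p) - (m : ZMod p))
        omega⟩, ?_⟩
      intro hdvd
      have h0 : ((m + (((j : ZMod p) - (m : ZMod p)).val) : ℕ) : ZMod p) = 0 :=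
        (ZMod.natCast_eq_zero_iff _ p).mpr hdvd
      push_cast at h0
      rw [ZMod.natCast_val, ZMod.cast_id] at h0
      have : ((j : ℕ) : ZMod p) = 0 := by linear_combination h0
      rw [ZMod.natCast_eq_zero_iff] at this
      have := Nat.le_of_dvd (by omega) this
      omega
    · intro k hk
      simp only [mem_filter, mem_Ico] at hk
      obtain ⟨⟨h1, h2⟩, h3⟩ := hk
      have hv : (((((k : ZMod p)).val : ℕ)) : ZMod p) = (k : ZMod p) :=
        ZMod.natCast_rightInverse _
      simp only [hv]
      have hsub : ((k : ZMod p) - (m : ZMod p)) = ((k - m : ℕ) : ZMod p) := by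
        rw [Nat.cast_sub h1]
      rw [hsub, ZMod.val_natCast_of_lt (by omega)]
      omega
    · intro j hj
      rw [mem_Ico] at hj
      push_cast
      rw [ZMod.natCast_val, ZMod.cast_id]
      have : (m : ZMod p) + ((j : ZMod p) - (m : ZMod p)) = (j : ZMod p) := by ring
      rw [this, ZMod.val_natCast_of_lt hj.2]
    · intro k hk
      have hv : (((((k : ZMod p)).val : ℕ)) : ZMod p) = (k : ZMod p) :=
        ZMod.natCast_rightInverse _
      simp only [hv]
  rw [this]
  exact ZMod.prod_Ico_one_prime p

omit hGc hGv in
lemma dvd_norm_le (x : ℤ_[p]) (h : (p:ℤ_[p]) ∣ x) : ‖x‖ ≤ (p:ℝ)⁻¹ := by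
  obtain ⟨y, rfl⟩ := h
  rw [norm_mul, PadicInt.norm_p]
  calc (p:ℝ)⁻¹ * ‖y‖ ≤ (p:ℝ)⁻¹ * 1 :=
        mul_le_mul_of_nonneg_left (PadicInt.norm_le_one _) (by positivity)
  _ = (p:ℝ)⁻¹ := mul_one _

omit hGc in
lemma G_add_p (hp2 : p % 2 = 1) (m : ℕ) : ‖G ↑(m + p) - G ↑m‖ ≤ (p:ℝ)⁻¹ := by
  have key : G ↑(m + p) - G ↑m
      = (-1)^m * (∏ k ∈ (range m).filter (fun k => ¬ p ∣ k), (k:ℤ_[p])) *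
        (-((∏ k ∈ (Ico m (m+p)).filter (fun k => ¬ p ∣ k), (k:ℤ_[p])) + 1)) := by
    rw [hGv, hGv, Hprod_split m (m+p) (Nat.le_add_right _ _), pow_add,
      (Nat.odd_iff.mpr hp2).neg_one_pow]
    ring
  rw [key]
  rw [norm_mul, norm_mul]
  have h1 : ‖((-1:ℤ_[p]))^m‖ = 1 := by
    rcases Nat.even_or_odd m with h | h
    · rw [h.neg_one_pow, norm_one]
    · rw [h.neg_one_pow, norm_neg, norm_one]
  rw [h1, one_mul]
  have h2 : ‖-((∏ k ∈ (Ico m (m+p)).filter (fun k => ¬ p ∣ k), (k:ℤ_[p])) + 1)‖ ≤ (p:ℝ)⁻¹ := by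
    rw [norm_neg]
    apply dvd_norm_le
    rw [← Ideal.mem_span_singleton]
    have hker : RingHom.ker (PadicInt.toZMod (p := p)) = Ideal.span {(p:ℤ_[p])} := by
      rw [PadicInt.ker_toZMod, PadicInt.maximalIdeal_eq_span_p]
    rw [← hker, RingHom.mem_ker, map_add, map_one, map_prod]
    have : ∀ k ∈ (Ico m (m+p)).filter (fun k => ¬ p ∣ k),
        (PadicInt.toZMod ((k:ℕ):ℤ_[p])) = ((k : ZMod p)) := by
      intro k _; exact map_natCast _ k
    rw [Finset.prod_congr rfl this, block_wilson]
    ring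
  calc ‖∏ k ∈ (range m).filter (fun k => ¬ p ∣ k), (k:ℤ_[p])‖ *
        ‖-((∏ k ∈ (Ico m (m+p)).filter (fun k => ¬ p ∣ k), (k:ℤ_[p])) + 1)‖
      ≤ 1 * (p:ℝ)⁻¹ := by
        apply mul_le_mul (PadicInt.norm_le_one _) h2 (norm_nonneg _) zero_le_one
  _ = (p:ℝ)⁻¹ := one_mul _

omit hGc in
lemma G_add_tp (hp2 : p % 2 = 1) (m t : ℕ) : ‖G ↑(m + t * p) - G ↑m‖ ≤ (p:ℝ)⁻¹ := by
  induction t with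
  | zero => simp
  | succ t ih =>
    have hre : m + (t+1) * p = (m + t * p) + p := by ring
    have hsum : G ↑(m + (t+1) * p) - G ↑m
        = (G ↑((m + t*p) + p) - G ↑(m + t*p)) + (G ↑(m + t*p) - G ↑m) := by
      rw [hre]; ring
    rw [hsum]
    exact le_trans (PadicInt.nonarchimedean _ _)
      (max_le (G_add_p hGv hp2 _) ih)

lemma G_lip (hp2 : p % 2 = 1) : ∀ x u : ℤ_[p], ‖G (x + (p:ℤ_[p]) * u) - G x‖ ≤ (p:ℝ)⁻¹ := by
  have stage1 : ∀ t : ℕ, ∀ x : ℤ_[p], ‖G (x + (p:ℤ_[p]) * (t:ℤ_[p])) - G x‖ ≤ (p:ℝ)⁻¹ := by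
    intro t
    apply dense_closed (S := {x : ℤ_[p] | ‖G (x + (p:ℤ_[p]) * (t:ℤ_[p])) - G x‖ ≤ (p:ℝ)⁻¹})
    · exact isClosed_le (continuous_norm.comp
        (((hGc.comp (continuous_add_right _))).sub hGc)) continuous_const
    · intro m
      show ‖G ((m:ℤ_[p]) + (p:ℤ_[p]) * (t:ℤ_[p])) - G ↑m‖ ≤ (p:ℝ)⁻¹
      have : (m:ℤ_[p]) + (p:ℤ_[p]) * (t:ℤ_[p]) = ((m + t * p : ℕ) : ℤ_[p]) := by push_cast; ring
      rw [this]
      exact G_add_tp hGv hp2 m t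
  intro x
  apply dense_closed (S := {u : ℤ_[p] | ‖G (x + (p:ℤ_[p]) * u) - G x‖ ≤ (p:ℝ)⁻¹})
  · exact isClosed_le (continuous_norm.comp
      ((hGc.comp (continuous_const.add (continuous_const.mul continuous_id))).sub
        continuous_const)) continuous_const
  · intro t
    exact stage1 t x

lemma phi_sq : ∀ x : ℤ_[p], (G x * G (1 - x))^2 = 1 := by
  have step : ∀ x : ℤ_[p], (G (x+1) * G (1 - (x+1)))^2 = (G x * G (1 - x))^2 := by
    intro x
    have h1 : (1 : ℤ_[p]) - (x+1) = -x := by ring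
    have h2 : (1 : ℤ_[p]) - x = -x + 1 := by ring
    rw [h1, h2]
    by_cases h : IsUnit x
    · rw [G_step_unit hGc hGv x h, G_step_unit hGc hGv (-x) h.neg]
      ring
    · rw [G_step_nonunit hGc hGv x h, G_step_nonunit hGc hGv (-x) (fun hc => h (by simpa using hc.neg))]
      ring
  have hnat : ∀ n : ℕ, (G (n:ℤ_[p]) * G (1 - (n:ℤ_[p])))^2 = 1 := by
    intro n
    induction n with
    | zero =>
      have h0 : G (0:ℤ_[p]) = 1 := by
        have := hGv 0
        simpa using this
      have h1 : G (1:ℤ_[p]) = -1 := by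
        have := hGv 1
        simpa [Finset.filter_singleton] using this
      norm_num [h0, h1]
    | succ n ih =>
      have hcast : ((n+1 : ℕ) : ℤ_[p]) = (n:ℤ_[p]) + 1 := by push_cast; ring
      rw [hcast, step]
      exact ih
  apply dense_closed (S := {x : ℤ_[p] | (G x * G (1 - x))^2 = 1})
  · exact isClosed_eq (Continuous.pow (hGc.mul (hGc.comp (continuous_const.sub continuous_id))) 2)
      continuous_const
  · exact hnat

-- ====== piece 5: expansion estimates, harmonic sums, symmetric congruence ======

omit hGc hGv in
lemma prod_add_sub_le {α : Type} (S : Finset α) (f : α → ℤ_[p]) (a : ℤ_[p]) :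
    ‖(∏ k ∈ S, (f k + a)) - ∏ k ∈ S, f k‖ ≤ ‖a‖ := by
  classical
  induction S using Finset.induction with
  | empty => simpa using norm_nonneg a
  | @insert j S hjS ih =>
    rw [prod_insert hjS, prod_insert hjS]
    have hre : (f j + a) * (∏ k ∈ S, (f k + a)) - f j * ∏ k ∈ S, f k
        = f j * ((∏ k ∈ S, (f k + a)) - ∏ k ∈ S, f k) + a * (∏ k ∈ S, (f k + a)) := by
      ring
    rw [hre]
    refine le_trans (PadicInt.nonarchimedean _ _) (max_le ?_ ?_)
    · rw [norm_mul]
      calc ‖f j‖ * ‖(∏ k ∈ S, (f k + a)) - ∏ k ∈ S, f k‖ ≤ 1 * ‖a‖ :=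
            mul_le_mul (PadicInt.norm_le_one _) ih (norm_nonneg _) zero_le_one
      _ = ‖a‖ := one_mul _
    · rw [norm_mul]
      calc ‖a‖ * ‖∏ k ∈ S, (f k + a)‖ ≤ ‖a‖ * 1 :=
            mul_le_mul_of_nonneg_left (PadicInt.norm_le_one _) (norm_nonneg _)
      _ = ‖a‖ := mul_one _

omit hGc hGv in
lemma prod_add_expand {α : Type} [DecidableEq α] (S : Finset α) (f : α → ℤ_[p]) (a : ℤ_[p]) :
    ‖(∏ k ∈ S, (f k + a)) - (∏ k ∈ S, f k) - a * ∑ j ∈ S, ∏ k ∈ S.erase j, f k‖ ≤ ‖a‖^2 := by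
  induction S using Finset.induction with
  | empty => simpa using sq_nonneg ‖a‖
  | @insert j S hjS ih =>
    have hsum : ∑ j' ∈ insert j S, ∏ k ∈ (insert j S).erase j', f k
        = (∏ k ∈ S, f k) + f j * ∑ j' ∈ S, ∏ k ∈ S.erase j', f k := by
      rw [Finset.sum_insert hjS, Finset.erase_insert hjS]
      congr 1
      rw [Finset.mul_sum]
      apply Finset.sum_congr rfl
      intro j' hj'
      have hne : j ≠ j' := fun h => hjS (h ▸ hj')
      rw [Finset.erase_insert_of_ne hne, Finset.prod_insert (fun hc => hjS (Finset.erase_subset _ _ hc))]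
    rw [prod_insert hjS, prod_insert hjS, hsum]
    have hre : (f j + a) * (∏ k ∈ S, (f k + a)) - f j * ∏ k ∈ S, f k
          - a * ((∏ k ∈ S, f k) + f j * ∑ j' ∈ S, ∏ k ∈ S.erase j', f k)
        = f j * ((∏ k ∈ S, (f k + a)) - (∏ k ∈ S, f k) - a * ∑ j' ∈ S, ∏ k ∈ S.erase j', f k)
          + a * ((∏ k ∈ S, (f k + a)) - ∏ k ∈ S, f k) := by
      ring
    rw [hre]
    refine le_trans (PadicInt.nonarchimedean _ _) (max_le ?_ ?_)
    · rw [norm_mul]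
      calc ‖f j‖ * ‖(∏ k ∈ S, (f k + a)) - (∏ k ∈ S, f k) - a * ∑ j' ∈ S, ∏ k ∈ S.erase j', f k‖
          ≤ 1 * ‖a‖^2 := mul_le_mul (PadicInt.norm_le_one _) ih (norm_nonneg _) zero_le_one
      _ = ‖a‖^2 := one_mul _
    · rw [norm_mul, sq]
      exact mul_le_mul_of_nonneg_left (prod_add_sub_le S f a) (norm_nonneg _)

omit hGc hGv in
lemma sum_erase_union {β : Type} [CommRing β] (S₁ S₂ : Finset ℕ) (hd : Disjoint S₁ S₂)
    (f : ℕ → β) :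
    ∑ j ∈ S₁ ∪ S₂, ∏ k ∈ (S₁ ∪ S₂).erase j, f k
      = (∏ k ∈ S₂, f k) * ∑ j ∈ S₁, ∏ k ∈ S₁.erase j, f k
        + (∏ k ∈ S₁, f k) * ∑ j ∈ S₂, ∏ k ∈ S₂.erase j, f k := by
  classical
  rw [Finset.sum_union hd, Finset.mul_sum, Finset.mul_sum]
  congr 1
  · apply Finset.sum_congr rfl
    intro j hj
    rw [Finset.erase_union_distrib, Finset.erase_eq_of_notMem (Finset.disjoint_left.mp hd hj),
      Finset.prod_union (Finset.disjoint_of_subset_left (Finset.erase_subset _ _) hd)]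
    ring
  · apply Finset.sum_congr rfl
    intro j hj
    rw [Finset.erase_union_distrib, Finset.erase_eq_of_notMem (Finset.disjoint_right.mp hd hj),
      Finset.prod_union (Finset.disjoint_of_subset_right (Finset.erase_subset _ _) hd)]

omit hGc hGv in
lemma block_sum_zero (r : ℕ) (hr : 0 < r) (hp2 : ¬ p ∣ 2) (m : ℕ) :
    ∑ j ∈ (Ico m (m + p^r)).filter (fun k => ¬ p ∣ k),
      ∏ k ∈ ((Ico m (m + p^r)).filter (fun k => ¬ p ∣ k)).erase j, ((k : ZMod (p^r)))
      = 0 := by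
  have hp : p.Prime := Fact.out
  have hT0 : 0 < p^r := pow_pos hp.pos r
  haveI : NeZero (p^r) := ⟨hT0.ne'⟩
  set S := (Ico m (m + p^r)).filter (fun k => ¬ p ∣ k) with hS
  have hcastHom : ∀ n : ℕ, ¬ p ∣ n ↔ ((n : ZMod p) ≠ 0) := by
    intro n
    rw [Ne, ZMod.natCast_eq_zero_iff]
  have hmemchar : ∀ j, j ∈ S ↔ (m ≤ j ∧ j < m + p^r ∧ ¬ p ∣ j) := by
    intro j
    rw [hS, mem_filter, mem_Ico]
    tauto
  -- the involution
  set σ : ℕ → ℕ := fun j => m + ((-(j : ZMod (p^r)) - (m : ZMod (p^r))).val) with hσ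
  have hσcast : ∀ j : ℕ, ((σ j : ℕ) : ZMod (p^r)) = -(j : ZMod (p^r)) := by
    intro j
    rw [hσ]
    push_cast
    rw [ZMod.natCast_val, ZMod.cast_id]
    ring
  have hσdvd : ∀ j : ℕ, ¬ p ∣ j → ¬ p ∣ σ j := by
    intro j hj hc
    have h1 : ((σ j : ℕ) : ZMod p) = 0 := (ZMod.natCast_eq_zero_iff _ p).mpr hc
    have h2 : ((σ j : ℕ) : ZMod p) = ZMod.castHom (dvd_pow_self p hr.ne') (ZMod p) (((σ j : ℕ)) : ZMod (p^r)) := by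
      rw [map_natCast]
    rw [hσcast, map_neg, map_natCast] at h2
    rw [h2] at h1
    have : ((j : ℕ) : ZMod p) = 0 := by linear_combination -h1
    exact hj ((ZMod.natCast_eq_zero_iff _ p).mp this)
  have hσmem : ∀ j ∈ S, σ j ∈ S := by
    intro j hj
    rw [hmemchar] at hj ⊢
    refine ⟨?_, ?_, hσdvd j hj.2.2⟩
    · show m ≤ m + (-(j : ZMod (p^r)) - (m : ZMod (p^r))).val
      exact Nat.le_add_right _ _
    · show m + (-(j : ZMod (p^r)) - (m : ZMod (p^r))).val < m + p^r
      have := ZMod.val_lt (-(j : ZMod (p^r)) - (m : ZMod (p^r)))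
      omega
  have hσσ : ∀ j ∈ S, σ (σ j) = j := by
    intro j hj
    rw [hmemchar] at hj
    obtain ⟨h1, h2, h3⟩ := hj
    have : -((σ j : ℕ) : ZMod (p^r)) - (m : ZMod (p^r)) = ((j - m : ℕ) : ZMod (p^r)) := by
      rw [hσcast, Nat.cast_sub h1]
      ring
    show m + (-((σ j : ℕ) : ZMod (p^r)) - (m : ZMod (p^r))).val = j
    rw [this, ZMod.val_natCast_of_lt (by omega)]
    omega
  have hσne : ∀ j ∈ S, σ j ≠ j := by
    intro j hj heq
    rw [hmemchar] at hj
    have h1 : ((σ j : ℕ) : ZMod (p^r)) = ((j : ℕ) : ZMod (p^r)) := by rw [heq]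
    rw [hσcast] at h1
    have h2 : ((2 * j : ℕ) : ZMod (p^r)) = 0 := by push_cast; linear_combination -h1
    rw [ZMod.natCast_eq_zero_iff] at h2
    have h3 : p ∣ 2 * j := dvd_trans (dvd_pow_self p hr.ne') h2
    rcases (Nat.Prime.dvd_mul hp).mp h3 with h | h
    · exact hp2 h
    · exact hj.2.2 h
  have hunit : ∀ j ∈ S, IsUnit ((j : ZMod (p^r))) := by
    intro j hj
    rw [hmemchar] at hj
    rw [ZMod.isUnit_iff_coprime]
    exact Nat.Coprime.pow_right r
      (Nat.Coprime.symm ((Nat.Prime.coprime_iff_not_dvd hp).mpr hj.2.2))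
  apply Finset.sum_involution (g := fun j _ => σ j)
  · intro j hj
    have hju := hunit j hj
    have hσu := hunit (σ j) (hσmem j hj)
    apply (hju.mul hσu).mul_left_cancel
    have e1 : (j : ZMod (p^r)) * ∏ k ∈ S.erase j, ((k : ZMod (p^r))) = ∏ k ∈ S, ((k : ZMod (p^r))) :=
      Finset.mul_prod_erase S _ hj
    have e2 : ((σ j : ℕ) : ZMod (p^r)) * ∏ k ∈ S.erase (σ j), ((k : ZMod (p^r)))
        = ∏ k ∈ S, ((k : ZMod (p^r))) := Finset.mul_prod_erase S _ (hσmem j hj)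
    calc (j : ZMod (p^r)) * ((σ j : ℕ) : ZMod (p^r)) *
          ((∏ k ∈ S.erase j, ((k : ZMod (p^r)))) + ∏ k ∈ S.erase (σ j), ((k : ZMod (p^r))))
        = ((σ j : ℕ) : ZMod (p^r)) * ((j : ZMod (p^r)) * ∏ k ∈ S.erase j, ((k : ZMod (p^r))))
          + (j : ZMod (p^r)) * (((σ j : ℕ) : ZMod (p^r)) * ∏ k ∈ S.erase (σ j), ((k : ZMod (p^r)))) := by
          ring
    _ = (((σ j : ℕ) : ZMod (p^r)) + (j : ZMod (p^r))) * ∏ k ∈ S, ((k : ZMod (p^r))) := by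
          rw [e1, e2]; ring
    _ = 0 := by rw [hσcast]; ring
    _ = (j : ZMod (p^r)) * ((σ j : ℕ) : ZMod (p^r)) * 0 := by ring
  · intro j hj _
    exact hσne j hj
  · exact hσmem
  · exact hσσ

omit hGc hGv in
lemma harmonic_zero (r : ℕ) (hr : 0 < r) (hp2 : ¬ p ∣ 2) :
    ∀ (c m : ℕ),
    ∑ j ∈ (Ico m (m + p^r * c)).filter (fun k => ¬ p ∣ k),
      ∏ k ∈ ((Ico m (m + p^r * c)).filter (fun k => ¬ p ∣ k)).erase j, ((k : ZMod (p^r)))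
      = 0 := by
  intro c
  induction c with
  | zero => simp
  | succ c ih =>
    intro m
    have hsplit : Ico m (m + p^r * (c+1)) = Ico m (m + p^r) ∪ Ico (m + p^r) ((m + p^r) + p^r * c) := by
      rw [Finset.Ico_union_Ico_eq_Ico (Nat.le_add_right _ _) (by omega)]
      congr 1
      ring
    rw [hsplit, filter_union,
      sum_erase_union _ _ (disjoint_filter_filter (Finset.Ico_disjoint_Ico_consecutive _ _ _)),
      block_sum_zero r hr hp2 m, ih (m + p^r)]
    ring

omit hGc hGv in
lemma harmonic_norm (r : ℕ) (hr : 0 < r) (hp2 : ¬ p ∣ 2) (c m : ℕ) :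
    ‖∑ j ∈ (Ico m (m + p^r * c)).filter (fun k => ¬ p ∣ k),
      ∏ k ∈ ((Ico m (m + p^r * c)).filter (fun k => ¬ p ∣ k)).erase j, (k : ℤ_[p])‖
      ≤ (p:ℝ)^(-(r:ℤ)) := by
  rw [PadicInt.norm_le_pow_iff_mem_span_pow, ← PadicInt.ker_toZModPow, RingHom.mem_ker,
    map_sum]
  have : ∀ j ∈ (Ico m (m + p^r * c)).filter (fun k => ¬ p ∣ k),
      (PadicInt.toZModPow r) (∏ k ∈ ((Ico m (m + p^r * c)).filter (fun k => ¬ p ∣ k)).erase j, (k : ℤ_[p]))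
      = ∏ k ∈ ((Ico m (m + p^r * c)).filter (fun k => ¬ p ∣ k)).erase j, ((k : ZMod (p^r))) := by
    intro j _
    rw [map_prod]
    apply Finset.prod_congr rfl
    intro k _
    exact map_natCast _ k
  rw [Finset.sum_congr rfl this]
  exact harmonic_zero r hr hp2 c m

omit hGc hGv in
lemma interval_shift (n a : ℕ) (han : a ≤ n) (hpa : p ∣ a) :
    ∏ k ∈ (Ico n (n + a)).filter (fun k => ¬ p ∣ k), (k : ℤ_[p])
      = ∏ k ∈ (Ico (n - a) n).filter (fun k => ¬ p ∣ k), ((k : ℤ_[p]) + (a : ℤ_[p])) := by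
  refine Finset.prod_nbij' (i := fun k => k - a) (j := fun k => k + a) ?_ ?_ ?_ ?_ ?_
  · intro k hk
    simp only [mem_filter, mem_Ico] at hk ⊢
    refine ⟨by omega, ?_⟩
    intro hc
    have : p ∣ k := by
      have h2 : k = (k - a) + a := by omega
      rw [h2]
      exact Nat.dvd_add hc hpa
    exact hk.2 this
  · intro k hk
    simp only [mem_filter, mem_Ico] at hk ⊢
    refine ⟨by omega, ?_⟩
    intro hc
    exact hk.2 (by simpa using Nat.dvd_sub hc hpa)
  · intro k hk
    simp only [mem_filter, mem_Ico] at hk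
    show k - a + a = k
    omega
  · intro k hk
    simp only [mem_filter, mem_Ico] at hk
    show k + a - a = k
    omega
  · intro k hk
    simp only [mem_filter, mem_Ico] at hk
    have : ((k - a : ℕ) : ℤ_[p]) = (k : ℤ_[p]) - (a : ℤ_[p]) := by
      rw [Nat.cast_sub (by omega)]
    rw [this]
    ring

-- ====== piece 6: the symmetric congruence and its extension to ℤ_p ======

omit hGc in
lemma C_nat (r : ℕ) (hr : 0 < r) (hp2 : ¬ p ∣ 2) (c b : ℕ) :
    ‖G ↑(b + p^r*c + p^r*c) * G ↑b - (G ↑(b + p^r*c))^2‖ ≤ (p:ℝ)^(-(2*(r:ℤ))) := by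
  have hp : p.Prime := Fact.out
  have hp0 : (0:ℝ) < p := by exact_mod_cast hp.pos
  have hpa : p ∣ p^r*c := dvd_mul_of_dvd_left (dvd_pow_self p hr.ne') c
  have e1 := Hprod_split (p := p) (b + p^r*c) (b + p^r*c + p^r*c) (by omega)
  have e2 := Hprod_split (p := p) b (b + p^r*c) (by omega)
  have e3 : ∏ k ∈ (Ico (b+p^r*c) (b+p^r*c+p^r*c)).filter (fun k => ¬ p ∣ k), (k : ℤ_[p])
      = ∏ k ∈ (Ico b (b+p^r*c)).filter (fun k => ¬ p ∣ k), ((k : ℤ_[p]) + ((p^r*c : ℕ) : ℤ_[p])) := by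
    have := interval_shift (p := p) (b+p^r*c) (p^r*c) (by omega) hpa
    rw [Nat.add_sub_cancel] at this
    exact this
  rw [e3] at e1
  have hs : ((-1:ℤ_[p]))^(b+p^r*c+p^r*c) * (-1)^b = (((-1:ℤ_[p]))^(b+p^r*c))^2 := by
    rw [← pow_add, ← pow_mul]
    congr 1
    omega
  have hv : (((-1:ℤ_[p]))^(b+p^r*c))^2 = 1 := by
    rw [← pow_mul, mul_comm (b+p^r*c) 2, pow_mul]
    norm_num
  set S := (Ico b (b+p^r*c)).filter (fun k => ¬ p ∣ k) with hS
  set Pm := ∏ k ∈ S, (k : ℤ_[p]) with hPm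
  set Pp := ∏ k ∈ S, ((k : ℤ_[p]) + ((p^r*c : ℕ) : ℤ_[p])) with hPp
  set Fb := ∏ k ∈ (range b).filter (fun k => ¬ p ∣ k), (k : ℤ_[p]) with hFb
  have key : G ↑(b + p^r*c + p^r*c) * G ↑b - (G ↑(b + p^r*c))^2
      = Fb^2 * Pm * (Pp - Pm) := by
    rw [hGv, hGv, hGv, e1, e2]
    linear_combination (Fb^2*Pm*Pp) * hs + (Fb^2*Pm*Pp - Fb^2*Pm^2) * hv
  rw [key]
  have hbound : ‖Pp - Pm‖ ≤ (p:ℝ)^(-(2*(r:ℤ))) := by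
    have hD := prod_add_expand (p := p) S (fun k => (k:ℤ_[p])) ((p^r*c : ℕ) : ℤ_[p])
    have hSig := harmonic_norm (p := p) r hr hp2 c b
    have hna : ‖((p^r*c : ℕ) : ℤ_[p])‖ ≤ (p:ℝ)^(-(r:ℤ)) := by
      push_cast
      rw [norm_mul, PadicInt.norm_p_pow]
      calc (p:ℝ)^(-(r:ℤ)) * ‖((c:ℕ):ℤ_[p])‖ ≤ (p:ℝ)^(-(r:ℤ)) * 1 :=
            mul_le_mul_of_nonneg_left (PadicInt.norm_le_one _) (by positivity)
      _ = (p:ℝ)^(-(r:ℤ)) := mul_one _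
    have hmul : (p:ℝ)^(-(r:ℤ)) * (p:ℝ)^(-(r:ℤ)) = (p:ℝ)^(-(2*(r:ℤ))) := by
      rw [← zpow_add₀ (ne_of_gt hp0)]
      congr 1
      ring
    have hsplit2 : Pp - Pm
        = (Pp - Pm - ((p^r*c : ℕ) : ℤ_[p]) * ∑ j ∈ S, ∏ k ∈ S.erase j, (k:ℤ_[p]))
          + ((p^r*c : ℕ) : ℤ_[p]) * ∑ j ∈ S, ∏ k ∈ S.erase j, (k:ℤ_[p]) := by ring
    rw [hsplit2]
    refine le_trans (PadicInt.nonarchimedean _ _) (max_le ?_ ?_)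
    · refine le_trans hD ?_
      calc ‖((p^r*c : ℕ) : ℤ_[p])‖^2 ≤ ((p:ℝ)^(-(r:ℤ)))^2 :=
            pow_le_pow_left₀ (norm_nonneg _) hna 2
      _ = (p:ℝ)^(-(2*(r:ℤ))) := by rw [sq, hmul]
    · rw [norm_mul]
      calc ‖((p^r*c : ℕ) : ℤ_[p])‖ * ‖∑ j ∈ S, ∏ k ∈ S.erase j, (k:ℤ_[p])‖
          ≤ (p:ℝ)^(-(r:ℤ)) * (p:ℝ)^(-(r:ℤ)) :=
            mul_le_mul hna hSig (norm_nonneg _) (by positivity)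
      _ = (p:ℝ)^(-(2*(r:ℤ))) := hmul
  calc ‖Fb^2 * Pm * (Pp - Pm)‖ = ‖Fb^2 * Pm‖ * ‖Pp - Pm‖ := norm_mul _ _
  _ ≤ 1 * ‖Pp - Pm‖ := mul_le_mul_of_nonneg_right (PadicInt.norm_le_one _) (norm_nonneg _)
  _ = ‖Pp - Pm‖ := one_mul _
  _ ≤ (p:ℝ)^(-(2*(r:ℤ))) := hbound

lemma C_ext (r : ℕ) (hr : 0 < r) (hp2 : ¬ p ∣ 2) (x u : ℤ_[p]) :
    ‖G (x + (p:ℤ_[p])^r * u) * G (x - (p:ℤ_[p])^r * u) - (G x)^2‖ ≤ (p:ℝ)^(-(2*(r:ℤ))) := by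
  have stage1 : ∀ c : ℕ, ∀ y : ℤ_[p],
      ‖G (y + (p:ℤ_[p])^r * ((c:ℕ):ℤ_[p])) * G (y - (p:ℤ_[p])^r * ((c:ℕ):ℤ_[p])) - (G y)^2‖
        ≤ (p:ℝ)^(-(2*(r:ℤ))) := by
    intro c
    apply dense_closed_ge (K := p^r * c)
    · refine isClosed_le (continuous_norm.comp ?_) continuous_const
      exact (((hGc.comp (continuous_add_right _))).mul (hGc.comp (continuous_sub_right _))).sub
        (hGc.pow 2)
    · intro n hn
      have h1 : (n:ℤ_[p]) + (p:ℤ_[p])^r * ((c:ℕ):ℤ_[p]) = ((n - p^r*c + p^r*c + p^r*c : ℕ) : ℤ_[p]) := by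
        have he : n - p^r*c + p^r*c + p^r*c = n + p^r*c := by omega
        rw [he]
        push_cast
        ring
      have h2 : (n:ℤ_[p]) - (p:ℤ_[p])^r * ((c:ℕ):ℤ_[p]) = ((n - p^r*c : ℕ) : ℤ_[p]) := by
        rw [Nat.cast_sub hn]
        push_cast
        ring
      have h3 : ((n:ℕ):ℤ_[p]) = ((n - p^r*c + p^r*c : ℕ):ℤ_[p]) := by
        congr 1
        omega
      show ‖G ((n:ℤ_[p]) + (p:ℤ_[p])^r * ((c:ℕ):ℤ_[p])) * G ((n:ℤ_[p]) - (p:ℤ_[p])^r * ((c:ℕ):ℤ_[p]))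
          - (G (n:ℤ_[p]))^2‖ ≤ (p:ℝ)^(-(2*(r:ℤ)))
      rw [h1, h2, h3]
      exact C_nat hGv r hr hp2 c (n - p^r*c)
  apply dense_closed
    (S := {u : ℤ_[p] | ‖G (x + (p:ℤ_[p])^r * u) * G (x - (p:ℤ_[p])^r * u) - (G x)^2‖
      ≤ (p:ℝ)^(-(2*(r:ℤ)))})
  · refine isClosed_le (continuous_norm.comp ?_) continuous_const
    exact ((hGc.comp (continuous_const.add (continuous_const.mul continuous_id))).mul
      (hGc.comp (continuous_const.sub (continuous_const.mul continuous_id)))).sub continuous_const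
  · intro c
    exact stage1 c x

end Stmt4Aux

attribute [local instance] Classical.propDecidable

open Stmt4Aux in
/-- for a prime `p ≡ 1 (mod 4)` and `r ≥ 1`, with `Γₚ` Morita's p-adic
Gamma function (characterized as the continuous function on `ℤ_p` with
`Γₚ(n) = (-1)^n ∏_{0<k<n, p∤k} k`), one has
`p·(3/4)_{(p^r-1)/2}(5/4)_{(p^{r-1}-1)/2}/((5/4)_{(p^r-1)/2}(3/4)_{(p^{r-1}-1)/2})
  ≡ -Γₚ(1/4)^4 (mod p^{2r})`. -/
theorem stmt4 (p : ℕ) [Fact p.Prime] (hp4 : p % 4 = 1) (r : ℕ) (hr : 0 < r)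
    (G : ℤ_[p] → ℤ_[p]) (hGcont : Continuous G)
    (hGval : ∀ n : ℕ, G n =
      (-1) ^ n * ∏ k ∈ (Finset.range n).filter (fun k => ¬ p ∣ k), (k : ℤ_[p]))
    (quarter : ℤ_[p]) (hquarter : 4 * quarter = 1) :
    ‖(p : ℚ_[p]) * asc (3/4) ((p ^ r - 1) / 2) * asc (5/4) ((p ^ (r - 1) - 1) / 2)
        / (asc (5/4) ((p ^ r - 1) / 2) * asc (3/4) ((p ^ (r - 1) - 1) / 2))
      - (-(G quarter : ℚ_[p]) ^ 4)‖ ≤ (p : ℝ) ^ (-(2 * r : ℤ)) := by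
  have hp : p.Prime := Fact.out
  obtain ⟨r', rfl⟩ : ∃ r', r = r' + 1 := ⟨r - 1, by omega⟩
  obtain ⟨t, hp4t⟩ : ∃ t, p = 4*t+1 := ⟨p/4, by omega⟩
  have ht1 : 1 ≤ t := by have := hp.two_le; omega
  have hp5 : 5 ≤ p := by omega
  have hp2 : ¬ p ∣ 2 := fun h => by have := Nat.le_of_dvd (by norm_num) h; omega
  have hp2' : p % 2 = 1 := by omega
  set q := quarter with hqdef
  simp only [Nat.add_sub_cancel]
  set M := (p ^ (r'+1) - 1) / 2 with hMdef
  set N := (p ^ r' - 1) / 2 with hNdef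
  -- numeric facts
  have hoddM : p^(r'+1) % 2 = 1 := Nat.odd_iff.mp ((Nat.odd_iff.mpr hp2').pow)
  have hoddN : p^r' % 2 = 1 := Nat.odd_iff.mp ((Nat.odd_iff.mpr hp2').pow)
  have hppow : p^(r'+1) = p * p^r' := by ring
  have hM : 2*M + 1 = p * p^r' := by rw [hMdef]; omega
  have hN : 2*N + 1 = p^r' := by rw [hNdef]; omega
  -- ℤ_p constants
  have hqunit : IsUnit q := IsUnit.of_mul_eq_one 4 (by linear_combination hquarter)
  have hMc : 2*(M:ℤ_[p]) + 1 = (p:ℤ_[p])^(r'+1) := by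
    have hcast := congrArg (Nat.cast : ℕ → ℤ_[p]) hM
    push_cast at hcast
    rw [pow_succ]
    linear_combination hcast
  set hh : ℤ_[p] := (p:ℤ_[p])^(r'+1) * (2*q) with hhdef
  have I1 : (1 - q) + (M:ℤ_[p]) = q + hh := by
    rw [hhdef]
    linear_combination (2*q)*hMc + (-(1:ℤ_[p]) - (M:ℤ_[p]))*hquarter
  have I2 : (1 + q) + (M:ℤ_[p]) = (1 - q) + hh := by
    rw [hhdef]
    linear_combination (2*q)*hMc + (-(M:ℤ_[p]))*hquarter
  -- J identities in ℤ_p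
  have hJ3 : (∏ i ∈ Finset.range M, ((1 - q) + (i:ℤ_[p]))) * G (1-q)
      = (-1)^M * G (q + hh) * ((p:ℤ_[p])^N * ∏ j ∈ Finset.range N, ((1 - q) + (j:ℤ_[p]))) := by
    have e := asc_split hGval (1-q) M hGcont
    rw [I1] at e
    rw [bad3 q hquarter t (p^r') M N hp4t ht1 hM hN] at e
    rw [Finset.prod_mul_distrib, Finset.prod_const, Finset.card_range] at e
    exact e
  have hJ5 : (∏ i ∈ Finset.range M, ((1 + q) + (i:ℤ_[p]))) * G (1+q)
      = (-1)^M * G ((1-q) + hh) *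
        (((p:ℤ_[p])^N * ∏ j ∈ Finset.range N, ((1 + q) + (j:ℤ_[p]))) * ((p:ℤ_[p]) * q)) := by
    have e := asc_split hGval (1+q) M hGcont
    rw [I2] at e
    rw [bad5 q hquarter t (p^r') M N hp4t ht1 hM hN] at e
    rw [Finset.prod_range_succ'] at e
    have hsh : (∏ j ∈ Finset.range N, ((p:ℤ_[p]) * (q + ((j+1 : ℕ):ℤ_[p]))))
        = ∏ j ∈ Finset.range N, ((p:ℤ_[p]) * ((1+q) + (j:ℤ_[p]))) :=
      Finset.prod_congr rfl (fun j _ => by push_cast; ring)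
    rw [hsh] at e
    have h0 : q + ((0:ℕ):ℤ_[p]) = q := by norm_num
    rw [h0] at e
    rw [Finset.prod_mul_distrib, Finset.prod_const, Finset.card_range] at e
    exact e
  have hfunq : G (1 + q) = -q * G q := by
    have h1q : (1:ℤ_[p]) + q = q + 1 := by ring
    rw [h1q]
    exact G_step_unit hGcont hGval q hqunit
  -- reflection
  have hphi := phi_sq hGcont hGval
  have hGnorm := G_isUnit hGcont hGval
  have hrefl : G (q - hh) * G ((1 - q) + hh) = G q * G (1 - q) := by
    have hsq1 := hphi q
    have hsq2 := hphi (q - hh)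
    have h1 : (1:ℤ_[p]) - (q - hh) = (1 - q) + hh := by ring
    rw [h1] at hsq2
    have hpinv1 : (p:ℝ)⁻¹ < 1 := by
      rw [inv_lt_one_iff₀]
      right
      exact_mod_cast hp.one_lt
    have hlip1 : ‖G (q - hh) - G q‖ ≤ (p:ℝ)⁻¹ := by
      have hl := G_lip hGcont hGval hp2' (q - hh) ((p:ℤ_[p])^r' * (2*q))
      have harg : (q - hh) + (p:ℤ_[p]) * ((p:ℤ_[p])^r' * (2*q)) = q := by
        rw [hhdef]; ring
      rw [harg] at hl
      rw [norm_sub_rev]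
      exact hl
    have hlip2 : ‖G ((1-q)+hh) - G (1-q)‖ ≤ (p:ℝ)⁻¹ := by
      have hl := G_lip hGcont hGval hp2' (1-q) ((p:ℤ_[p])^r' * (2*q))
      have harg : (1-q) + (p:ℤ_[p]) * ((p:ℤ_[p])^r' * (2*q)) = (1-q) + hh := by
        rw [hhdef]; ring
      rw [harg] at hl
      exact hl
    have hdiff : ‖G (q-hh) * G ((1-q)+hh) - G q * G (1-q)‖ < 1 := by
      have hid : G (q-hh) * G ((1-q)+hh) - G q * G (1-q)
          = (G (q-hh) - G q) * G ((1-q)+hh) + G q * (G ((1-q)+hh) - G (1-q)) := by ring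
      rw [hid]
      refine lt_of_le_of_lt (PadicInt.nonarchimedean _ _) (max_lt ?_ ?_)
      · rw [norm_mul, hGnorm, mul_one]
        exact lt_of_le_of_lt hlip1 hpinv1
      · rw [norm_mul, hGnorm, one_mul]
        exact lt_of_le_of_lt hlip2 hpinv1
    have hfac : (G (q-hh) * G ((1-q)+hh) - G q * G (1-q)) *
        (G (q-hh) * G ((1-q)+hh) + G q * G (1-q)) = 0 := by
      linear_combination hsq2 - hsq1
    rcases mul_eq_zero.mp hfac with h | h
    · exact sub_eq_zero.mp h
    · exfalso
      have hneg : G (q-hh) * G ((1-q)+hh) - G q * G (1-q)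
          = -((2:ℕ):ℤ_[p]) * (G q * G (1-q)) := by
        push_cast
        linear_combination h
      rw [hneg, norm_mul, norm_neg, norm_mul, hGnorm, hGnorm,
        PadicInt.isUnit_iff.mp (isUnit_nat_iff.mpr hp2)] at hdiff
      norm_num at hdiff
  -- symmetric congruence
  have hsym : ‖G (q + hh) * G (q - hh) - (G q)^2‖ ≤ (p:ℝ)^(-(2*((r'+1:ℕ):ℤ))) := by
    have hc := C_ext hGcont hGval (r'+1) (Nat.succ_pos r') hp2 q (2*q)
    rw [hhdef]
    exact hc
  -- numerator bound in ℤ_p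
  have hnumZ : ‖(G q)^4 * (G (1-q) * G ((1-q)+hh)) - G q * G (q+hh)‖
      ≤ (p:ℝ)^(-(2*((r'+1:ℕ):ℤ))) := by
    have hid : ((G q)^4 * (G (1-q) * G ((1-q)+hh)) - G q * G (q+hh)) * (G (q-hh) * G q)
        = -((G q)^2) * (G (q+hh) * G (q-hh) - (G q)^2) := by
      linear_combination ((G q)^5 * G (1-q)) * hrefl + (G q)^4 * (hphi q)
    have h1 : ‖(G q)^4 * (G (1-q) * G ((1-q)+hh)) - G q * G (q+hh)‖
        = ‖((G q)^4 * (G (1-q) * G ((1-q)+hh)) - G q * G (q+hh)) * (G (q-hh) * G q)‖ := by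
      rw [norm_mul, norm_mul, hGnorm, hGnorm]
      ring
    rw [h1, hid, norm_mul]
    have h2 : ‖-((G q)^2)‖ = 1 := by
      rw [norm_neg, sq, norm_mul, hGnorm]
      norm_num
    rw [h2, one_mul]
    exact hsym
  -- pass to ℚ_p
  set C : ℤ_[p] →+* ℚ_[p] := PadicInt.Coe.ringHom with hCdef
  have hCcoe : ∀ z : ℤ_[p], C z = (z : ℚ_[p]) := fun _ => rfl
  have hCnorm : ∀ z : ℤ_[p], ‖C z‖ = ‖z‖ := fun z => PadicInt.padic_norm_e_of_padicInt z
  have hGne : ∀ z : ℤ_[p], C (G z) ≠ 0 := by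
    intro z
    rw [← norm_ne_zero_iff, hCnorm, hGnorm]
    norm_num
  have h4q : (4:ℚ_[p]) * C q = 1 := by
    have hc := congrArg C hquarter
    rw [map_mul, map_one] at hc
    have h4 : C (4:ℤ_[p]) = (4:ℚ_[p]) := by
      rw [show ((4:ℤ_[p])) = ((4:ℕ):ℤ_[p]) by norm_num, map_natCast]
      norm_num
    rw [h4] at hc
    exact hc
  have hCqne : C q ≠ 0 := by
    intro h0
    rw [h0, mul_zero] at h4q
    exact zero_ne_one h4q
  have hq34 : ((3:ℚ_[p])/4) = C (1 - q) := by
    rw [map_sub, map_one]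
    linear_combination ((1:ℚ_[p])/4) * h4q
  have hq54 : ((5:ℚ_[p])/4) = C (1 + q) := by
    rw [map_add, map_one]
    linear_combination (-(1:ℚ_[p])/4) * h4q
  have hascC : ∀ (x : ℤ_[p]) (K : ℕ),
      asc (C x) K = C (∏ i ∈ Finset.range K, (x + (i:ℤ_[p]))) := by
    intro x K
    simp only [asc, map_prod, map_add, map_natCast]
  set A3M : ℚ_[p] := C (∏ i ∈ Finset.range M, ((1-q) + (i:ℤ_[p]))) with hA3Mdef
  set A5M : ℚ_[p] := C (∏ i ∈ Finset.range M, ((1+q) + (i:ℤ_[p]))) with hA5Mdef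
  set A3N : ℚ_[p] := C (∏ i ∈ Finset.range N, ((1-q) + (i:ℤ_[p]))) with hA3Ndef
  set A5N : ℚ_[p] := C (∏ i ∈ Finset.range N, ((1+q) + (i:ℤ_[p]))) with hA5Ndef
  have hA3M : asc (3/4) M = A3M := by rw [hq34, hascC]
  have hA5M : asc (5/4) M = A5M := by rw [hq54, hascC]
  have hA3N : asc (3/4) N = A3N := by rw [hq34, hascC]
  have hA5N : asc (5/4) N = A5N := by rw [hq54, hascC]
  -- nonvanishing
  have hfac3 : ∀ K : ℕ, C (∏ i ∈ Finset.range K, ((1-q) + (i:ℤ_[p]))) ≠ 0 := by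
    intro K
    rw [map_prod]
    apply Finset.prod_ne_zero_iff.mpr
    intro i _
    intro h0
    have h4 : ((4*i+3 : ℕ) : ℚ_[p]) = 0 := by
      have := congrArg C (term3 q hquarter i)
      rw [map_mul, map_add, map_sub, map_one, map_natCast, map_natCast] at this
      rw [← this]
      rw [map_add, map_sub, map_one, map_natCast] at h0
      rw [h0, mul_zero]
    exact (Nat.cast_ne_zero.mpr (by omega)) h4
  have hfac5 : ∀ K : ℕ, C (∏ i ∈ Finset.range K, ((1+q) + (i:ℤ_[p]))) ≠ 0 := by
    intro K
    rw [map_prod]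
    apply Finset.prod_ne_zero_iff.mpr
    intro i _
    intro h0
    have h4 : ((4*i+5 : ℕ) : ℚ_[p]) = 0 := by
      have := congrArg C (term5 q hquarter i)
      rw [map_mul, map_add, map_add, map_one, map_natCast, map_natCast] at this
      rw [← this]
      rw [map_add, map_add, map_one, map_natCast] at h0
      rw [h0, mul_zero]
    exact (Nat.cast_ne_zero.mpr (by omega)) h4
  have hpne : (p:ℚ_[p]) ≠ 0 := Nat.cast_ne_zero.mpr hp.pos.ne'
  -- step 1 : exact identity
  have hJ3C := congrArg C hJ3
  have hJ5C := congrArg C hJ5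
  have hfunqC := congrArg C hfunq
  simp only [map_mul, map_pow, map_neg, map_one, map_natCast] at hJ3C hJ5C hfunqC
  have hstep1 : (p:ℚ_[p]) * A3M * A5N / (A5M * A3N)
      = -(C (G q) * C (G (q+hh))) / (C (G (1-q)) * C (G ((1-q)+hh))) := by
    rw [div_eq_div_iff (mul_ne_zero (hfac5 M) (hfac3 N))
      (mul_ne_zero (hGne (1-q)) (hGne ((1-q)+hh)))]
    apply mul_left_cancel₀ hCqne
    linear_combination (C q * (p:ℚ_[p]) * A5N * C (G ((1-q)+hh))) * hJ3C
      - (C (G (q+hh)) * A3N) * hJ5C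
      + (C (G (q+hh)) * A3N * A5M) * hfunqC
  -- step 2 : the bound
  have hstep2 : ‖-(C (G q) * C (G (q+hh))) / (C (G (1-q)) * C (G ((1-q)+hh)))
      - (-(C (G q))^4)‖ ≤ (p:ℝ)^(-(2*((r'+1:ℕ):ℤ))) := by
    have hform : -(C (G q) * C (G (q+hh))) / (C (G (1-q)) * C (G ((1-q)+hh))) - (-(C (G q))^4)
        = (C (G q)^4 * (C (G (1-q)) * C (G ((1-q)+hh))) - C (G q) * C (G (q+hh)))
          / (C (G (1-q)) * C (G ((1-q)+hh))) := by
      have hne1 := hGne (1-q)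
      have hne2 := hGne ((1-q)+hh)
      field_simp
      ring
    rw [hform, norm_div]
    have hden : ‖C (G (1-q)) * C (G ((1-q)+hh))‖ = 1 := by
      rw [norm_mul, hCnorm, hCnorm, hGnorm, hGnorm]
      norm_num
    rw [hden, div_one]
    have hnum : C (G q)^4 * (C (G (1-q)) * C (G ((1-q)+hh))) - C (G q) * C (G (q+hh))
        = C ((G q)^4 * (G (1-q) * G ((1-q)+hh)) - G q * G (q+hh)) := by
      rw [map_sub, map_mul, map_mul, map_mul, map_pow]
    rw [hnum, hCnorm]
    exact hnumZ
  rw [hA3M, hA5M, hA3N, hA5N, hstep1]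
  exact hstep2
end

section
/- For any odd prime p and any x ∈ Z_p, Γ_p(x)·Γ_p(1-x) = (-1)^{a_0(x)}, where a_0(x) is the unique integer with 1 ≤ a_0(x) ≤ p and a_0(x) ≡ x (mod p). -/
open Finset

/-- for an odd prime `p`, any `x ∈ ℤ_p`, and `a₀` the integer with
`1 ≤ a₀ ≤ p` and `a₀ ≡ x (mod p)`, Morita's p-adic Gamma function (characterized as
the continuous `G : ℤ_p → ℤ_p` with `G(n) = (-1)^n ∏_{0<k<n, p∤k} k`) satisfies
`G(x)·G(1-x) = (-1)^{a₀}`. -/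
theorem stmt5 (p : ℕ) [Fact p.Prime] (hodd : Odd p)
    (G : ℤ_[p] → ℤ_[p]) (hGcont : Continuous G)
    (hGval : ∀ n : ℕ, G n =
      (-1) ^ n * ∏ k ∈ (Finset.range n).filter (fun k => ¬ p ∣ k), (k : ℤ_[p]))
    (x : ℤ_[p]) (a₀ : ℕ) (ha₁ : 1 ≤ a₀) (ha₂ : a₀ ≤ p)
    (hcong : (p : ℤ_[p]) ∣ (x - a₀)) :
    G x * G (1 - x) = (-1) ^ a₀ := by
  classical
  have hp : p.Prime := Fact.out
  have hp2 : 2 ≤ p := hp.two_le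
  -- divisibility of casts of naturals
  have hdvdnat : ∀ n : ℕ, (p : ℤ_[p]) ∣ (n : ℤ_[p]) ↔ p ∣ n := by
    intro n
    rw [← PadicInt.norm_lt_one_iff_dvd]
    have h : ((n : ℤ) : ℤ_[p]) = (n : ℤ_[p]) := by push_cast; rfl
    rw [← h, PadicInt.norm_int_lt_one_iff_dvd, Int.natCast_dvd_natCast]
  -- the clopen set of multiples of p
  have hclopen : IsClopen {y : ℤ_[p] | (p : ℤ_[p]) ∣ y} := by
    constructor
    · have : {y : ℤ_[p] | (p : ℤ_[p]) ∣ y} = Metric.closedBall 0 ((p : ℝ) ^ (-(1:ℕ) : ℤ)) := by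
        ext y
        simp only [Set.mem_setOf_eq, Metric.mem_closedBall, dist_eq_norm, sub_zero]
        rw [PadicInt.norm_le_pow_iff_mem_span_pow, Ideal.mem_span_singleton, pow_one]
      rw [this]; exact Metric.isClosed_closedBall
    · have : {y : ℤ_[p] | (p : ℤ_[p]) ∣ y} = Metric.ball 0 1 := by
        ext y
        simp only [Set.mem_setOf_eq, Metric.mem_ball, dist_eq_norm, sub_zero]
        exact (PadicInt.norm_lt_one_iff_dvd y).symm
      rw [this]; exact Metric.isOpen_ball
  set e : ℤ_[p] → ℤ_[p] := fun y => if (p : ℤ_[p]) ∣ y then 1 else y with he_def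
  have he : Continuous e := by
    apply Continuous.if _ continuous_const continuous_id
    intro a ha
    rw [hclopen.frontier_eq] at ha
    exact absurd ha (Set.notMem_empty a)
  -- functional equation on naturals
  have hFEnat : ∀ n : ℕ, G ((n : ℤ_[p]) + 1) = -(e n) * G n := by
    intro n
    have h1 : ((n : ℤ_[p]) + 1) = ((n + 1 : ℕ) : ℤ_[p]) := by push_cast; ring
    rw [h1, hGval, hGval, Finset.range_add_one, Finset.filter_insert]
    by_cases hd : p ∣ n
    · rw [if_neg (by simpa using hd)]
      simp only [he_def, if_pos ((hdvdnat n).2 hd)]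
      ring
    · rw [if_pos (by simpa using hd), Finset.prod_insert (by simp)]
      simp only [he_def, if_neg (fun h => hd ((hdvdnat n).1 h))]
      ring
  -- functional equation everywhere by density
  have hFE : ∀ y : ℤ_[p], G (y + 1) = -(e y) * G y := by
    have h := DenseRange.equalizer (PadicInt.denseRange_natCast (p := p))
      (g := fun y : ℤ_[p] => G (y + 1)) (h := fun y : ℤ_[p] => -(e y) * G y)
      (hGcont.comp (continuous_id.add continuous_const))
      ((he.neg).mul hGcont)
      (funext fun n => hFEnat n)
    exact fun y => congrFun h y
  -- step for f(y) = G(y) G(1-y) at naturals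
  have hstep : ∀ n : ℕ, G ((n : ℤ_[p]) + 1) * G (1 - ((n : ℤ_[p]) + 1)) =
      (if p ∣ n then 1 else -1) * (G n * G (1 - (n : ℤ_[p]))) := by
    intro n
    have h1 : (1 : ℤ_[p]) - ((n : ℤ_[p]) + 1) = -(n : ℤ_[p]) := by ring
    have h2 : (1 : ℤ_[p]) - (n : ℤ_[p]) = (-(n : ℤ_[p])) + 1 := by ring
    rw [h1, hFE ((n : ℤ_[p])), h2, hFE (-(n : ℤ_[p]))]
    by_cases hd : p ∣ n
    · have e1 : e (n : ℤ_[p]) = 1 := if_pos ((hdvdnat n).2 hd)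
      have e2 : e (-(n : ℤ_[p])) = 1 := if_pos (Dvd.dvd.neg_right ((hdvdnat n).2 hd))
      rw [e1, e2, if_pos hd]; ring
    · have e1 : e (n : ℤ_[p]) = (n : ℤ_[p]) := if_neg (fun h => hd ((hdvdnat n).1 h))
      have e2 : e (-(n : ℤ_[p])) = -(n : ℤ_[p]) := by
        apply if_neg
        intro h
        exact hd ((hdvdnat n).1 ((dvd_neg).1 h))
      rw [e1, e2, if_neg hd]; ring
  -- main formula at positive naturals
  have hf : ∀ n : ℕ, 1 ≤ n → G n * G (1 - (n : ℤ_[p])) =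
      (-1) ^ (if n % p = 0 then p else n % p) := by
    intro n hn
    induction n with
    | zero => omega
    | succ m ih =>
      rcases Nat.eq_or_lt_of_le hn with h1 | h1
      · -- m + 1 = 1
        have hm : m = 0 := by omega
        subst hm
        have hc : ((1 : ℕ) : ℤ_[p]) = 1 := by push_cast; rfl
        have hG1 : G 1 = -1 := by
          have h := hGval 1
          simpa [Finset.filter_singleton] using h
        have hG0 : G 0 = 1 := by
          have h := hGval 0
          simpa using h
        have hmod : 1 % p = 1 := Nat.one_mod_eq_one.2 (by omega)
        rw [hc, sub_self, hG1, hG0, hmod, if_neg (by omega)]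
        simp
      · have hm1 : 1 ≤ m := by omega
        have hcast : ((m + 1 : ℕ) : ℤ_[p]) = (m : ℤ_[p]) + 1 := by push_cast; ring
        rw [hcast, hstep m, ih hm1]
        have h1mod : 1 % p = 1 := Nat.one_mod_eq_one.2 (by omega)
        have haux : (m + 1) % p = (m % p + 1) % p := by
          conv_lhs => rw [Nat.add_mod, h1mod]
        by_cases hd : p ∣ m
        · obtain ⟨k, hk⟩ := hd
          have hm0 : m % p = 0 := by rw [hk]; exact Nat.mul_mod_right p k
          have hm1p : (m + 1) % p = 1 := by rw [haux, hm0]; simpa using h1mod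
          rw [if_pos ⟨k, hk⟩, if_pos hm0, hm1p, if_neg one_ne_zero,
            hodd.neg_one_pow, pow_one, one_mul]
        · have hm0 : m % p ≠ 0 := fun h => hd (Nat.dvd_of_mod_eq_zero h)
          have hmlt : m % p < p := Nat.mod_lt _ (by omega)
          rw [if_neg hd, if_neg hm0]
          have hkey : (if (m + 1) % p = 0 then p else (m + 1) % p) = m % p + 1 := by
            rw [haux]
            rcases Nat.eq_or_lt_of_le (Nat.succ_le_of_lt hmlt) with h | h
            · have h' : m % p + 1 = p := h
              rw [h', Nat.mod_self, if_pos rfl]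
            · rw [Nat.mod_eq_of_lt h, if_neg (by omega)]
          rw [hkey, pow_succ]
          ring
  -- approximating sequence
  set N : ℕ → ℕ := fun j => x.appr (j + 1) + p ^ (j + 1) with hN_def
  have hppow : ∀ j : ℕ, 0 < p ^ (j + 1) := fun j => pow_pos (by omega : 0 < p) _
  have hdvd : ∀ j : ℕ, ((p : ℤ_[p]) ^ (j + 1)) ∣ (x - (N j : ℤ_[p])) := by
    intro j
    have h1 := PadicInt.appr_spec (j + 1) x
    rw [Ideal.mem_span_singleton] at h1
    have h2 : (x - (N j : ℤ_[p])) = (x - (x.appr (j + 1) : ℤ_[p])) - (p : ℤ_[p]) ^ (j + 1) := by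
      rw [hN_def]; push_cast; ring
    rw [h2]
    exact dvd_sub h1 dvd_rfl
  -- each term of the sequence has value (-1)^a₀
  have hval : ∀ j : ℕ, G (N j : ℤ_[p]) * G (1 - (N j : ℤ_[p])) = (-1) ^ a₀ := by
    intro j
    have hNpos : 1 ≤ N j := le_trans (hppow j) (Nat.le_add_left _ _)
    have hNp : (p : ℕ) ≤ N j :=
      le_trans (Nat.le_self_pow (Nat.succ_ne_zero j) p) (Nat.le_add_left _ _)
    -- p ∣ N j - a₀ over ℤ
    have hd1 : (p : ℤ_[p]) ∣ ((N j : ℤ_[p]) - (a₀ : ℤ_[p])) := by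
      have h2 : ((N j : ℤ_[p]) - (a₀ : ℤ_[p])) = (x - (a₀ : ℤ_[p])) - (x - (N j : ℤ_[p])) := by
        ring
      rw [h2]
      exact dvd_sub hcong (dvd_trans (dvd_pow_self _ (Nat.succ_ne_zero j)) (hdvd j))
    have hd2 : (p : ℤ) ∣ ((N j : ℤ) - (a₀ : ℤ)) := by
      rw [← PadicInt.norm_int_lt_one_iff_dvd]
      have hc : ((((N j : ℤ) - (a₀ : ℤ)) : ℤ) : ℤ_[p]) = (N j : ℤ_[p]) - (a₀ : ℤ_[p]) := by
        push_cast; ring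
      rw [hc, PadicInt.norm_lt_one_iff_dvd]
      exact hd1
    have hale : a₀ ≤ N j := le_trans ha₂ hNp
    have hd3 : p ∣ (N j - a₀) := by
      have : ((N j - a₀ : ℕ) : ℤ) = (N j : ℤ) - (a₀ : ℤ) := by
        omega
      rw [← Int.natCast_dvd_natCast, this]
      exact hd2
    have hmodeq : N j % p = a₀ % p := ((Nat.modEq_iff_dvd' hale).2 hd3).symm
    have hrep : (if N j % p = 0 then p else N j % p) = a₀ := by
      rcases Nat.eq_or_lt_of_le ha₂ with h | h
      · have h0 : a₀ % p = 0 := by rw [h, Nat.mod_self]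
        rw [hmodeq, h0, if_pos rfl, h]
      · have : a₀ % p = a₀ := Nat.mod_eq_of_lt h
        rw [hmodeq, this, if_neg (by omega)]
    rw [hf (N j) hNpos, hrep]
  -- convergence of the sequence to x
  have htend : Filter.Tendsto (fun j => ((N j : ℤ_[p]))) Filter.atTop (nhds x) := by
    rw [tendsto_iff_dist_tendsto_zero]
    apply squeeze_zero (fun j => dist_nonneg)
      (g := fun j => ((p : ℝ))⁻¹ ^ (j + 1))
    · intro j
      rw [dist_eq_norm, ← norm_neg, neg_sub]
      have := (PadicInt.norm_le_pow_iff_mem_span_pow (x - (N j : ℤ_[p])) (j + 1)).2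
        (by rw [Ideal.mem_span_singleton]; exact hdvd j)
      calc ‖x - (N j : ℤ_[p])‖ ≤ (p : ℝ) ^ (-(j + 1 : ℕ) : ℤ) := this
        _ = ((p : ℝ))⁻¹ ^ (j + 1) := by
            rw [zpow_neg, zpow_natCast, inv_pow]
    · have hlt : |((p : ℝ))⁻¹| < 1 := by
        rw [abs_of_nonneg (by positivity)]
        rw [inv_lt_one_iff₀]
        right
        exact_mod_cast by omega
      have := tendsto_pow_atTop_nhds_zero_of_abs_lt_one hlt
      exact this.comp (Filter.tendsto_add_atTop_nat 1)
  -- conclude by continuity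
  have hcont2 : Continuous (fun y : ℤ_[p] => G y * G (1 - y)) :=
    hGcont.mul (hGcont.comp (continuous_const.sub continuous_id))
  have h1 : Filter.Tendsto (fun j => G ((N j : ℤ_[p])) * G (1 - (N j : ℤ_[p])))
      Filter.atTop (nhds (G x * G (1 - x))) := (hcont2.tendsto x).comp htend
  have h2 : Filter.Tendsto (fun j => G ((N j : ℤ_[p])) * G (1 - (N j : ℤ_[p])))
      Filter.atTop (nhds ((-1 : ℤ_[p]) ^ a₀)) := by
    simp only [hval]
    exact tendsto_const_nhds
  exact tendsto_nhds_unique h1 h2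
end

section
/- Let n ≡ 1 (mod 4) be a positive integer. Then, modulo Φ_n(q)^2, one has (q^2;q^4)_{(n-1)/4}^2 / (q^4;q^4)_{(n-1)/4}^2 · q^{(n-1)/2} ≡ [n]_q · (q^3;q^4)_{(n-1)/2} / (q^5;q^4)_{(n-1)/2}, as a congruence of rational functions whose denominators are coprime to Φ_n(q). -/
open Finset Polynomial

/-- The q-integer `[n]_q = (1-q^n)/(1-q)` in `ℚ(q)`. -/
noncomputable def qint (n : ℕ) : RatFunc ℚ :=
  (1 - RatFunc.X ^ n) / (1 - RatFunc.X)

lemma prod_one_add_mul {R : Type*} [CommRing R] {w : R} (hw : w * w = 0)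
    (z : ℕ → R) (m : ℕ) :
    ∏ i ∈ Finset.range m, (1 + z i * w) = 1 + (∑ i ∈ Finset.range m, z i) * w := by
  induction m with
  | zero => simp
  | succ k ih =>
    rw [Finset.prod_range_succ, Finset.sum_range_succ, ih]
    linear_combination (∑ i ∈ Finset.range k, z i) * z k * hw

lemma cyclo_not_dvd {n k : ℕ} (hn : 0 < n) (hk : ¬ n ∣ k) :
    ¬ (cyclotomic n ℚ ∣ (1 - Polynomial.X ^ k : ℚ[X])) := by
  intro h
  have hζ := Complex.isPrimitiveRoot_exp n hn.ne'
  have h2 : cyclotomic n ℂ ∣ (1 - Polynomial.X ^ k : ℂ[X]) := by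
    have := Polynomial.map_dvd (algebraMap ℚ ℂ) h
    simpa [Polynomial.map_cyclotomic] using this
  have h3 := (hζ.isRoot_cyclotomic hn).dvd h2
  simp only [Polynomial.IsRoot, Polynomial.eval_sub, Polynomial.eval_one,
    Polynomial.eval_pow, Polynomial.eval_X, sub_eq_zero] at h3
  exact hk ((hζ.pow_eq_one_iff_dvd k).1 h3.symm)

lemma cyclo_not_dvd_X {n : ℕ} (hn : 0 < n) :
    ¬ (cyclotomic n ℚ ∣ (Polynomial.X : ℚ[X])) := by
  intro h
  have hζ := Complex.isPrimitiveRoot_exp n hn.ne'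
  have h2 : cyclotomic n ℂ ∣ (Polynomial.X : ℂ[X]) := by
    have := Polynomial.map_dvd (algebraMap ℚ ℂ) h
    simpa [Polynomial.map_cyclotomic] using this
  have h3 := (hζ.isRoot_cyclotomic hn).dvd h2
  simp only [Polynomial.IsRoot, Polynomial.eval_X] at h3
  exact hζ.ne_zero hn.ne' h3

lemma one_sub_X_pow_ne_zero_s9 {k : ℕ} (hk : 0 < k) : (1 - Polynomial.X ^ k : ℚ[X]) ≠ 0 := by
  intro h
  have := congrArg (fun p => Polynomial.coeff p k) h
  simp [Polynomial.coeff_one, hk.ne'] at this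

lemma sq_dvd_of_dvd_mul {R : Type*} [CommRing R] [IsDomain R] {p a b : R}
    (hp : Prime p) (h : p ^ 2 ∣ a * b) (hb : ¬ p ∣ b) : p ^ 2 ∣ a := by
  have h1 : p ∣ a := by
    rcases (hp.dvd_mul.mp (dvd_trans (dvd_pow_self p two_ne_zero) h)) with h' | h'
    · exact h'
    · exact absurd h' hb
  obtain ⟨c, rfl⟩ := h1
  rw [sq] at h ⊢
  rw [mul_assoc] at h
  have h2 : p ∣ c * b := (mul_dvd_mul_iff_left hp.ne_zero).mp h
  rcases hp.dvd_mul.mp h2 with h' | h'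
  · obtain ⟨d, rfl⟩ := h'
    exact ⟨d, by ring⟩
  · exact absurd h' hb

lemma Csplit {R : Type*} [CommRing R] (x : R) (m : ℕ) :
    ∏ i ∈ range (2*m), (1 - x^(4*i+3))
      = (∏ i ∈ range m, (1 - x^(4*i+3))) * ∏ i ∈ range m, (1 - x^(4*m+1+(4*i+2))) := by
  rw [two_mul, Finset.prod_range_add]
  congr 1
  exact Finset.prod_congr rfl fun i _ => by rw [show 4*(m+i)+3 = 4*m+1+(4*i+2) from by ring]

lemma Dsplit {R : Type*} [CommRing R] (x : R) (m : ℕ) :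
    (1 - x) * ∏ i ∈ range (2*m), (1 - x^(4*i+5))
      = (∏ i ∈ range m, (1 - x^(4*i+1))) * (1 - x^(4*m+1))
        * ∏ i ∈ range m, (1 - x^(4*m+1+(4*i+4))) := by
  rw [two_mul, Finset.prod_range_add, ← mul_assoc]
  congr 1
  · have h1 : ∏ i ∈ range (m+1), (1 - x^(4*i+1))
        = (∏ i ∈ range m, (1 - x^(4*(i+1)+1))) * (1 - x^(4*0+1)) :=
      Finset.prod_range_succ' (fun i => 1 - x^(4*i+1)) m
    have h2 : ∏ i ∈ range (m+1), (1 - x^(4*i+1))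
        = (∏ i ∈ range m, (1 - x^(4*i+1))) * (1 - x^(4*m+1)) :=
      Finset.prod_range_succ (fun i => 1 - x^(4*i+1)) m
    rw [← h2, h1]
    have h3 : ∏ i ∈ range m, (1 - x^(4*(i+1)+1)) = ∏ i ∈ range m, (1 - x^(4*i+5)) :=
      Finset.prod_congr rfl fun i _ => by rw [show 4*(i+1)+1 = 4*i+5 from by ring]
    rw [h3]
    ring
  · exact Finset.prod_congr rfl fun i _ => by rw [show 4*(m+i)+5 = 4*m+1+(4*i+4) from by ring]

set_option maxHeartbeats 2000000 in
lemma part2 (m : ℕ) :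
    (cyclotomic (4*m+1) ℚ) ^ 2 ∣
      ((∏ i ∈ range m, (1 - Polynomial.X ^ (4*i+2))) ^ 2 * Polynomial.X ^ (2*m)
          * (∏ i ∈ range m, (1 - Polynomial.X ^ (4*i+1)))
          * (∏ i ∈ range m, (1 - Polynomial.X ^ (4*m+1+(4*i+4))))
        - (∏ i ∈ range m, (1 - Polynomial.X ^ (4*i+3)))
          * (∏ i ∈ range m, (1 - Polynomial.X ^ (4*m+1+(4*i+2))))
          * (∏ i ∈ range m, (1 - Polynomial.X ^ (4*i+4))) ^ 2) := by
  set N := 4*m+1 with hN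
  have hNpos : 0 < N := by omega
  set Φ : ℚ[X] := cyclotomic N ℚ with hΦ
  rw [← Ideal.Quotient.eq_zero_iff_dvd]
  set π : ℚ[X] →+* (ℚ[X] ⧸ Ideal.span ({Φ^2} : Set ℚ[X])) :=
    Ideal.Quotient.mk (Ideal.span ({Φ^2} : Set ℚ[X])) with hπ
  -- basic objects
  set q : ℚ[X] ⧸ Ideal.span ({Φ^2} : Set ℚ[X]) := π Polynomial.X with hq
  have hπ0 : ∀ p : ℚ[X], Φ^2 ∣ p → π p = 0 := fun p hp =>
    (Ideal.Quotient.eq_zero_iff_dvd _ _).mpr hp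
  have hΦdvd : Φ ∣ 1 - Polynomial.X ^ N := by
    have := cyclotomic.dvd_X_pow_sub_one N ℚ
    rw [hΦ, show (1 - Polynomial.X ^ N : ℚ[X]) = -(Polynomial.X ^ N - 1) by ring]
    exact dvd_neg.mpr this
  set w : ℚ[X] ⧸ Ideal.span ({Φ^2} : Set ℚ[X]) := 1 - q ^ N with hwdef
  have hwπ : w = π (1 - Polynomial.X ^ N) := by
    rw [hwdef, map_sub, map_one, map_pow]
  have hw : w * w = 0 := by
    rw [hwπ, ← map_mul]
    exact hπ0 _ (by rw [sq]; exact mul_dvd_mul hΦdvd hΦdvd)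
  -- units
  have hunit : ∀ k : ℕ, ¬ N ∣ k → IsUnit (1 - q ^ k) := by
    intro k hk
    have hnd := cyclo_not_dvd hNpos hk
    have hco : IsCoprime (Φ^2) (1 - Polynomial.X ^ k) :=
      (((cyclotomic.irreducible_rat hNpos).coprime_iff_not_dvd).mpr hnd).pow_left
    obtain ⟨a, b, hab⟩ := hco
    refine IsUnit.of_mul_eq_one (π b) ?_
    have : (1 - q ^ k) = π (1 - Polynomial.X ^ k) := by rw [map_sub, map_one, map_pow, hq]
    rw [this, ← map_mul]
    have : (1 - Polynomial.X ^ k) * b = 1 - a * Φ^2 := by linear_combination hab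
    rw [this, map_sub, map_one, map_mul, hπ0 (Φ^2) dvd_rfl, mul_zero, sub_zero]
  have hXunit : IsUnit q := by
    have hnd := cyclo_not_dvd_X hNpos
    have hco : IsCoprime (Φ^2) (Polynomial.X : ℚ[X]) :=
      (((cyclotomic.irreducible_rat hNpos).coprime_iff_not_dvd).mpr hnd).pow_left
    obtain ⟨a, b, hab⟩ := hco
    refine IsUnit.of_mul_eq_one (π b) ?_
    rw [hq, ← map_mul]
    have : (Polynomial.X : ℚ[X]) * b = 1 - a * Φ^2 := by linear_combination hab
    rw [this, map_sub, map_one, map_mul, hπ0 (Φ^2) dvd_rfl, mul_zero, sub_zero]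
  set g : ℕ → ℚ[X] ⧸ Ideal.span ({Φ^2} : Set ℚ[X]) :=
    fun k => Ring.inverse (1 - q ^ k) with hgdef
  have hg : ∀ k : ℕ, ¬ N ∣ k → (1 - q ^ k) * g k = 1 := fun k hk =>
    Ring.mul_inverse_cancel _ (hunit k hk)
  have hnd1 : ∀ k : ℕ, 0 < k → k < N → ¬ N ∣ k := by
    intro k h1 h2 hd
    have := Nat.le_of_dvd h1 hd
    omega
  have hnd2 : ∀ k : ℕ, N < k → k < 2*N → ¬ N ∣ k := by
    intro k h1 h2 hd
    obtain ⟨c, rfl⟩ := hd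
    rcases Nat.lt_or_ge c 2 with hc | hc
    · interval_cases c <;> omega
    · have : 2*N ≤ N*c := by
        calc 2*N = N*2 := by ring
        _ ≤ N*c := Nat.mul_le_mul_left N hc
      omega
  -- elements of the quotient ring
  set A2 := ∏ i ∈ range m, (1 - q ^ (4*i+2)) with hA2
  set A4 := ∏ i ∈ range m, (1 - q ^ (4*i+4)) with hA4
  set C1 := ∏ i ∈ range m, (1 - q ^ (4*i+3)) with hC1
  set C2 := ∏ i ∈ range m, (1 - q ^ (N+(4*i+2))) with hC2
  set D1 := ∏ i ∈ range m, (1 - q ^ (4*i+1)) with hD1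
  set D2 := ∏ i ∈ range m, (1 - q ^ (N+(4*i+4))) with hD2
  set Sc := ∑ i ∈ range m, q ^ (4*i+2) * g (4*i+2) with hSc
  set Sd := ∑ i ∈ range m, q ^ (4*i+4) * g (4*i+4) with hSd
  set T2 := ∑ i ∈ range m, g (4*i+2) with hT2
  set T4 := ∑ i ∈ range m, g (4*i+4) with hT4
  set Tc := ∑ i ∈ range m, g (4*i+3) with hTc
  set Td := ∑ i ∈ range m, g (4*i+1) with hTd
  set E1 := ∑ i ∈ range m, (4*i+1) with hE1def
  -- the image of the big polynomial
  have hππ : π ((∏ i ∈ range m, (1 - Polynomial.X ^ (4*i+2))) ^ 2 * Polynomial.X ^ (2*m)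
          * (∏ i ∈ range m, (1 - Polynomial.X ^ (4*i+1)))
          * (∏ i ∈ range m, (1 - Polynomial.X ^ (4*m+1+(4*i+4))))
        - (∏ i ∈ range m, (1 - Polynomial.X ^ (4*i+3)))
          * (∏ i ∈ range m, (1 - Polynomial.X ^ (4*m+1+(4*i+2))))
          * (∏ i ∈ range m, (1 - Polynomial.X ^ (4*i+4))) ^ 2)
      = A2 ^ 2 * q ^ (2*m) * D1 * D2 - C1 * C2 * A4 ^ 2 := by
    simp only [map_sub, map_mul, map_pow, map_prod, map_one, hA2, hA4, hC1, hC2, hD1, hD2,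
      hq, hN]
  rw [hππ]
  -- expansion of C2 and D2 to first order in w
  have hfn : ∀ k : ℕ, (1 - q ^ (N + k)) = (1 - q ^ k) + q ^ k * w := by
    intro k
    rw [hwdef, pow_add]
    ring
  have hC2e : C2 = A2 * (1 + Sc * w) := by
    rw [hC2, hSc]
    have : ∀ i ∈ range m, (1 - q ^ (N+(4*i+2)))
        = (1 - q ^ (4*i+2)) * (1 + (q ^ (4*i+2) * g (4*i+2)) * w) := by
      intro i hi
      have hi' : i < m := mem_range.mp hi
      have hgk := hg (4*i+2) (hnd1 _ (by omega) (by omega))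
      rw [hfn]
      linear_combination (-(q ^ (4*i+2) * w)) * hgk
    rw [Finset.prod_congr rfl this, Finset.prod_mul_distrib, prod_one_add_mul hw]
  have hD2e : D2 = A4 * (1 + Sd * w) := by
    rw [hD2, hSd]
    have : ∀ i ∈ range m, (1 - q ^ (N+(4*i+4)))
        = (1 - q ^ (4*i+4)) * (1 + (q ^ (4*i+4) * g (4*i+4)) * w) := by
      intro i hi
      have hi' : i < m := mem_range.mp hi
      have hgk := hg (4*i+4) (hnd1 _ (by omega) (by omega))
      rw [hfn]
      linear_combination (-(q ^ (4*i+4) * w)) * hgk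
    rw [Finset.prod_congr rfl this, Finset.prod_mul_distrib, prod_one_add_mul hw]
  -- reflection identities
  have hrefl : ∀ j k : ℕ, j + k = N → q ^ j * (1 - q ^ k) = (-1) * ((1 - q ^ j) - w) := by
    intro j k hjk
    have : q ^ j * q ^ k = q ^ N := by rw [← pow_add, hjk]
    rw [hwdef]
    linear_combination (-1 : ℚ[X] ⧸ Ideal.span ({Φ^2} : Set ℚ[X])) * this
  have hone : ∀ k : ℕ, ¬ N ∣ k → (1 - q ^ k) - w = (1 - q ^ k) * (1 + (-(g k)) * w) := by
    intro k hk
    linear_combination (w) * hg k hk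
  have hE1 : q ^ E1 * A4 = (-1 : ℚ[X] ⧸ Ideal.span ({Φ^2} : Set ℚ[X])) ^ m
      * (D1 * (1 + (-Td) * w)) := by
    have step1 : ∏ i ∈ range m, (q ^ (4*(m-1-i)+1) * (1 - q ^ (4*i+4)))
        = ∏ i ∈ range m, ((-1 : ℚ[X] ⧸ Ideal.span ({Φ^2} : Set ℚ[X])) * ((1 - q ^ (4*(m-1-i)+1)) - w)) := by
      refine Finset.prod_congr rfl fun i hi => ?_
      have hi' : i < m := mem_range.mp hi
      exact hrefl _ _ (by omega)
    have step2 : ∏ i ∈ range m, q ^ (4*(m-1-i)+1) = q ^ E1 := by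
      rw [Finset.prod_pow_eq_pow_sum, hE1def]
      congr 1
      exact Finset.sum_range_reflect (fun i => 4*i+1) m
    have step3 : ∏ i ∈ range m, ((1 - q ^ (4*(m-1-i)+1)) - w)
        = ∏ i ∈ range m, ((1 - q ^ (4*i+1)) - w) :=
      Finset.prod_range_reflect (fun i => (1 - q ^ (4*i+1)) - w) m
    have step4 : ∏ i ∈ range m, ((1 - q ^ (4*i+1)) - w) = D1 * (1 + (-Td) * w) := by
      have : ∀ i ∈ range m, (1 - q ^ (4*i+1)) - w
          = (1 - q ^ (4*i+1)) * (1 + (-(g (4*i+1))) * w) := by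
        intro i hi
        have hi' : i < m := mem_range.mp hi
        exact hone _ (hnd1 _ (by omega) (by omega))
      rw [Finset.prod_congr rfl this, Finset.prod_mul_distrib, prod_one_add_mul hw, hD1, hTd,
        ← Finset.sum_neg_distrib]
    calc q ^ E1 * A4 = ∏ i ∈ range m, (q ^ (4*(m-1-i)+1) * (1 - q ^ (4*i+4))) := by
          rw [Finset.prod_mul_distrib, step2, hA4]
      _ = (-1) ^ m * (D1 * (1 + (-Td) * w)) := by
          rw [step1, Finset.prod_mul_distrib, Finset.prod_const, card_range, step3, step4]
  have hsum3 : ∑ i ∈ range m, (4*i+3) = E1 + 2*m := by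
    have h1 : ∑ i ∈ range m, (4*i+3) = (∑ i ∈ range m, (4*i+1)) + ∑ i ∈ range m, 2 := by
      rw [← Finset.sum_add_distrib]
    rw [h1, ← hE1def, Finset.sum_const, card_range, smul_eq_mul]
    omega
  have hE2 : q ^ (E1 + 2*m) * A2 = (-1 : ℚ[X] ⧸ Ideal.span ({Φ^2} : Set ℚ[X])) ^ m
      * (C1 * (1 + (-Tc) * w)) := by
    have step1 : ∏ i ∈ range m, (q ^ (4*(m-1-i)+3) * (1 - q ^ (4*i+2)))
        = ∏ i ∈ range m, ((-1 : ℚ[X] ⧸ Ideal.span ({Φ^2} : Set ℚ[X])) * ((1 - q ^ (4*(m-1-i)+3)) - w)) := by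
      refine Finset.prod_congr rfl fun i hi => ?_
      have hi' : i < m := mem_range.mp hi
      exact hrefl _ _ (by omega)
    have step2 : ∏ i ∈ range m, q ^ (4*(m-1-i)+3) = q ^ (E1 + 2*m) := by
      rw [Finset.prod_pow_eq_pow_sum, ← hsum3]
      congr 1
      exact Finset.sum_range_reflect (fun i => 4*i+3) m
    have step3 : ∏ i ∈ range m, ((1 - q ^ (4*(m-1-i)+3)) - w)
        = ∏ i ∈ range m, ((1 - q ^ (4*i+3)) - w) :=
      Finset.prod_range_reflect (fun i => (1 - q ^ (4*i+3)) - w) m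
    have step4 : ∏ i ∈ range m, ((1 - q ^ (4*i+3)) - w) = C1 * (1 + (-Tc) * w) := by
      have : ∀ i ∈ range m, (1 - q ^ (4*i+3)) - w
          = (1 - q ^ (4*i+3)) * (1 + (-(g (4*i+3))) * w) := by
        intro i hi
        have hi' : i < m := mem_range.mp hi
        exact hone _ (hnd1 _ (by omega) (by omega))
      rw [Finset.prod_congr rfl this, Finset.prod_mul_distrib, prod_one_add_mul hw, hC1, hTc,
        ← Finset.sum_neg_distrib]
    calc q ^ (E1 + 2*m) * A2 = ∏ i ∈ range m, (q ^ (4*(m-1-i)+3) * (1 - q ^ (4*i+2))) := by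
          rw [Finset.prod_mul_distrib, step2, hA2]
      _ = (-1) ^ m * (C1 * (1 + (-Tc) * w)) := by
          rw [step1, Finset.prod_mul_distrib, Finset.prod_const, card_range, step3, step4]
  -- sum identities
  have hqg : ∀ k : ℕ, ¬ N ∣ k → q ^ k * g k = g k - 1 := by
    intro k hk
    linear_combination (-1 : ℚ[X] ⧸ Ideal.span ({Φ^2} : Set ℚ[X])) * hg k hk
  have hScT : Sc = T2 - (m : ℚ[X] ⧸ Ideal.span ({Φ^2} : Set ℚ[X])) := by
    rw [hSc, Finset.sum_congr rfl (fun i hi => hqg (4*i+2)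
        (hnd1 _ (by omega) (by have := mem_range.mp hi; omega))),
      Finset.sum_sub_distrib, Finset.sum_const, card_range, hT2, nsmul_eq_mul, mul_one]
  have hSdT : Sd = T4 - (m : ℚ[X] ⧸ Ideal.span ({Φ^2} : Set ℚ[X])) := by
    rw [hSd, Finset.sum_congr rfl (fun i hi => hqg (4*i+4)
        (hnd1 _ (by omega) (by have := mem_range.mp hi; omega))),
      Finset.sum_sub_distrib, Finset.sum_const, card_range, hT4, nsmul_eq_mul, mul_one]
  have hpair : ∀ j k : ℕ, j + k = N → ¬ N ∣ j → ¬ N ∣ k →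
      w * g j = w - w * g k := by
    intro j k hjk hj hk
    have e1 := hg j hj
    have e2 := hg k hk
    have hqq : q ^ j * q ^ k = q ^ N := by rw [← pow_add, hjk]
    have h1 : w * ((1 - q ^ j) * (1 - q ^ k)) = w * (1 - q ^ j) + w * (1 - q ^ k) := by
      linear_combination w * hqq + w * hwdef - hw
    linear_combination (-(g j * g k)) * h1 + (w + w*((1 - q^k) * g k - 1) - w * g k) * e1
      + (w - w * g j) * e2
  have hwTd : w * Td = (m : ℚ[X] ⧸ Ideal.span ({Φ^2} : Set ℚ[X])) * w - w * T4 := by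
    rw [hTd, Finset.mul_sum]
    have hstep : ∀ i ∈ range m, w * g (4*i+1) = w - w * g (4*(m-1-i)+4) := by
      intro i hi
      have hi' : i < m := mem_range.mp hi
      exact hpair _ _ (by omega) (hnd1 _ (by omega) (by omega)) (hnd1 _ (by omega) (by omega))
    rw [Finset.sum_congr rfl hstep, Finset.sum_sub_distrib, Finset.sum_const, card_range,
      Finset.sum_range_reflect (fun i => w * g (4*i+4)) m, ← Finset.mul_sum, ← hT4,
      nsmul_eq_mul]
  have hwTc : w * Tc = (m : ℚ[X] ⧸ Ideal.span ({Φ^2} : Set ℚ[X])) * w - w * T2 := by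
    rw [hTc, Finset.mul_sum]
    have hstep : ∀ i ∈ range m, w * g (4*i+3) = w - w * g (4*(m-1-i)+2) := by
      intro i hi
      have hi' : i < m := mem_range.mp hi
      exact hpair _ _ (by omega) (hnd1 _ (by omega) (by omega)) (hnd1 _ (by omega) (by omega))
    rw [Finset.sum_congr rfl hstep, Finset.sum_sub_distrib, Finset.sum_const, card_range,
      Finset.sum_range_reflect (fun i => w * g (4*i+2)) m, ← Finset.mul_sum, ← hT2,
      nsmul_eq_mul]
  have hBr : (1 + (-Tc) * w) * (1 + Sd * w) - (1 + (-Td) * w) * (1 + Sc * w) = 0 := by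
    linear_combination w * hSdT - w * hScT + hwTd - hwTc + (Td * Sc - Tc * Sd) * hw
  have hfin : (A2 ^ 2 * q ^ (2*m) * D1 * D2 - C1 * C2 * A4 ^ 2) * q ^ (E1 + (E1 + 2*m))
      = ((-1 : ℚ[X] ⧸ Ideal.span ({Φ^2} : Set ℚ[X])) ^ m * (C1 * D1 * A2 * A4 * q ^ (E1 + 2*m)))
        * ((1 + (-Tc) * w) * (1 + Sd * w) - (1 + (-Td) * w) * (1 + Sc * w)) := by
    linear_combination (A2^2 * q^(2*m) * D1 * q^(E1+(E1+2*m))) * hD2e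
      + (A2 * q^(2*m) * D1 * A4 * (1 + Sd * w) * q^E1) * hE2
      - (C1 * A4^2 * q^(E1+(E1+2*m))) * hC2e
      - (C1 * A2 * (1 + Sc * w) * A4 * q^(E1+2*m)) * hE1
  rw [hBr, mul_zero] at hfin
  exact ((hXunit.pow (E1 + (E1 + 2*m))).mul_left_eq_zero).mp hfin


set_option maxHeartbeats 2000000 in
/-- for `n ≡ 1 (mod 4)` positive,
`(q²;q⁴)²_{(n-1)/4}/(q⁴;q⁴)²_{(n-1)/4} · q^{(n-1)/2}
 ≡ [n]·(q³;q⁴)_{(n-1)/2}/(q⁵;q⁴)_{(n-1)/2} (mod Φ_n(q)²)`. -/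
theorem stmt9 (n : ℕ) (hn : 0 < n) (hn4 : n % 4 = 1) :
    (Polynomial.cyclotomic n ℚ) ^ 2 ∣
      ((poch (RatFunc.X ^ 2) (RatFunc.X ^ 4) ((n - 1) / 4)) ^ 2
          / (poch (RatFunc.X ^ 4) (RatFunc.X ^ 4) ((n - 1) / 4)) ^ 2
          * RatFunc.X ^ ((n - 1) / 2)
        - qint n * poch (RatFunc.X ^ 3) (RatFunc.X ^ 4) ((n - 1) / 2)
          / poch (RatFunc.X ^ 5) (RatFunc.X ^ 4) ((n - 1) / 2)).num := by

  obtain ⟨m, rfl⟩ : ∃ m, n = 4 * m + 1 := ⟨n / 4, by omega⟩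
  have h14 : (4 * m + 1 - 1) / 4 = m := by omega
  have h12 : (4 * m + 1 - 1) / 2 = 2 * m := by omega
  rw [h14, h12]
  have hpoch : ∀ a k : ℕ, poch (RatFunc.X ^ a) (RatFunc.X ^ 4) k
      = algebraMap ℚ[X] (RatFunc ℚ) (∏ i ∈ Finset.range k, (1 - Polynomial.X ^ (4*i+a))) := by
    intro a k
    rw [poch, map_prod]
    refine Finset.prod_congr rfl fun i _ => ?_
    rw [map_sub, map_one, map_pow, RatFunc.algebraMap_X]
    rw [show 4*i+a = a + 4*i from by ring, pow_add, pow_mul]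
  have hX : (RatFunc.X : RatFunc ℚ) = algebraMap ℚ[X] (RatFunc ℚ) Polynomial.X :=
    (RatFunc.algebraMap_X (K := ℚ)).symm
  rw [hpoch 2 m, hpoch 4 m, hpoch 3 (2*m), hpoch 5 (2*m), qint, hX]
  set aM := algebraMap ℚ[X] (RatFunc ℚ) with haM
  set P2 : ℚ[X] := ∏ i ∈ Finset.range m, (1 - Polynomial.X ^ (4*i+2)) with hP2
  set P4 : ℚ[X] := ∏ i ∈ Finset.range m, (1 - Polynomial.X ^ (4*i+4)) with hP4
  set P3 : ℚ[X] := ∏ i ∈ Finset.range (2*m), (1 - Polynomial.X ^ (4*i+3)) with hP3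
  set P5 : ℚ[X] := ∏ i ∈ Finset.range (2*m), (1 - Polynomial.X ^ (4*i+5)) with hP5
  set D1 : ℚ[X] := ∏ i ∈ Finset.range m, (1 - Polynomial.X ^ (4*i+1)) with hD1
  set D2 : ℚ[X] := ∏ i ∈ Finset.range m, (1 - Polynomial.X ^ (4*m+1+(4*i+4))) with hD2
  set G : ℚ[X] := P2^2 * Polynomial.X^(2*m) * D1 * D2 - P3 * P4^2 with hG
  set Dd : ℚ[X] := P4^2 * D1 * D2 with hDd
  have hone_sub : ∀ k : ℕ, 0 < k → (1 - Polynomial.X ^ k : ℚ[X]) ≠ 0 :=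
    fun k hk => one_sub_X_pow_ne_zero_s9 hk
  have hne : ∀ s : Finset ℕ, ∀ f : ℕ → ℕ, (∀ i ∈ s, 0 < f i) →
      (∏ i ∈ s, (1 - Polynomial.X ^ (f i)) : ℚ[X]) ≠ 0 := by
    intro s f hf
    rw [Finset.prod_ne_zero_iff]
    exact fun i hi => hone_sub _ (hf i hi)
  have hP4ne : aM P4 ≠ 0 := RatFunc.algebraMap_ne_zero (hne _ _ (fun i _ => by omega))
  have hP5ne : aM P5 ≠ 0 := RatFunc.algebraMap_ne_zero (hne _ _ (fun i _ => by omega))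
  have hD1ne : aM D1 ≠ 0 := RatFunc.algebraMap_ne_zero (hne _ _ (fun i _ => by omega))
  have hD2ne : aM D2 ≠ 0 := RatFunc.algebraMap_ne_zero (hne _ _ (fun i _ => by omega))
  have h1ne : aM (1 - Polynomial.X) ≠ 0 := by
    have := RatFunc.algebraMap_ne_zero (K := ℚ) (hone_sub 1 one_pos)
    rwa [pow_one] at this
  have hDsp : (1 - Polynomial.X) * P5 = D1 * (1 - Polynomial.X ^ (4*m+1)) * D2 :=
    Dsplit Polynomial.X m
  have h1ne' : (1 : RatFunc ℚ) - aM Polynomial.X ≠ 0 := by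
    rw [map_sub, map_one] at h1ne; exact h1ne
  have e1 : (aM P2) ^ 2 / (aM P4) ^ 2 * (aM Polynomial.X) ^ (2*m) * aM Dd
      = aM (P2 ^ 2 * Polynomial.X ^ (2*m) * D1 * D2) := by
    rw [hDd]
    simp only [map_mul, map_pow]
    field_simp
  have e2 : (1 - (aM Polynomial.X) ^ (4*m+1)) / (1 - aM Polynomial.X) * aM P3 / aM P5 * aM Dd
      = aM (P3 * P4 ^ 2) := by
    have hd : aM (1 - Polynomial.X) * aM P5 = aM D1 * aM (1 - Polynomial.X ^ (4*m+1)) * aM D2 := by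
      rw [← map_mul, ← map_mul, ← map_mul, hDsp]
    rw [hDd]
    simp only [map_mul, map_pow, map_sub, map_one] at hd ⊢
    field_simp
    linear_combination (-(aM P3)) * hd
  have hKey : ((aM P2) ^ 2 / (aM P4) ^ 2 * (aM Polynomial.X) ^ (2*m)
      - (1 - (aM Polynomial.X) ^ (4*m+1)) / (1 - aM Polynomial.X) * aM P3 / aM P5)
      * aM Dd = aM G := by
    rw [hG, sub_mul, e1, e2, ← map_sub]
  set F : RatFunc ℚ := (aM P2) ^ 2 / (aM P4) ^ 2 * (aM Polynomial.X) ^ (2*m)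
      - (1 - (aM Polynomial.X) ^ (4*m+1)) / (1 - aM Polynomial.X) * aM P3 / aM P5 with hF
  have hp : Prime (cyclotomic (4*m+1) ℚ) :=
    UniqueFactorizationMonoid.irreducible_iff_prime.mp (cyclotomic.irreducible_rat (by omega))
  have hΦ2G : (cyclotomic (4*m+1) ℚ) ^ 2 ∣ G := by
    have h := part2 m
    have hGeq : G = (∏ i ∈ range m, (1 - Polynomial.X ^ (4*i+2))) ^ 2 * Polynomial.X ^ (2*m)
          * (∏ i ∈ range m, (1 - Polynomial.X ^ (4*i+1)))
          * (∏ i ∈ range m, (1 - Polynomial.X ^ (4*m+1+(4*i+4))))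
        - (∏ i ∈ range m, (1 - Polynomial.X ^ (4*i+3)))
          * (∏ i ∈ range m, (1 - Polynomial.X ^ (4*m+1+(4*i+2))))
          * (∏ i ∈ range m, (1 - Polynomial.X ^ (4*i+4))) ^ 2 := by
      rw [hG, hP3, Csplit Polynomial.X m, hP2, hP4, hD1, hD2]
    rw [hGeq]
    exact h
  have hdenomne : aM F.denom ≠ 0 := RatFunc.algebraMap_ne_zero (RatFunc.denom_ne_zero F)
  have hnum : F.num * Dd = G * F.denom := by
    have h2 := hKey
    rw [← RatFunc.num_div_denom F, div_mul_eq_mul_div, div_eq_iff hdenomne] at h2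
    apply RatFunc.algebraMap_injective ℚ
    exact (map_mul aM F.num Dd).trans (h2.trans (map_mul aM G F.denom).symm)
  have hfac : ∀ (s : Finset ℕ) (f : ℕ → ℕ), (∀ i ∈ s, ¬ (4*m+1) ∣ f i) →
      ¬ (cyclotomic (4*m+1) ℚ) ∣ ∏ i ∈ s, (1 - Polynomial.X ^ (f i)) := by
    intro s f hf hdvd
    obtain ⟨i, hi, hdi⟩ := hp.exists_mem_finset_dvd hdvd
    exact cyclo_not_dvd (n := 4*m+1) (by omega) (hf i hi) hdi
  have hnd1 : ∀ k : ℕ, 0 < k → k < 4*m+1 → ¬ (4*m+1) ∣ k := by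
    intro k h1 h2 hd
    have := Nat.le_of_dvd h1 hd
    omega
  have hnd2 : ∀ k : ℕ, 4*m+1 < k → k < 2*(4*m+1) → ¬ (4*m+1) ∣ k := by
    intro k h1 h2 hd
    obtain ⟨c, rfl⟩ := hd
    rcases Nat.lt_or_ge c 2 with hc | hc
    · interval_cases c <;> omega
    · have : 2*(4*m+1) ≤ (4*m+1)*c := by
        calc 2*(4*m+1) = (4*m+1)*2 := by ring
        _ ≤ (4*m+1)*c := Nat.mul_le_mul_left (4*m+1) hc
      omega
  have hΦnotDd : ¬ (cyclotomic (4*m+1) ℚ) ∣ Dd := by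
    intro hdvd
    rw [hDd] at hdvd
    rcases hp.dvd_mul.mp hdvd with h | h
    · rcases hp.dvd_mul.mp h with h' | h'
      · have hP4d := hp.dvd_of_dvd_pow h'
        rw [hP4] at hP4d
        exact hfac _ _ (fun i hi => hnd1 _ (by omega)
          (by have := mem_range.mp hi; omega)) hP4d
      · rw [hD1] at h'
        exact hfac _ _ (fun i hi => hnd1 _ (by omega)
          (by have := mem_range.mp hi; omega)) h'
    · rw [hD2] at h
      exact hfac _ _ (fun i hi => hnd2 _ (by omega)
        (by have := mem_range.mp hi; omega)) h
  have hdvd2 : (cyclotomic (4*m+1) ℚ) ^ 2 ∣ F.num * Dd := by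
    rw [hnum]
    exact hΦ2G.mul_right F.denom
  exact sq_dvd_of_dvd_mul hp hdvd2 hΦnotDd
end

section
/- Let n ≡ 1 (mod 4) be an integer greater than 1, and r, s positive integers with r > s. Then, modulo Φ_{n^s}(q), the quotient (q^{n^s+1};q^4)_{(n^r-n^s)/4} / (q^{n^s+n};q^{4n})_{(n^{r-1}-n^{s-1})/4} is congruent to (q^{n^s+3};q^4)_{(n^r-n^s)/4} / (q^{n^s+3n};q^{4n})_{(n^{r-1}-n^{s-1})/4}, and this common value is not congruent to 0 modulo Φ_{n^s}(q). -/
open Finset Polynomial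

section Aux

lemma aux_pow_mod {T : Type*} [Monoid T] {x : T} {N : ℕ} (hx : x ^ N = 1) (e : ℕ) :
    x ^ e = x ^ (e % N) := by
  conv_lhs => rw [← Nat.mod_add_div e N, pow_add, pow_mul, hx, one_pow, mul_one]

lemma aux_prod_periodic {R : Type*} [CommMonoid R] (g : ℕ → R) (d m : ℕ)
    (hg : ∀ i, g (i + d) = g i) :
    ∏ i ∈ Finset.range (d * m), g i = (∏ i ∈ Finset.range d, g i) ^ m := by
  have hg' : ∀ k i, g (d * k + i) = g i := by
    intro k
    induction k with
    | zero => simp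
    | succ k ih =>
      intro i
      have : d * (k + 1) + i = (d * k + i) + d := by ring
      rw [this, hg, ih]
  induction m with
  | zero => simp
  | succ m ih =>
    rw [Nat.mul_succ, Finset.prod_range_add, ih, pow_succ]
    congr 1
    exact Finset.prod_congr rfl fun i _ => hg' m i

lemma aux_filter_mod_eq (nn c K' : ℕ) (hc : c < nn) :
    (Finset.range (nn * K')).filter (fun i => i % nn = c)
      = Finset.image (fun j => c + nn * j) (Finset.range K') := by
  ext i
  simp only [Finset.mem_filter, Finset.mem_range, Finset.mem_image]
  constructor
  · rintro ⟨hi, hm⟩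
    refine ⟨i / nn, Nat.div_lt_of_lt_mul (by omega), ?_⟩
    conv_rhs => rw [← Nat.mod_add_div i nn, hm]
  · rintro ⟨j, hj, rfl⟩
    have h1 : (c + nn * j) % nn = c := by
      rw [Nat.add_mul_mod_self_left, Nat.mod_eq_of_lt hc]
    have h2 : nn * (j + 1) ≤ nn * K' := Nat.mul_le_mul_left nn (by omega)
    have h3 : nn * (j + 1) = nn * j + nn := by ring
    exact ⟨by omega, h1⟩

lemma aux_prod_split {R : Type*} [CommMonoid R] (g : ℕ → R) (nn c K' : ℕ) (hc : c < nn) :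
    ∏ i ∈ Finset.range (nn * K'), g i
      = (∏ j ∈ Finset.range K', g (c + nn * j)) *
        ∏ i ∈ (Finset.range (nn * K')).filter (fun i => ¬ (i % nn = c)), g i := by
  rw [← Finset.prod_filter_mul_prod_filter_not (Finset.range (nn * K')) (fun i => i % nn = c)]
  congr 1
  rw [aux_filter_mod_eq nn c K' hc, Finset.prod_image]
  intro a _ b _ h
  have hnn : 0 < nn := by omega
  exact Nat.eq_of_mul_eq_mul_left hnn (by beta_reduce at h; omega)

lemma aux_card_filter_mod (nn t d : ℕ) (ht : t < nn) :
    ((Finset.range (nn * d)).filter (fun w => w % nn = t)).card = d := by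
  rw [aux_filter_mod_eq nn t d ht, Finset.card_image_of_injective _ (fun a b h => by
    have hnn : 0 < nn := by omega
    exact Nat.eq_of_mul_eq_mul_left hnn (by omega)), Finset.card_range]

lemma aux_inner {T : Type*} [CommRing T] (x : T) (n s : ℕ) (hn : 1 < n) (hs : 0 < s)
    (hcop : Nat.Coprime 4 n) (hx : x ^ (n ^ s) = 1) (u : ℕ) :
    ∏ a ∈ Finset.range (n ^ (s - 1)), (1 - x ^ (u + 4 * n * a))
      = ∏ w ∈ (Finset.range (n ^ s)).filter (fun w => w % n = u % n), (1 - x ^ w) := by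
  set N := n ^ s with hN
  set d := n ^ (s - 1) with hd
  have hNd : N = n * d := by
    rw [hN, hd, ← pow_succ']
    congr 1
    omega
  have hN0 : 0 < N := pow_pos (by omega) s
  have hd0 : 0 < d := pow_pos (by omega) _
  set φ : ℕ → ℕ := fun a => (u + 4 * n * a) % N with hφ
  have hinj : ∀ a ∈ Finset.range d, ∀ b ∈ Finset.range d, φ a = φ b → a = b := by
    intro a ha b hb h
    simp only [Finset.mem_range] at ha hb
    have hmod : u + 4 * n * a ≡ u + 4 * n * b [MOD N] := h
    have h2 : 4 * (n * a) ≡ 4 * (n * b) [MOD N] := by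
      have := Nat.ModEq.add_left_cancel' u hmod
      simpa [mul_assoc] using this
    have h3 : n * a ≡ n * b [MOD N] :=
      Nat.ModEq.cancel_left_of_coprime (by
        have : Nat.Coprime 4 N := hcop.pow_right s
        simpa [Nat.coprime_comm] using this) h2
    rw [hNd] at h3
    have h4 : a ≡ b [MOD d] := Nat.ModEq.mul_left_cancel' (by omega) h3
    have := h4
    unfold Nat.ModEq at this
    rw [Nat.mod_eq_of_lt ha, Nat.mod_eq_of_lt hb] at this
    exact this
  have himsub : Finset.image φ (Finset.range d)
      ⊆ (Finset.range N).filter (fun w => w % n = u % n) := by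
    intro w hw
    simp only [Finset.mem_image, Finset.mem_range] at hw
    obtain ⟨a, ha, rfl⟩ := hw
    simp only [Finset.mem_filter, Finset.mem_range]
    constructor
    · exact Nat.mod_lt _ hN0
    · have hdvd : n ∣ N := by rw [hNd]; exact Dvd.intro d rfl
      rw [Nat.mod_mod_of_dvd _ hdvd]
      have : u + 4 * n * a = u + n * (4 * a) := by ring
      rw [this, Nat.add_mul_mod_self_left]
  have hcard : ((Finset.range N).filter (fun w => w % n = u % n)).card = d := by
    rw [hNd]
    exact aux_card_filter_mod n (u % n) d (Nat.mod_lt _ (by omega))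
  have him : Finset.image φ (Finset.range d)
      = (Finset.range N).filter (fun w => w % n = u % n) := by
    apply Finset.eq_of_subset_of_card_le himsub
    rw [hcard, Finset.card_image_of_injOn (fun a ha b hb => hinj a ha b hb), Finset.card_range]
  rw [← him, Finset.prod_image hinj]
  exact Finset.prod_congr rfl fun a _ => by rw [← aux_pow_mod hx]

lemma aux_outer {T : Type*} [CommMonoid T] (F : ℕ → T) (n u c : ℕ) (hn : 1 < n)
    (hcop : Nat.Coprime 4 n) (hc : c < n) (hc0 : (u + 4 * c) % n = 0) :
    ∏ b ∈ (Finset.range n).filter (fun b => ¬ (b = c)), F ((u + 4 * b) % n)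
      = ∏ t ∈ (Finset.range n).filter (fun t => ¬ (t = 0)), F t := by
  set β : ℕ → ℕ := fun b => (u + 4 * b) % n with hβ
  have hinj : ∀ a ∈ Finset.range n, ∀ b ∈ Finset.range n, β a = β b → a = b := by
    intro a ha b hb h
    simp only [Finset.mem_range] at ha hb
    have hmod : u + 4 * a ≡ u + 4 * b [MOD n] := h
    have h2 := Nat.ModEq.add_left_cancel' u hmod
    have h3 : a ≡ b [MOD n] :=
      Nat.ModEq.cancel_left_of_coprime (by simpa [Nat.coprime_comm] using hcop) h2
    have := h3
    unfold Nat.ModEq at this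
    rw [Nat.mod_eq_of_lt ha, Nat.mod_eq_of_lt hb] at this
    exact this
  have hsub : Finset.image β ((Finset.range n).filter (fun b => ¬ (b = c)))
      ⊆ (Finset.range n).filter (fun t => ¬ (t = 0)) := by
    intro w hw
    simp only [Finset.mem_image, Finset.mem_filter, Finset.mem_range] at hw ⊢
    obtain ⟨b, ⟨hb, hbc⟩, rfl⟩ := hw
    refine ⟨Nat.mod_lt _ (by omega), fun h0 => hbc ?_⟩
    exact hinj b (Finset.mem_range.mpr hb) c (Finset.mem_range.mpr hc) (h0.trans hc0.symm)
  have hcardsrc : ((Finset.range n).filter (fun b => ¬ (b = c))).card = n - 1 := by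
    have he : ((Finset.range n).filter (fun b => ¬ (b = c))) = (Finset.range n).erase c := by
      ext a; simp [Finset.mem_erase, and_comm]
    rw [he, Finset.card_erase_of_mem (Finset.mem_range.mpr hc), Finset.card_range]
  have hcardtgt : ((Finset.range n).filter (fun t => ¬ (t = 0))).card = n - 1 := by
    have he : ((Finset.range n).filter (fun t => ¬ (t = 0))) = (Finset.range n).erase 0 := by
      ext a; simp [Finset.mem_erase, and_comm]
    rw [he, Finset.card_erase_of_mem (Finset.mem_range.mpr (by omega)), Finset.card_range]
  have him : Finset.image β ((Finset.range n).filter (fun b => ¬ (b = c)))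
      = (Finset.range n).filter (fun t => ¬ (t = 0)) := by
    apply Finset.eq_of_subset_of_card_le hsub
    rw [hcardtgt, Finset.card_image_of_injOn (fun a ha b hb =>
      hinj a (Finset.mem_filter.mp ha).1 b (Finset.mem_filter.mp hb).1), hcardsrc]
  rw [← him, Finset.prod_image (fun a ha b hb =>
    hinj a (Finset.mem_filter.mp ha).1 b (Finset.mem_filter.mp hb).1)]

lemma aux_main {T : Type*} [CommRing T] (x : T) (n s M u c : ℕ) (hn : 1 < n) (hs : 0 < s)
    (hcop : Nat.Coprime 4 n) (hx : x ^ (n ^ s) = 1) (hc : c < n)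
    (hc0 : (u + 4 * c) % n = 0) :
    ∏ i ∈ (Finset.range (n * (n ^ (s - 1) * M))).filter (fun i => ¬ (i % n = c)),
        (1 - x ^ (u + 4 * i))
      = ∏ t ∈ (Finset.range n).filter (fun t => ¬ (t = 0)),
          (∏ w ∈ (Finset.range (n ^ s)).filter (fun w => w % n = t), (1 - x ^ w)) ^ M := by
  set K := n ^ (s - 1) * M with hK
  set s₀ := (Finset.range (n * K)).filter (fun i => ¬ (i % n = c)) with hs₀
  set t₀ := (Finset.range n).filter (fun b => ¬ (b = c)) with ht₀
  have hmaps : ∀ i ∈ s₀, i % n ∈ t₀ := by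
    intro i hi
    simp only [hs₀, Finset.mem_filter, Finset.mem_range] at hi
    simp only [ht₀, Finset.mem_filter, Finset.mem_range]
    exact ⟨Nat.mod_lt _ (by omega), hi.2⟩
  rw [← Finset.prod_fiberwise_of_maps_to hmaps (fun i => 1 - x ^ (u + 4 * i))]
  rw [← aux_outer (fun t =>
      (∏ w ∈ (Finset.range (n ^ s)).filter (fun w => w % n = t), (1 - x ^ w)) ^ M)
      n u c hn hcop hc hc0]
  refine Finset.prod_congr rfl fun b hb => ?_
  simp only [ht₀, Finset.mem_filter, Finset.mem_range] at hb
  have hfib : s₀.filter (fun i => i % n = b)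
      = (Finset.range (n * K)).filter (fun i => i % n = b) := by
    ext i
    simp only [hs₀, Finset.mem_filter, Finset.mem_range]
    constructor
    · rintro ⟨⟨h1, _⟩, h2⟩; exact ⟨h1, h2⟩
    · rintro ⟨h1, h2⟩; exact ⟨⟨h1, by rw [h2]; exact hb.2⟩, h2⟩
  rw [hfib, aux_filter_mod_eq n b K hb.1, Finset.prod_image (by
    intro a _ b' _ h
    exact Nat.eq_of_mul_eq_mul_left (show 0 < n by omega) (by beta_reduce at h; omega))]
  have hre : ∀ j, u + 4 * (b + n * j) = (u + 4 * b) + 4 * n * j := by intro j; ring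
  have step1 : ∏ j ∈ Finset.range K, (1 - x ^ (u + 4 * (b + n * j)))
      = (∏ j ∈ Finset.range (n ^ (s - 1)), (1 - x ^ ((u + 4 * b) + 4 * n * j))) ^ M := by
    rw [hK]
    rw [← aux_prod_periodic (fun j => (1 - x ^ ((u + 4 * b) + 4 * n * j))) (n ^ (s - 1)) M (by
      intro j
      congr 1
      have he : (u + 4 * b) + 4 * n * (j + n ^ (s - 1)) = ((u + 4 * b) + 4 * n * j) + 4 * n ^ s := by
        have : n * n ^ (s - 1) = n ^ s := by
          rw [← pow_succ']; congr 1; omega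
        calc (u + 4 * b) + 4 * n * (j + n ^ (s - 1))
            = ((u + 4 * b) + 4 * n * j) + 4 * (n * n ^ (s - 1)) := by ring
          _ = ((u + 4 * b) + 4 * n * j) + 4 * n ^ s := by rw [this]
      rw [he, pow_add]
      have h1 : x ^ (4 * n ^ s) = 1 := by rw [mul_comm, pow_mul, hx, one_pow]
      rw [h1, mul_one])]
    exact Finset.prod_congr rfl fun j _ => by rw [hre]
  rw [step1, aux_inner x n s hn hs hcop hx (u + 4 * b)]

lemma aux_not_dvd (N w : ℕ) (hN : 0 < N) (hw0 : 0 < w) (hwN : w < N) :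
    ¬ (Polynomial.cyclotomic N ℚ ∣ (1 - Polynomial.X ^ w)) := by
  intro h
  set ζ : ℂ := Complex.exp (2 * Real.pi * Complex.I / N) with hζdef
  have hζ : IsPrimitiveRoot ζ N := Complex.isPrimitiveRoot_exp N hN.ne'
  have hmap : Polynomial.cyclotomic N ℂ ∣ (1 - (Polynomial.X : Polynomial ℂ) ^ w) := by
    have h2 := Polynomial.map_dvd (algebraMap ℚ ℂ) h
    simpa [Polynomial.map_cyclotomic] using h2
  obtain ⟨q, hq⟩ := hmap
  have hroot : Polynomial.eval ζ (Polynomial.cyclotomic N ℂ) = 0 := hζ.isRoot_cyclotomic hN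
  have hz : (1 : ℂ) - ζ ^ w = 0 := by
    have := congrArg (Polynomial.eval ζ) hq
    simpa [hroot] using this
  have hone : ζ ^ w = 1 := (sub_eq_zero.mp hz).symm
  have hdvd := (hζ.pow_eq_one_iff_dvd w).mp hone
  have := Nat.le_of_dvd hw0 hdvd
  omega

lemma aux_poch_eq (e m k : ℕ) :
    poch (RatFunc.X ^ e) (RatFunc.X ^ m) k
      = algebraMap (Polynomial ℚ) (RatFunc ℚ)
          (∏ i ∈ Finset.range k, (1 - Polynomial.X ^ (e + m * i))) := by
  unfold poch
  rw [map_prod]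
  refine Finset.prod_congr rfl fun i _ => ?_
  rw [map_sub, map_one, map_pow, RatFunc.algebraMap_X, pow_add, pow_mul]

end Aux

/-- for `n ≡ 1 (mod 4)`, `n > 1`, `r > s ≥ 1`,
`(q^{nˢ+1};q⁴)_{(nʳ-nˢ)/4}/(q^{nˢ+n};q⁴ⁿ)_{(nʳ⁻¹-nˢ⁻¹)/4}
 ≡ (q^{nˢ+3};q⁴)_{(nʳ-nˢ)/4}/(q^{nˢ+3n};q⁴ⁿ)_{(nʳ⁻¹-nˢ⁻¹)/4} (mod Φ_{nˢ}(q))`,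
and this common value is not `≡ 0 (mod Φ_{nˢ}(q))`. -/
theorem stmt10 (n r s : ℕ) (hn : 1 < n) (hn4 : n % 4 = 1) (hs : 0 < s) (hrs : s < r) :
    ((Polynomial.cyclotomic (n ^ s) ℚ) ∣
        (poch (RatFunc.X ^ (n ^ s + 1)) (RatFunc.X ^ 4) ((n ^ r - n ^ s) / 4)
            / poch (RatFunc.X ^ (n ^ s + n)) (RatFunc.X ^ (4 * n))
                ((n ^ (r - 1) - n ^ (s - 1)) / 4)
          - poch (RatFunc.X ^ (n ^ s + 3)) (RatFunc.X ^ 4) ((n ^ r - n ^ s) / 4)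
            / poch (RatFunc.X ^ (n ^ s + 3 * n)) (RatFunc.X ^ (4 * n))
                ((n ^ (r - 1) - n ^ (s - 1)) / 4)).num)
    ∧ ¬ ((Polynomial.cyclotomic (n ^ s) ℚ) ∣
        (poch (RatFunc.X ^ (n ^ s + 1)) (RatFunc.X ^ 4) ((n ^ r - n ^ s) / 4)
            / poch (RatFunc.X ^ (n ^ s + n)) (RatFunc.X ^ (4 * n))
                ((n ^ (r - 1) - n ^ (s - 1)) / 4)).num) := by
  -- arithmetic setup
  have hN0 : 0 < n ^ s := pow_pos (by omega) s
  set M := (n ^ (r - s) - 1) / 4 with hM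
  have hpowmod : n ^ (r - s) % 4 = 1 := by
    rw [Nat.pow_mod, hn4, one_pow]
    norm_num
  have h1le : 1 ≤ n ^ (r - s) := Nat.one_le_pow _ _ (by omega)
  have hM4 : n ^ (r - s) = 4 * M + 1 := by omega
  have hsplit : n ^ r = n ^ s * n ^ (r - s) := by rw [← pow_add]; congr 1; omega
  have hsplit' : n ^ (r - 1) = n ^ (s - 1) * n ^ (r - s) := by rw [← pow_add]; congr 1; omega
  have hK : (n ^ r - n ^ s) / 4 = n ^ s * M := by
    have hKsub : n ^ r - n ^ s = 4 * (n ^ s * M) := by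
      apply Nat.sub_eq_of_eq_add
      rw [hsplit, hM4]; ring
    rw [hKsub]; exact Nat.mul_div_cancel_left _ (by norm_num)
  have hK' : (n ^ (r - 1) - n ^ (s - 1)) / 4 = n ^ (s - 1) * M := by
    have hKsub : n ^ (r - 1) - n ^ (s - 1) = 4 * (n ^ (s - 1) * M) := by
      apply Nat.sub_eq_of_eq_add
      rw [hsplit', hM4]; ring
    rw [hKsub]; exact Nat.mul_div_cancel_left _ (by norm_num)
  have hns : n ^ s = n * n ^ (s - 1) := by rw [← pow_succ']; congr 1; omega
  have hKmul : n ^ s * M = n * (n ^ (s - 1) * M) := by rw [hns]; ring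
  set c := (n - 1) / 4 with hc
  have hc4 : 4 * c + 1 = n := by omega
  have hcn : c < n := by omega
  set c₂ := (3 * n - 3) / 4 with hc₂
  have hc₂4 : 4 * c₂ + 3 = 3 * n := by omega
  have hc₂n : c₂ < n := by omega
  have hcop : Nat.Coprime 4 n := by
    obtain ⟨k, hk⟩ : ∃ k, n = 4 * k + 1 := ⟨n / 4, by omega⟩
    rw [hk]
    simpa using (Nat.coprime_mul_left_add_right 4 1 k).mpr (Nat.coprime_one_right 4)
  set KK := n ^ (s - 1) * M with hKK
  -- the leftover polynomials
  set P : ℕ → ℕ → Polynomial ℚ := fun u cc =>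
    ∏ i ∈ (Finset.range (n * KK)).filter (fun i => ¬ (i % n = cc)),
      (1 - Polynomial.X ^ (u + 4 * i)) with hP
  -- reduce the RatFunc quotients to polynomials
  have quot : ∀ u cc : ℕ, 0 < u → cc < n →
      poch (RatFunc.X ^ u) (RatFunc.X ^ 4) ((n ^ r - n ^ s) / 4)
        / poch (RatFunc.X ^ (u + 4 * cc)) (RatFunc.X ^ (4 * n)) ((n ^ (r - 1) - n ^ (s - 1)) / 4)
      = algebraMap (Polynomial ℚ) (RatFunc ℚ) (P u cc) := by
    intro u cc hu hccn
    rw [hK, hK', aux_poch_eq, aux_poch_eq]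
    have hBnum : ∀ j : ℕ, u + 4 * cc + 4 * n * j = (u + 4 * cc) + (4 * n) * j := fun j => by ring
    have hA : (∏ i ∈ Finset.range (n ^ s * M), (1 - (Polynomial.X : Polynomial ℚ) ^ (u + 4 * i)))
        = (∏ j ∈ Finset.range KK, (1 - Polynomial.X ^ ((u + 4 * cc) + (4 * n) * j))) * P u cc := by
      rw [hKmul,
        aux_prod_split (fun i => (1 - (Polynomial.X : Polynomial ℚ) ^ (u + 4 * i))) n cc KK hccn]
      congr 1
      refine Finset.prod_congr rfl fun j _ => ?_
      congr 2
      ring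
    have hBne : (∏ j ∈ Finset.range KK,
        (1 - (Polynomial.X : Polynomial ℚ) ^ ((u + 4 * cc) + (4 * n) * j))) ≠ 0 := by
      rw [Finset.prod_ne_zero_iff]
      intro j _
      intro h0
      have := congrArg (Polynomial.eval 0) h0
      simp [zero_pow (show u + 4 * cc + 4 * n * j ≠ 0 by omega)] at this
    rw [hA, map_mul, mul_div_cancel_left₀ _ (RatFunc.algebraMap_ne_zero hBne)]
  have hquot1 := quot (n ^ s + 1) c (by omega) hcn
  have hquot2 := quot (n ^ s + 3) c₂ (by omega) hc₂n
  have he1 : n ^ s + 1 + 4 * c = n ^ s + n := by omega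
  have he2 : n ^ s + 3 + 4 * c₂ = n ^ s + 3 * n := by omega
  rw [he1] at hquot1
  rw [he2] at hquot2
  rw [hquot1, hquot2]
  -- quotient ring setup
  set Φ := Polynomial.cyclotomic (n ^ s) ℚ with hΦ
  have hΦirr : Irreducible Φ := Polynomial.cyclotomic.irreducible_rat hN0
  set I : Ideal (Polynomial ℚ) := Ideal.span {Φ} with hI
  haveI hIprime : I.IsPrime := (Ideal.span_singleton_prime hΦirr.ne_zero).mpr
    (hΦirr.prime)
  set π : Polynomial ℚ →+* (Polynomial ℚ ⧸ I) := Ideal.Quotient.mk I with hπdef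
  have hπ0 : ∀ z, π z = 0 ↔ Φ ∣ z := fun z => by
    rw [hπdef, Ideal.Quotient.eq_zero_iff_mem, hI, Ideal.mem_span_singleton]
  have hx : (π Polynomial.X) ^ (n ^ s) = 1 := by
    have hdvd : Φ ∣ Polynomial.X ^ (n ^ s) - 1 := Polynomial.cyclotomic.dvd_X_pow_sub_one _ _
    have h0 : π (Polynomial.X ^ (n ^ s) - 1) = 0 := (hπ0 _).mpr hdvd
    rw [map_sub, map_pow, map_one, sub_eq_zero] at h0
    exact h0
  have hπP : ∀ u cc : ℕ, cc < n → (u + 4 * cc) % n = 0 →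
      π (P u cc) = ∏ t ∈ (Finset.range n).filter (fun t => ¬ (t = 0)),
        (∏ w ∈ (Finset.range (n ^ s)).filter (fun w => w % n = t),
          (1 - (π Polynomial.X) ^ w)) ^ M := by
    intro u cc h1 h2
    rw [hP]
    simp only []
    rw [map_prod]
    have hterm : ∀ i, π (1 - Polynomial.X ^ (u + 4 * i)) = 1 - (π Polynomial.X) ^ (u + 4 * i) :=
      fun i => by rw [map_sub, map_one, map_pow]
    rw [Finset.prod_congr rfl (fun i _ => hterm i)]
    exact aux_main (π Polynomial.X) n s M u cc hn hs hcop hx h1 h2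
  have hmod1 : (n ^ s + 1 + 4 * c) % n = 0 := by
    rw [he1]
    have : n ^ s + n = n * (n ^ (s - 1) + 1) := by rw [hns]; ring
    rw [this, Nat.mul_mod_right]
  have hmod2 : (n ^ s + 3 + 4 * c₂) % n = 0 := by
    rw [he2]
    have : n ^ s + 3 * n = n * (n ^ (s - 1) + 3) := by rw [hns]; ring
    rw [this, Nat.mul_mod_right]
  have hπ1 := hπP (n ^ s + 1) c hcn hmod1
  have hπ2 := hπP (n ^ s + 3) c₂ hc₂n hmod2
  constructor
  · -- the difference is divisible by Φ
    rw [← map_sub, RatFunc.num_algebraMap]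
    apply (hπ0 _).mp
    rw [map_sub, hπ1, hπ2, sub_self]
  · -- the common value is not divisible by Φ
    rw [RatFunc.num_algebraMap]
    intro hdvd
    have h0 : π (P (n ^ s + 1) c) = 0 := (hπ0 _).mpr hdvd
    rw [hπ1] at h0
    have hne : (∏ t ∈ (Finset.range n).filter (fun t => ¬ (t = 0)),
        (∏ w ∈ (Finset.range (n ^ s)).filter (fun w => w % n = t),
          (1 - (π Polynomial.X) ^ w)) ^ M) ≠ 0 := by
      rw [Finset.prod_ne_zero_iff]
      intro t ht
      simp only [Finset.mem_filter, Finset.mem_range] at ht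
      apply pow_ne_zero
      rw [Finset.prod_ne_zero_iff]
      intro w hw
      simp only [Finset.mem_filter, Finset.mem_range] at hw
      have hw0 : 0 < w := by
        rcases Nat.eq_zero_or_pos w with h | h
        · exfalso; apply ht.2; rw [← hw.2, h, Nat.zero_mod]
        · exact h
      have hterm : (1 : Polynomial ℚ ⧸ I) - (π Polynomial.X) ^ w = π (1 - Polynomial.X ^ w) := by
        rw [map_sub, map_one, map_pow]
      rw [hterm, Ne, hπ0]
      exact aux_not_dvd (n ^ s) w hN0 hw0 hw.1
    exact hne h0
end

section
/- Let n ≡ 1 (mod 4) be an integer greater than 1 and let r, s be positive integers with r > s. Then [n]_q · (q^3;q^4)_{(n^r-1)/2} (q^{5n};q^{4n})_{(n^{r-1}-1)/2} / ((q^5;q^4)_{(n^r-1)/2} (q^{3n};q^{4n})_{(n^{r-1}-1)/2}) ≡ [n]_q · (q^3;q^4)_{(n^s-1)/2} (q^{5n};q^{4n})_{(n^{s-1}-1)/2} / ((q^5;q^4)_{(n^s-1)/2} (q^{3n};q^{4n})_{(n^{s-1}-1)/2}) modulo Φ_{n^s}(q). -/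
open Finset Polynomial

noncomputable section Stmt11Aux

/-- product of `1 - X^(e*(c+4i))` over `i ∈ S` -/
def PF (c e : ℕ) (S : Finset ℕ) : ℚ[X] := ∏ i ∈ S, (1 - (X : ℚ[X])^(e*(c+4*i)))

lemma one_sub_X_pow_ne_zero_s11 {m : ℕ} (hm : m ≠ 0) : (1 : ℚ[X]) - X^m ≠ 0 := by
  intro h
  have h1 : (X : ℚ[X])^m = 1 := by linear_combination -h
  have := congrArg natDegree h1
  rw [natDegree_X_pow, natDegree_one] at this
  exact hm this

lemma PF_ne_zero {c e : ℕ} (hc : c ≠ 0) (he : e ≠ 0) (S : Finset ℕ) : PF c e S ≠ 0 := by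
  refine Finset.prod_ne_zero_iff.mpr fun i _ => one_sub_X_pow_ne_zero_s11 ?_
  positivity

lemma pow_eq_of_modEq {R : Type*} [Monoid R] {ζ : R} {m a b : ℕ} (hζ : ζ^m = 1)
    (h : a ≡ b [MOD m]) : ζ^a = ζ^b := by
  rcases le_total a b with hab | hab
  · obtain ⟨k, hk⟩ := (Nat.modEq_iff_dvd' hab).mp h
    have : b = a + m * k := by omega
    rw [this, pow_add, pow_mul, hζ, one_pow, mul_one]
  · obtain ⟨k, hk⟩ := (Nat.modEq_iff_dvd' hab).mp h.symm
    have : a = b + m * k := by omega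
    rw [this, pow_add, pow_mul, hζ, one_pow, mul_one]

/-- the shift map used to pair residues -/
def phi (d A B i : ℕ) : ℕ := A + d*((i-A)/d) + ((i-A) % d + B) % d

lemma phi_mem {d A B K i : ℕ} (hd0 : 0 < d) (hi1 : A ≤ i) (hi2 : i < A + K*d) :
    A ≤ phi d A B i ∧ phi d A B i < A + K*d := by
  have h1 : d * ((i-A)/d) + (i-A) % d = i - A := Nat.div_add_mod _ _
  have hl : (i-A) % d < d := Nat.mod_lt _ hd0
  have hq : (i-A)/d < K := (Nat.div_lt_iff_lt_mul hd0).mpr (by omega)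
  have h2 : ((i-A) % d + B) % d < d := Nat.mod_lt _ hd0
  have h3 : d * ((i-A)/d + 1) ≤ d * K := Nat.mul_le_mul_left d hq
  have h4 : d * ((i-A)/d + 1) = d * ((i-A)/d) + d := by ring
  unfold phi
  constructor
  · omega
  · have : K * d = d * K := Nat.mul_comm _ _
    omega

lemma phi_modeq {d A B c c' i : ℕ} (hd0 : 0 < d) (hB : c' + 4*B = 2*d + c) (hi1 : A ≤ i) :
    (c' + 4 * phi d A B i) % d = (c + 4*i) % d := by
  set q := (i-A)/d with hqdef
  set l := (i-A) % d with hldef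
  have h1 : d * q + l = i - A := Nat.div_add_mod _ _
  have hi : i = A + d*q + l := by omega
  set m := (l + B) % d with hmdef
  set J := (l+B)/d with hJdef
  have h2 : d * J + m = l + B := Nat.div_add_mod _ _
  have hphi : phi d A B i = A + d*q + m := by unfold phi; rw [← hqdef, ← hldef, ← hmdef]
  have key : (c' + 4 * phi d A B i) + d*(4*J) = (c + 4*i) + d*2 := by
    rw [hphi]
    have e1 : d*(4*J) = 4*(d*J) := by ring
    have e2 : 4*i = 4*A + 4*(d*q) + 4*l := by omega
    rw [e1, e2]
    omega
  calc (c' + 4 * phi d A B i) % d = ((c' + 4 * phi d A B i) + d*(4*J)) % d := by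
        rw [Nat.add_mul_mod_self_left]
    _ = ((c + 4*i) + d*2) % d := by rw [key]
    _ = (c + 4*i) % d := by rw [Nat.add_mul_mod_self_left]

lemma phi_phi {d A B B' i : ℕ} (hd0 : 0 < d) (hBB' : B + B' = d) (hi1 : A ≤ i) :
    phi d A B' (phi d A B i) = i := by
  set q := (i-A)/d with hqdef
  set l := (i-A) % d with hldef
  have h1 : d * q + l = i - A := Nat.div_add_mod _ _
  have hl : l < d := Nat.mod_lt _ hd0
  have hi : i = A + d*q + l := by omega
  set m := (l + B) % d with hmdef
  have hm : m < d := Nat.mod_lt _ hd0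
  have hphi : phi d A B i = A + d*q + m := by unfold phi; rw [← hqdef, ← hldef, ← hmdef]
  have hdiv : (d*q + m)/d = q := by rw [Nat.mul_add_div hd0, Nat.div_eq_of_lt hm, add_zero]
  have hmod : (d*q + m) % d = m := by rw [Nat.mul_add_mod, Nat.mod_eq_of_lt hm]
  rw [hphi]
  unfold phi
  have hsub2 : A + d*q + m - A = d*q + m := by omega
  rw [hsub2, hdiv, hmod]
  have hkey : (m + B') % d = l := by
    rw [hmdef, Nat.mod_add_mod, add_assoc, hBB', Nat.add_mod_right, Nat.mod_eq_of_lt hl]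
  rw [hkey]
  omega


lemma arith_fwd {d A c K a : ℕ} (hd : d = 2*A+1) (hd4 : d % 4 = 1) (hc : c = 3 ∨ c = 5)
    (ha1 : A ≤ a) (ha2 : a < A + K*d) (hdvd : d ∣ (c + 4*a)) :
    ∃ u, u < K ∧ ((c+4*a)/d - c)/4 = u ∧ (c+4*u)*d = c + 4*a := by
  have hd0 : 0 < d := by omega
  obtain ⟨t, htd⟩ : ∃ t, t * d = c + 4*a := ⟨(c+4*a)/d, Nat.div_mul_cancel hdvd⟩
  have hdivt : (c+4*a)/d = t := by rw [← htd, Nat.mul_div_cancel _ hd0]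
  have h1 : (t*d) % 4 = (t % 4) % 4 := by rw [Nat.mul_mod, hd4, mul_one]
  have htc : c ≤ t := by
    rcases hc with rfl | rfl
    · omega
    · have ht1 : t ≠ 1 := by intro h; rw [h, one_mul] at htd; omega
      omega
  have htK : t < c + 4*K := by
    by_contra hcon
    push_neg at hcon
    have h2 : (c + 4*K) * d ≤ t * d := Nat.mul_le_mul_right d hcon
    have h3 : (c+4*K)*d = c*d + 4*(K*d) := by ring
    rcases hc with rfl | rfl
    · have h4 : 3*d = d + d + d := by ring
      omega
    · have h4 : 5*d = d + d + d + d + d := by ring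
      omega
  refine ⟨(t - c)/4, by omega, by omega, ?_⟩
  have : c + 4*((t-c)/4) = t := by omega
  rw [this, htd]

lemma arith_bwd {d A c K u : ℕ} (hd : d = 2*A+1) (hd4 : d % 4 = 1) (hc : c = 3 ∨ c = 5)
    (hu : u < K) :
    ∃ v, c + 4*v = (c+4*u)*d ∧ A ≤ v ∧ v < A + K*d ∧ d ∣ (c + 4*v) ∧
      ((c+4*u)*d - c)/4 = v := by
  have hd0 : 0 < d := by omega
  have hM4 : ((c+4*u)*d) % 4 = ((c+4*u) % 4) % 4 := by rw [Nat.mul_mod, hd4, mul_one]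
  have hMlow : (c+4*0)*d ≤ (c+4*u)*d := Nat.mul_le_mul_right d (by omega)
  have hMhigh : (c+4*u+4)*d ≤ (c+4*K)*d := Nat.mul_le_mul_right d (by omega)
  have he1 : (c+4*u+4)*d = (c+4*u)*d + 4*d := by ring
  have he2 : (c+4*K)*d = c*d + 4*(K*d) := by ring
  have he3 : (c+4*0)*d = c*d := by ring
  have hv : c + 4*(((c+4*u)*d - c)/4) = (c+4*u)*d := by
    rcases hc with rfl | rfl
    · have h4 : 3*d = d + d + d := by ring
      omega
    · have h4 : 5*d = d + d + d + d + d := by ring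
      omega
  refine ⟨((c+4*u)*d - c)/4, hv, ?_, ?_, ?_, rfl⟩
  · rcases hc with rfl | rfl
    · have h4 : 3*d = d + d + d := by ring
      omega
    · have h4 : 5*d = d + d + d + d + d := by ring
      omega
  · rcases hc with rfl | rfl
    · have h4 : 3*d = d + d + d := by ring
      omega
    · have h4 : 5*d = d + d + d + d + d := by ring
      omega
  · rw [hv]; exact Dvd.intro_left _ rfl

lemma split_prod {d K c e A : ℕ} (hd : d = 2*A+1) (hd4 : d % 4 = 1)
    (hc : c = 3 ∨ c = 5) {P : ℕ} (hP : P = e*d) :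
    PF c e (Finset.Ico A (A+K*d)) =
      (∏ u ∈ Finset.range K, (1 - (X : ℚ[X])^(P*(c+4*u)))) *
      PF c e ((Finset.Ico A (A+K*d)).filter (fun i => ¬ d ∣ (c+4*i))) := by
  unfold PF
  rw [← Finset.prod_filter_mul_prod_filter_not (Finset.Ico A (A+K*d)) (fun i => d ∣ (c+4*i))]
  congr 1
  refine Finset.prod_bij' (i := fun a _ => ((c+4*a)/d - c)/4)
    (j := fun u _ => ((c+4*u)*d - c)/4) ?_ ?_ ?_ ?_ ?_
  · intro a ha
    simp only [Finset.mem_filter, Finset.mem_Ico] at ha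
    obtain ⟨u, hu1, hu2, _⟩ := arith_fwd hd hd4 hc ha.1.1 ha.1.2 ha.2
    simp only [Finset.mem_range, hu2]
    exact hu1
  · intro u hu
    simp only [Finset.mem_range] at hu
    obtain ⟨v, hv1, hv2, hv3, hv4, hv5⟩ := arith_bwd hd hd4 hc (u := u) hu
    simp only [Finset.mem_filter, Finset.mem_Ico, hv5]
    exact ⟨⟨hv2, hv3⟩, hv4⟩
  · intro a ha
    simp only [Finset.mem_filter, Finset.mem_Ico] at ha
    obtain ⟨u, hu1, hu2, hu3⟩ := arith_fwd hd hd4 hc ha.1.1 ha.1.2 ha.2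
    simp only [hu2, hu3]
    omega
  · intro u hu
    simp only [Finset.mem_range] at hu
    obtain ⟨v, hv1, hv2, hv3, hv4, hv5⟩ := arith_bwd hd hd4 hc (u := u) hu
    have hdd : (c + 4*v)/d = (c+4*u) := by rw [hv1, Nat.mul_div_cancel _ (by omega : 0 < d)]
    simp only [hv5]
    rw [hdd]
    omega
  · intro a ha
    simp only [Finset.mem_filter, Finset.mem_Ico] at ha
    obtain ⟨u, hu1, hu2, hu3⟩ := arith_fwd hd hd4 hc ha.1.1 ha.1.2 ha.2
    simp only [hu2]
    congr 2
    rw [hP, ← hu3]; ring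


lemma pair_prod {F : Type*} [CommRing F] (ζ : F) {d K e A : ℕ} (hd : d = 2*A+1)
    (hζ : ζ^(e*d) = 1) :
    ∏ i ∈ (Finset.Ico A (A+K*d)).filter (fun i => ¬ d ∣ (3+4*i)), (1 - ζ^(e*(3+4*i))) =
    ∏ i ∈ (Finset.Ico A (A+K*d)).filter (fun i => ¬ d ∣ (5+4*i)), (1 - ζ^(e*(5+4*i))) := by
  have hd0 : 0 < d := by omega
  have hB1 : 5 + 4*A = 2*d + 3 := by omega
  have hB2 : 3 + 4*(A+1) = 2*d + 5 := by omega
  refine Finset.prod_bij' (i := fun a _ => phi d A A a) (j := fun b _ => phi d A (A+1) b)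
    ?_ ?_ ?_ ?_ ?_
  · intro a ha
    simp only [Finset.mem_filter, Finset.mem_Ico] at ha ⊢
    obtain ⟨⟨h1, h2⟩, h3⟩ := ha
    obtain ⟨hm1, hm2⟩ := phi_mem (B := A) hd0 h1 h2
    refine ⟨⟨hm1, hm2⟩, ?_⟩
    have hmod := phi_modeq (B := A) (c := 3) (c' := 5) (i := a) hd0 hB1 h1
    intro hdvd
    rw [Nat.dvd_iff_mod_eq_zero] at hdvd h3
    exact h3 (by omega)
  · intro b hb
    simp only [Finset.mem_filter, Finset.mem_Ico] at hb ⊢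
    obtain ⟨⟨h1, h2⟩, h3⟩ := hb
    obtain ⟨hm1, hm2⟩ := phi_mem (B := A+1) hd0 h1 h2
    refine ⟨⟨hm1, hm2⟩, ?_⟩
    have hmod := phi_modeq (B := A+1) (c := 5) (c' := 3) (i := b) hd0 hB2 h1
    intro hdvd
    rw [Nat.dvd_iff_mod_eq_zero] at hdvd h3
    exact h3 (by omega)
  · intro a ha
    simp only [Finset.mem_filter, Finset.mem_Ico] at ha
    exact phi_phi hd0 (by omega) ha.1.1
  · intro b hb
    simp only [Finset.mem_filter, Finset.mem_Ico] at hb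
    exact phi_phi hd0 (by omega) hb.1.1
  · intro a ha
    simp only [Finset.mem_filter, Finset.mem_Ico] at ha
    have hmod := phi_modeq (B := A) (c := 3) (c' := 5) (i := a) hd0 hB1 ha.1.1
    congr 1
    exact (pow_eq_of_modEq hζ (Nat.ModEq.mul_left' (c := e) hmod)).symm

lemma aeval_PF {F : Type*} [CommRing F] [Algebra ℚ F] (ζ : F) (c e : ℕ) (S : Finset ℕ) :
    aeval ζ (PF c e S) = ∏ i ∈ S, (1 - ζ^(e*(c+4*i))) := by
  simp [PF]

lemma NZ_filter {e d N : ℕ} {ζ : ℂ} (hζ : IsPrimitiveRoot ζ N) (hN : N = e*d) (he : 0 < e)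
    (c : ℕ) (S : Finset ℕ) :
    aeval ζ (PF c e (S.filter (fun i => ¬ d ∣ (c+4*i)))) ≠ 0 := by
  rw [aeval_PF]
  refine Finset.prod_ne_zero_iff.mpr fun i hi => ?_
  simp only [Finset.mem_filter] at hi
  intro h0
  have h1 : ζ^(e*(c+4*i)) = 1 := by linear_combination -h0
  rw [hζ.pow_eq_one_iff_dvd, hN] at h1
  exact hi.2 ((Nat.mul_dvd_mul_iff_left he).mp h1)

lemma NZ3 {e d N M : ℕ} {ζ : ℂ} (hζ : IsPrimitiveRoot ζ N) (hN : N = e*d) (he : 0 < e)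
    (hd : d = 2*M+1) (hd4 : d % 4 = 1) :
    aeval ζ (PF 3 e (Finset.range M)) ≠ 0 := by
  rw [aeval_PF]
  refine Finset.prod_ne_zero_iff.mpr fun i hi => ?_
  simp only [Finset.mem_range] at hi
  intro h0
  have h1 : ζ^(e*(3+4*i)) = 1 := by linear_combination -h0
  rw [hζ.pow_eq_one_iff_dvd, hN] at h1
  obtain ⟨k, hk⟩ := (Nat.mul_dvd_mul_iff_left he).mp h1
  have hk2 : k < 2 := by
    by_contra hcon
    have := Nat.mul_le_mul_left d (by omega : 2 ≤ k)
    omega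
  interval_cases k <;> omega

lemma NZ5_erase {e d N M : ℕ} {ζ : ℂ} (hζ : IsPrimitiveRoot ζ N) (hN : N = e*d) (he : 0 < e)
    (hd : d = 2*M+1) (hd4 : d % 4 = 1) :
    aeval ζ (PF 5 e ((Finset.range M).erase ((d-5)/4))) ≠ 0 := by
  rw [aeval_PF]
  refine Finset.prod_ne_zero_iff.mpr fun i hi => ?_
  simp only [Finset.mem_erase, Finset.mem_range] at hi
  intro h0
  have h1 : ζ^(e*(5+4*i)) = 1 := by linear_combination -h0
  rw [hζ.pow_eq_one_iff_dvd, hN] at h1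
  obtain ⟨k, hk⟩ := (Nat.mul_dvd_mul_iff_left he).mp h1
  have hk2 : k < 2 := by
    by_contra hcon
    have := Nat.mul_le_mul_left d (by omega : 2 ≤ k)
    omega
  have : i ≠ (d-5)/4 := hi.1
  interval_cases k <;> omega

lemma extract5 {e d M : ℕ} (hd : d = 2*M+1) (hd4 : d % 4 = 1) (hd5 : 5 ≤ d) :
    PF 5 e (Finset.range M) = (1 - (X:ℚ[X])^(e*d)) * PF 5 e ((Finset.range M).erase ((d-5)/4)) := by
  unfold PF
  have hi0 : (d-5)/4 ∈ Finset.range M := by simp only [Finset.mem_range]; omega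
  rw [← Finset.mul_prod_erase _ _ hi0]
  have h5 : 5+4*((d-5)/4) = d := by omega
  rw [h5]


lemma PF_split (c e a b : ℕ) (hab : a ≤ b) :
    PF c e (Finset.range b) = PF c e (Finset.range a) * PF c e (Finset.Ico a b) := by
  unfold PF
  rw [Finset.range_eq_Ico, ← Finset.prod_Ico_consecutive _ (Nat.zero_le a) hab, Finset.range_eq_Ico]

lemma odd_div_helper {a b : ℕ} (ha : a % 2 = 1) (hb : b % 2 = 1) :
    (a*b-1)/2 = (a-1)/2 + ((b-1)/2)*a := by
  obtain ⟨x, hx⟩ : ∃ x, a = 2*x+1 := ⟨a/2, by omega⟩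
  obtain ⟨y, hy⟩ : ∃ y, b = 2*y+1 := ⟨b/2, by omega⟩
  have e1 : (a-1)/2 = x := by omega
  have e2 : (b-1)/2 = y := by omega
  have e3 : a*b = 2*(2*(x*y)+x+y)+1 := by rw [hx, hy]; ring
  have e4 : y*a = 2*(x*y)+y := by rw [hx]; ring
  rw [e1, e2, e3, e4]
  omega

lemma poch_eq_s11 {a b : ℕ} (c e : ℕ) (ha : a = c*e) (hb : b = 4*e) (k : ℕ) :
    poch (RatFunc.X ^ a) (RatFunc.X ^ b) k
      = algebraMap ℚ[X] (RatFunc ℚ) (PF c e (Finset.range k)) := by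
  subst ha hb
  unfold poch PF
  rw [map_prod]
  refine Finset.prod_congr rfl fun i _ => ?_
  have h1 : (RatFunc.X (K := ℚ))^(c*e) * ((RatFunc.X)^(4*e))^i = (RatFunc.X)^(e*(c+4*i)) := by
    rw [← pow_mul, ← pow_add]
    congr 1
    ring
  rw [h1, map_sub, map_one, map_pow, RatFunc.algebraMap_X]

lemma num_dvd_of {Φ P Q : ℚ[X]} (hprime : Prime Φ) (hP : Φ ∣ P) (hQ0 : Q ≠ 0) (hQ : ¬ Φ ∣ Q) :
    Φ ∣ (algebraMap ℚ[X] (RatFunc ℚ) P / algebraMap ℚ[X] (RatFunc ℚ) Q).num := by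
  set f := algebraMap ℚ[X] (RatFunc ℚ) P / algebraMap ℚ[X] (RatFunc ℚ) Q with hf
  have hQne : algebraMap ℚ[X] (RatFunc ℚ) Q ≠ 0 := RatFunc.algebraMap_ne_zero hQ0
  have hden : algebraMap ℚ[X] (RatFunc ℚ) f.denom ≠ 0 :=
    RatFunc.algebraMap_ne_zero (RatFunc.denom_ne_zero f)
  have h2 : f * algebraMap ℚ[X] (RatFunc ℚ) Q = algebraMap ℚ[X] (RatFunc ℚ) P :=
    div_mul_cancel₀ _ hQne
  have h3 : algebraMap ℚ[X] (RatFunc ℚ) f.num = f * algebraMap ℚ[X] (RatFunc ℚ) f.denom :=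
    (div_eq_iff hden).mp (RatFunc.num_div_denom f)
  have key : f.num * Q = P * f.denom := by
    apply RatFunc.algebraMap_injective ℚ
    rw [map_mul, map_mul, h3, ← h2]
    ring
  have hdd : Φ ∣ f.num * Q := key ▸ hP.mul_right f.denom
  exact (hprime.2.2 _ _ hdd).resolve_right hQ

lemma field_key {F : Type*} [Field F] (xn x1 a b c d z3 z5 u1 v1 w1 y1 w nn dd : F)
    (hz3 : z3 ≠ 0) (hz5 : z5 ≠ 0)
    (hv1 : v1 ≠ 0) (hy1 : y1 ≠ 0) (hw : w ≠ 0)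
    (hNN : xn * a * c = w * nn) (hDD : x1 * (b * d) = w * dd) :
    xn/x1 * (a * (z3*u1)) * (c * (z5*w1)) / (b * (z5*v1) * (d * (z3*y1)))
      - xn/x1 * a * c / (b * d)
      = nn * (u1*w1 - v1*y1) / (dd * (v1*y1)) := by
  have hz35 : z3*z5 ≠ 0 := mul_ne_zero hz3 hz5
  have hvy : v1*y1 ≠ 0 := mul_ne_zero hv1 hy1
  have t1 : xn/x1 * (a * (z3*u1)) * (c * (z5*w1)) / (b * (z5*v1) * (d * (z3*y1)))
      = (z3*z5) * (xn*a*c*(u1*w1)) / ((z3*z5) * ((x1*(b*d)) * (v1*y1))) := by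
    rw [div_mul_eq_mul_div, div_mul_eq_mul_div, div_div]
    congr 1
    · ring
    · ring
  have t2 : xn/x1 * a * c / (b*d) = (xn*a*c*(v1*y1))/((x1*(b*d))*(v1*y1)) := by
    rw [div_mul_eq_mul_div, div_mul_eq_mul_div, div_div]
    exact (mul_div_mul_right _ _ hvy).symm
  rw [t1, mul_div_mul_left _ _ hz35, t2, div_sub_div_same,
    show xn*a*c*(u1*w1) - xn*a*c*(v1*y1) = (xn*a*c)*(u1*w1 - v1*y1) from by ring,
    hNN, hDD,
    show w*nn*(u1*w1 - v1*y1) = w*(nn*(u1*w1-v1*y1)) from by ring,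
    show (w*dd)*(v1*y1) = w*(dd*(v1*y1)) from by ring,
    mul_div_mul_left _ _ hw]

end Stmt11Aux

/-- for `n ≡ 1 (mod 4)`, `n > 1`, and `r > s ≥ 1`, modulo `Φ_{nˢ}(q)`:
`[n]·(q³;q⁴)_{(nʳ-1)/2}(q⁵ⁿ;q⁴ⁿ)_{(nʳ⁻¹-1)/2}/((q⁵;q⁴)_{(nʳ-1)/2}(q³ⁿ;q⁴ⁿ)_{(nʳ⁻¹-1)/2})
≡ [n]·(q³;q⁴)_{(nˢ-1)/2}(q⁵ⁿ;q⁴ⁿ)_{(nˢ⁻¹-1)/2}/((q⁵;q⁴)_{(nˢ-1)/2}(q³ⁿ;q⁴ⁿ)_{(nˢ⁻¹-1)/2})`. -/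
theorem stmt11 (n r s : ℕ) (hn : 1 < n) (hn4 : n % 4 = 1) (hs : 0 < s) (hrs : s < r) :
    (Polynomial.cyclotomic (n ^ s) ℚ) ∣
      (qint n * poch (RatFunc.X ^ 3) (RatFunc.X ^ 4) ((n ^ r - 1) / 2)
          * poch (RatFunc.X ^ (5 * n)) (RatFunc.X ^ (4 * n)) ((n ^ (r - 1) - 1) / 2)
          / (poch (RatFunc.X ^ 5) (RatFunc.X ^ 4) ((n ^ r - 1) / 2)
            * poch (RatFunc.X ^ (3 * n)) (RatFunc.X ^ (4 * n)) ((n ^ (r - 1) - 1) / 2))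
        - qint n * poch (RatFunc.X ^ 3) (RatFunc.X ^ 4) ((n ^ s - 1) / 2)
          * poch (RatFunc.X ^ (5 * n)) (RatFunc.X ^ (4 * n)) ((n ^ (s - 1) - 1) / 2)
          / (poch (RatFunc.X ^ 5) (RatFunc.X ^ 4) ((n ^ s - 1) / 2)
            * poch (RatFunc.X ^ (3 * n)) (RatFunc.X ^ (4 * n)) ((n ^ (s - 1) - 1) / 2))).num := by
  have hn5 : 5 ≤ n := by omega
  set N := n ^ s with hNdef
  have hNpos : 0 < N := pow_pos (by omega) s
  have hnodd : n % 2 = 1 := by omega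
  have hN4 : N % 4 = 1 := by rw [hNdef, Nat.pow_mod, hn4, one_pow]; norm_num
  have hN5 : 5 ≤ N := le_trans hn5 (Nat.le_self_pow (by omega) n)
  set d2 := n ^ (s-1) with hd2def
  have hd24 : d2 % 4 = 1 := by rw [hd2def, Nat.pow_mod, hn4, one_pow]; norm_num
  have hNd2 : n * d2 = N := by
    rw [hd2def, hNdef, ← pow_succ']
    congr 1
    omega
  set Ms := (N - 1)/2 with hMsdef
  set Mr := (n^r - 1)/2 with hMrdef
  set ms := (d2 - 1)/2 with hmsdef
  set mr := (n^(r-1) - 1)/2 with hmrdef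
  set K := (n^(r-s) - 1)/2 with hKdef
  have hNodd : N % 2 = 1 := by omega
  have hd2odd : d2 % 2 = 1 := by omega
  have hbodd : n^(r-s) % 2 = 1 := by rw [Nat.pow_mod, hnodd, one_pow]; norm_num
  have hMsN : N = 2*Ms+1 := by rw [hMsdef]; omega
  have hmsd2 : d2 = 2*ms+1 := by rw [hmsdef]; omega
  have hMr : Mr = Ms + K*N := by
    have hpow : n^r = N * n^(r-s) := by rw [hNdef, ← pow_add]; congr 1; omega
    rw [hMrdef, hpow, odd_div_helper hNodd hbodd, hMsdef, hKdef]
  have hmr : mr = ms + K*d2 := by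
    have hpow : n^(r-1) = d2 * n^(r-s) := by rw [hd2def, ← pow_add]; congr 1; omega
    rw [hmrdef, hpow, odd_div_helper hd2odd hbodd, hmsdef, hKdef]
  -- the primitive root
  have hζ : IsPrimitiveRoot (Complex.exp (2*Real.pi*Complex.I/N)) N :=
    Complex.isPrimitiveRoot_exp N hNpos.ne'
  set ζ := Complex.exp (2*Real.pi*Complex.I/N) with hζdef
  have hΦ : cyclotomic N ℚ = minpoly ℚ ζ := cyclotomic_eq_minpoly_rat hζ hNpos
  have hprime : Prime (cyclotomic N ℚ) :=
    UniqueFactorizationMonoid.irreducible_iff_prime.mp (cyclotomic.irreducible_rat hNpos)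
  have hdvd_of : ∀ p : ℚ[X], aeval ζ p = 0 → cyclotomic N ℚ ∣ p := fun p hp =>
    hΦ ▸ minpoly.dvd ℚ ζ hp
  have hndvd_of : ∀ p : ℚ[X], aeval ζ p ≠ 0 → ¬ cyclotomic N ℚ ∣ p := by
    intro p hp hdvd
    obtain ⟨q, rfl⟩ := hdvd
    rw [map_mul] at hp
    have h0 : aeval ζ (cyclotomic N ℚ) = 0 := by rw [hΦ]; exact minpoly.aeval ℚ ζ
    rw [h0, zero_mul] at hp
    exact hp rfl
  -- abbreviations for the polynomial pieces
  set P31s := PF 3 1 (Finset.range Ms) with hP31s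
  set P5ns := PF 5 n (Finset.range ms) with hP5ns
  set P51s := PF 5 1 (Finset.range Ms) with hP51s
  set P3ns := PF 3 n (Finset.range ms) with hP3ns
  set Z3 := ∏ u ∈ Finset.range K, (1 - (X : ℚ[X])^(N*(3+4*u))) with hZ3
  set Z5 := ∏ u ∈ Finset.range K, (1 - (X : ℚ[X])^(N*(5+4*u))) with hZ5
  set U1 := PF 3 1 ((Finset.Ico Ms (Ms+K*N)).filter (fun i => ¬ N ∣ (3+4*i))) with hU1
  set V1 := PF 5 1 ((Finset.Ico Ms (Ms+K*N)).filter (fun i => ¬ N ∣ (5+4*i))) with hV1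
  set W1 := PF 5 n ((Finset.Ico ms (ms+K*d2)).filter (fun i => ¬ d2 ∣ (5+4*i))) with hW1
  set Y1 := PF 3 n ((Finset.Ico ms (ms+K*d2)).filter (fun i => ¬ d2 ∣ (3+4*i))) with hY1
  -- numerator factorization at level s
  obtain ⟨NN, hNN⟩ : ∃ NN, (1 - (X:ℚ[X])^n) * P31s * P5ns = (1-X^N)*NN := by
    by_cases hs1 : s = 1
    · have hNn : N = n := by rw [hNdef, hs1, pow_one]
      exact ⟨P31s * P5ns, by rw [hNn]; ring⟩
    · have hd25 : 5 ≤ d2 := le_trans hn5 (Nat.le_self_pow (by omega) n)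
      refine ⟨(1-X^n) * P31s * PF 5 n ((Finset.range ms).erase ((d2-5)/4)), ?_⟩
      rw [hP5ns, extract5 hmsd2 hd24 hd25, hNd2]
      ring
  -- denominator factorization at level s (opaque witness)
  obtain ⟨DD, hDD, hDDaeval⟩ : ∃ DD, (1 - (X:ℚ[X])) * (P51s * P3ns) = (1-X^N) * DD ∧
      aeval ζ DD ≠ 0 := by
    refine ⟨(1-(X:ℚ[X])) * (PF 5 1 ((Finset.range Ms).erase ((N-5)/4)) * P3ns), ?_, ?_⟩
    · have h := extract5 (e := 1) hMsN hN4 hN5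
      rw [one_mul] at h
      rw [hP51s, h]
      ring
    · rw [map_mul, map_mul]
      refine mul_ne_zero ?_ (mul_ne_zero ?_ ?_)
      · simp only [map_sub, map_one, aeval_X]
        intro h0
        have h1 : ζ^1 = 1 := by rw [pow_one]; linear_combination -h0
        rw [hζ.pow_eq_one_iff_dvd] at h1
        exact absurd (Nat.le_of_dvd one_pos h1) (by omega)
      · exact NZ5_erase (e := 1) (M := Ms) hζ (one_mul N).symm one_pos hMsN hN4
      · exact NZ3 (e := n) (M := ms) hζ hNd2.symm (by omega) hmsd2 hd24
  -- key evaluation identities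
  have hUV : aeval ζ U1 = aeval ζ V1 := by
    rw [hU1, hV1, aeval_PF, aeval_PF]
    exact pair_prod (e := 1) ζ hMsN (by rw [one_mul]; exact hζ.pow_eq_one)
  have hWY : aeval ζ W1 = aeval ζ Y1 := by
    rw [hW1, hY1, aeval_PF, aeval_PF]
    exact (pair_prod (e := n) ζ hmsd2 (by rw [hNd2]; exact hζ.pow_eq_one)).symm
  have hV1a : aeval ζ V1 ≠ 0 := by
    rw [hV1]
    exact NZ_filter (e := 1) hζ (one_mul N).symm one_pos 5 _
  have hY1a : aeval ζ Y1 ≠ 0 := by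
    rw [hY1]
    exact NZ_filter (e := n) hζ hNd2.symm (by omega : (0:ℕ) < n) 3 _
  -- divisibility facts
  have hDelta : cyclotomic N ℚ ∣ (U1*W1 - V1*Y1) :=
    hdvd_of _ (by rw [map_sub, map_mul, map_mul, hUV, hWY]; ring)
  have hQa : aeval ζ (DD * (V1*Y1)) ≠ 0 := by
    rw [map_mul, map_mul]
    exact mul_ne_zero hDDaeval (mul_ne_zero hV1a hY1a)
  have hQ0 : DD * (V1*Y1) ≠ 0 := fun h => hQa (by rw [h, map_zero])
  have hQnd : ¬ cyclotomic N ℚ ∣ (DD * (V1*Y1)) := hndvd_of _ hQa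
  have hPd : cyclotomic N ℚ ∣ NN * (U1*W1 - V1*Y1) := hDelta.mul_left NN
  -- nonzero polynomial facts for the field computation
  have algne : ∀ p : ℚ[X], p ≠ 0 → algebraMap ℚ[X] (RatFunc ℚ) p ≠ 0 := fun p hp =>
    RatFunc.algebraMap_ne_zero hp
  have hZ3ne : Z3 ≠ 0 := by
    rw [hZ3]
    exact Finset.prod_ne_zero_iff.mpr fun u _ => one_sub_X_pow_ne_zero_s11 (by positivity)
  have hZ5ne : Z5 ≠ 0 := by
    rw [hZ5]
    exact Finset.prod_ne_zero_iff.mpr fun u _ => one_sub_X_pow_ne_zero_s11 (by positivity)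
  have hV1ne : V1 ≠ 0 := by rw [hV1]; exact PF_ne_zero (by norm_num) one_ne_zero _
  have hY1ne : Y1 ≠ 0 := by rw [hY1]; exact PF_ne_zero (by norm_num) (by omega) _
  have hwne : (1 - (X:ℚ[X])^N) ≠ 0 := one_sub_X_pow_ne_zero_s11 (by omega)
  -- now rewrite the whole expression
  have key : qint n * poch (RatFunc.X ^ 3) (RatFunc.X ^ 4) Mr
          * poch (RatFunc.X ^ (5 * n)) (RatFunc.X ^ (4 * n)) mr
          / (poch (RatFunc.X ^ 5) (RatFunc.X ^ 4) Mr
            * poch (RatFunc.X ^ (3 * n)) (RatFunc.X ^ (4 * n)) mr)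
        - qint n * poch (RatFunc.X ^ 3) (RatFunc.X ^ 4) Ms
          * poch (RatFunc.X ^ (5 * n)) (RatFunc.X ^ (4 * n)) ms
          / (poch (RatFunc.X ^ 5) (RatFunc.X ^ 4) Ms
            * poch (RatFunc.X ^ (3 * n)) (RatFunc.X ^ (4 * n)) ms)
      = algebraMap ℚ[X] (RatFunc ℚ) (NN * (U1*W1 - V1*Y1))
        / algebraMap ℚ[X] (RatFunc ℚ) (DD * (V1*Y1)) := by
    have hxn : (1:RatFunc ℚ) - RatFunc.X^n = algebraMap ℚ[X] (RatFunc ℚ) (1 - X^n) := by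
      rw [map_sub, map_one, map_pow, RatFunc.algebraMap_X]
    have hx1 : (1:RatFunc ℚ) - RatFunc.X = algebraMap ℚ[X] (RatFunc ℚ) (1 - X) := by
      rw [map_sub, map_one, RatFunc.algebraMap_X]
    simp only [qint]
    rw [poch_eq_s11 3 1 (by norm_num) (by norm_num) Mr, poch_eq_s11 5 n rfl rfl mr,
        poch_eq_s11 5 1 (by norm_num) (by norm_num) Mr, poch_eq_s11 3 n rfl rfl mr,
        poch_eq_s11 3 1 (by norm_num) (by norm_num) Ms, poch_eq_s11 5 n rfl rfl ms,
        poch_eq_s11 5 1 (by norm_num) (by norm_num) Ms, poch_eq_s11 3 n rfl rfl ms,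
        hxn, hx1, hMr, hmr,
        PF_split 3 1 Ms (Ms+K*N) (Nat.le_add_right _ _),
        PF_split 5 1 Ms (Ms+K*N) (Nat.le_add_right _ _),
        PF_split 5 n ms (ms+K*d2) (Nat.le_add_right _ _),
        PF_split 3 n ms (ms+K*d2) (Nat.le_add_right _ _),
        split_prod (e := 1) (K := K) hMsN hN4 (Or.inl rfl) (one_mul N).symm,
        split_prod (e := 1) (K := K) hMsN hN4 (Or.inr rfl) (one_mul N).symm,
        split_prod (e := n) (K := K) hmsd2 hd24 (Or.inl rfl) hNd2.symm,
        split_prod (e := n) (K := K) hmsd2 hd24 (Or.inr rfl) hNd2.symm,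
        ← hP31s, ← hP5ns, ← hP51s, ← hP3ns, ← hZ3, ← hZ5, ← hU1, ← hV1, ← hW1, ← hY1]
    simp only [map_mul]
    rw [show algebraMap ℚ[X] (RatFunc ℚ) (U1*W1 - V1*Y1)
          = algebraMap ℚ[X] (RatFunc ℚ) U1 * algebraMap ℚ[X] (RatFunc ℚ) W1
            - algebraMap ℚ[X] (RatFunc ℚ) V1 * algebraMap ℚ[X] (RatFunc ℚ) Y1 from by
        rw [map_sub, map_mul, map_mul]]
    have hNN' : algebraMap ℚ[X] (RatFunc ℚ) (1-X^n) * algebraMap ℚ[X] (RatFunc ℚ) P31s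
        * algebraMap ℚ[X] (RatFunc ℚ) P5ns
        = algebraMap ℚ[X] (RatFunc ℚ) (1-X^N) * algebraMap ℚ[X] (RatFunc ℚ) NN := by
      rw [← map_mul, ← map_mul, hNN, map_mul]
    have hDD' : algebraMap ℚ[X] (RatFunc ℚ) (1-X) * (algebraMap ℚ[X] (RatFunc ℚ) P51s
        * algebraMap ℚ[X] (RatFunc ℚ) P3ns)
        = algebraMap ℚ[X] (RatFunc ℚ) (1-X^N) * algebraMap ℚ[X] (RatFunc ℚ) DD := by
      rw [← map_mul, ← map_mul, hDD, map_mul]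
    exact field_key (algebraMap ℚ[X] (RatFunc ℚ) (1-X^n)) (algebraMap ℚ[X] (RatFunc ℚ) (1-X))
      (algebraMap ℚ[X] (RatFunc ℚ) P31s) (algebraMap ℚ[X] (RatFunc ℚ) P51s)
      (algebraMap ℚ[X] (RatFunc ℚ) P5ns) (algebraMap ℚ[X] (RatFunc ℚ) P3ns)
      (algebraMap ℚ[X] (RatFunc ℚ) Z3) (algebraMap ℚ[X] (RatFunc ℚ) Z5)
      (algebraMap ℚ[X] (RatFunc ℚ) U1) (algebraMap ℚ[X] (RatFunc ℚ) V1)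
      (algebraMap ℚ[X] (RatFunc ℚ) W1) (algebraMap ℚ[X] (RatFunc ℚ) Y1)
      (algebraMap ℚ[X] (RatFunc ℚ) (1-X^N)) (algebraMap ℚ[X] (RatFunc ℚ) NN)
      (algebraMap ℚ[X] (RatFunc ℚ) DD)
      (algne _ hZ3ne) (algne _ hZ5ne) (algne _ hV1ne) (algne _ hY1ne) (algne _ hwne)
      hNN' hDD'
  rw [key]
  exact num_dvd_of hprime hPd hQ0 hQnd
end
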